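/- arXiv:1601.01099 — 8 statements merged into one kernel-verified Lean document; each statement's English description precedes it below -/
import Mathlib

section
/- Let F(x) = ∏_{i=0}^{m+n} (x - q^i). Then for each s with 0 ≤ s ≤ m+n, the derivative satisfies F'(q^s) = (q;q)_s (q;q)_{m+n} / ( q^s · (q^{-(m+n)};q)_s ). -/
open scoped BigOperators

/-- The finite q-Pochhammer symbol `(z;q)_s = ∏_{k=0}^{s-1} (1 - q^k z)`. -/
noncomputable def qPoch (q z : ℂ) (s : ℕ) : ℂ := ∏ k ∈ Finset.range s, (1 - q ^ k * z)

open Finset Polynomial in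
private lemma deriv_step' (q : ℂ) (N s : ℕ) (hs : s ≤ N) :
    deriv (fun x : ℂ => ∏ i ∈ range (N + 1), (x - q ^ i)) (q ^ s) =
      ∏ i ∈ (range (N + 1)).erase s, (q ^ s - q ^ i) := by
  have hfun : (fun x : ℂ => ∏ i ∈ range (N + 1), (x - q ^ i)) =
      fun x => eval x (∏ i ∈ range (N + 1), (X - C (q ^ i))) := by
    funext x; simp [eval_prod]
  rw [hfun, Polynomial.deriv]
  have hder : derivative (∏ i ∈ range (N + 1), (X - C (q ^ i))) =
      ∑ i ∈ range (N + 1), (∏ j ∈ (range (N + 1)).erase i, (X - C (q ^ j))) *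
        derivative (X - C (q ^ i)) := by
    rw [Finset.prod_eq_multiset_prod, derivative_prod, Finset.sum_eq_multiset_sum]
    refine congr_arg Multiset.sum (Multiset.map_congr rfl fun i hi => ?_)
    rw [Finset.prod_eq_multiset_prod, Finset.erase_val]
  rw [hder]
  simp only [derivative_sub, derivative_X, derivative_C, sub_zero, mul_one,
    eval_finset_sum, eval_prod, eval_sub, eval_X, eval_C]
  rw [Finset.sum_eq_single s]
  · intro b hb hne
    exact Finset.prod_eq_zero
      (Finset.mem_erase.mpr ⟨hne.symm, Finset.mem_range.mpr (by omega)⟩) (sub_self _)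
  · intro h
    exact absurd (Finset.mem_range.mpr (by omega)) h

open Finset in
private lemma prod_step' (q : ℂ) (hq0 : q ≠ 0)
    (N s : ℕ) (hs : s ≤ N) :
    (∏ i ∈ (range (N + 1)).erase s, (q ^ s - q ^ i)) * (q ^ s * qPoch q (q ^ (-(N : ℤ))) s) =
      qPoch q q s * qPoch q q N := by
  have hsplit : (range (N + 1)).erase s = range s ∪ Ico (s + 1) (N + 1) := by
    ext i
    simp only [mem_erase, mem_range, mem_union, mem_Ico]
    omega
  have hdisj : Disjoint (range s) (Ico (s + 1) (N + 1)) := by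
    simp only [Finset.disjoint_left, mem_range, mem_Ico]
    omega
  rw [hsplit, Finset.prod_union hdisj]
  -- A1 : product over range s
  have hA1 : ∏ i ∈ range s, (q ^ s - q ^ i) =
      (∏ i ∈ range s, -(q ^ (s - 1 - i))) * qPoch q q s := by
    rw [← Finset.prod_range_reflect (fun i => q ^ s - q ^ i) s, qPoch,
      ← Finset.prod_mul_distrib]
    refine Finset.prod_congr rfl fun i hi => ?_
    rw [mem_range] at hi
    have h1 : (q : ℂ) ^ (s - 1 - i) * (q ^ i * q) = q ^ s := by
      rw [← pow_succ, ← pow_add]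
      congr 1
      omega
    linear_combination -h1
  -- A2 : product over Ico
  have hA2 : ∏ i ∈ Ico (s + 1) (N + 1), (q ^ s - q ^ i) =
      (q ^ s) ^ (N - s) * qPoch q q (N - s) := by
    rw [Finset.prod_Ico_eq_prod_range]
    have hcard : N + 1 - (s + 1) = N - s := by omega
    rw [hcard]
    calc ∏ i ∈ range (N - s), (q ^ s - q ^ (s + 1 + i))
        = ∏ i ∈ range (N - s), (q ^ s * (1 - q ^ i * q)) := by
          refine Finset.prod_congr rfl fun i hi => ?_
          have h1 : (q : ℂ) ^ s * (q ^ i * q) = q ^ (s + 1 + i) := by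
            rw [← pow_succ, ← pow_add]
            congr 1
            omega
          linear_combination -h1
      _ = (q ^ s) ^ (N - s) * qPoch q q (N - s) := by
          rw [Finset.prod_mul_distrib, Finset.prod_const, Finset.card_range, qPoch]
  -- D : the denominator q-Pochhammer
  have hD : qPoch q (q ^ (-(N : ℤ))) s =
      (∏ k ∈ range s, -(q ^ ((k : ℤ) - N))) * ∏ k ∈ range s, (1 - q ^ (N - k)) := by
    rw [qPoch, ← Finset.prod_mul_distrib]
    refine Finset.prod_congr rfl fun k hk => ?_
    rw [mem_range] at hk
    have h1 : (q : ℂ) ^ ((k : ℤ) - N) * q ^ (N - k) = 1 := by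
      rw [← zpow_natCast q (N - k), ← zpow_add₀ hq0]
      have h : (k : ℤ) - N + ((N - k : ℕ) : ℤ) = 0 := by omega
      rw [h, zpow_zero]
    have h2 : (q : ℂ) ^ k * q ^ (-(N : ℤ)) = q ^ ((k : ℤ) - N) := by
      rw [← zpow_natCast q k, ← zpow_add₀ hq0, sub_eq_add_neg]
    linear_combination -h1 - h2
  -- QN : split (q;q)_N
  have hQN : qPoch q q N = qPoch q q (N - s) * ∏ k ∈ range s, (1 - q ^ (N - k)) := by
    rw [qPoch, qPoch, ← Finset.prod_range_mul_prod_Ico _ (show N - s ≤ N by omega)]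
    congr 1
    rw [Finset.prod_Ico_eq_prod_range,
      ← Finset.prod_range_reflect (fun k => 1 - q ^ (N - k)) s]
    have hcard : N - (N - s) = s := by omega
    rw [hcard]
    refine Finset.prod_congr rfl fun k hk => ?_
    rw [mem_range] at hk
    rw [← pow_succ]
    congr 2
    omega
  rw [hA1, hA2, hD, hQN]
  -- collect constants
  have hC : (∏ i ∈ range s, -(q ^ (s - 1 - i))) * ((q ^ s) ^ (N - s)) * (q ^ s *
      (∏ k ∈ range s, -(q ^ ((k : ℤ) - N)))) = 1 := by
    have hprod : (∏ i ∈ range s, -(q ^ (s - 1 - i))) * (∏ k ∈ range s, -(q ^ ((k : ℤ) - N)))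
        = q ^ (((s : ℤ) - 1 - N) * s) := by
      rw [← Finset.prod_mul_distrib]
      have h : ∀ k ∈ range s, (-(q ^ (s - 1 - k))) * (-(q ^ ((k : ℤ) - N)))
          = q ^ ((s : ℤ) - 1 - N) := by
        intro k hk
        rw [mem_range] at hk
        rw [neg_mul_neg, ← zpow_natCast q (s - 1 - k), ← zpow_add₀ hq0]
        congr 1
        omega
      rw [Finset.prod_congr rfl h, Finset.prod_const, Finset.card_range,
        ← zpow_natCast (q ^ ((s : ℤ) - 1 - N)) s, ← zpow_mul]
    have hp2 : ((q : ℂ) ^ s) ^ (N - s) = q ^ ((s * (N - s) : ℕ) : ℤ) := by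
      rw [← pow_mul, zpow_natCast]
    have hp3 : (q : ℂ) ^ s = q ^ ((s : ℕ) : ℤ) := by rw [zpow_natCast]
    calc (∏ i ∈ range s, -(q ^ (s - 1 - i))) * ((q ^ s) ^ (N - s)) * (q ^ s *
        (∏ k ∈ range s, -(q ^ ((k : ℤ) - N))))
        = ((∏ i ∈ range s, -(q ^ (s - 1 - i))) * (∏ k ∈ range s, -(q ^ ((k : ℤ) - N)))) *
          (((q ^ s) ^ (N - s)) * q ^ s) := by ring
      _ = q ^ (((s : ℤ) - 1 - N) * s) * (q ^ ((s * (N - s) : ℕ) : ℤ) * q ^ ((s : ℕ) : ℤ)) := by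
          rw [hprod, hp2, hp3]
      _ = q ^ (((s : ℤ) - 1 - N) * s + ((s * (N - s) : ℕ) : ℤ) + ((s : ℕ) : ℤ)) := by
          rw [zpow_add₀ hq0, zpow_add₀ hq0, mul_assoc]
      _ = 1 := by
          have h : ((s : ℤ) - 1 - N) * s + ((s * (N - s) : ℕ) : ℤ) + ((s : ℕ) : ℤ) = 0 := by
            push_cast [Nat.cast_sub hs]
            ring
          rw [h, zpow_zero]
  linear_combination (qPoch q q s * qPoch q q (N - s) *
    (∏ k ∈ range s, (1 - q ^ (N - k)))) * hC

/-- For `F(x) = ∏_{i=0}^{m+n} (x - q^i)` one has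
`F'(q^s) = (q;q)_s (q;q)_{m+n} / (q^s (q^{-(m+n)};q)_s)`. -/
theorem stmt3 (q : ℂ) (hq0 : q ≠ 0) (hq1 : ∀ k : ℕ, 0 < k → q ^ k ≠ 1)
    (m n s : ℕ) (hs : s ≤ m + n) :
    deriv (fun x : ℂ => ∏ i ∈ Finset.range (m + n + 1), (x - q ^ i)) (q ^ s) =
      qPoch q q s * qPoch q q (m + n) /
        (q ^ s * qPoch q (q ^ (-((m + n : ℕ) : ℤ))) s) := by
  set N := m + n with hN
  have hDne : qPoch q (q ^ (-(N : ℤ))) s ≠ 0 := by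
    rw [qPoch]
    refine Finset.prod_ne_zero_iff.mpr fun k hk h0 => ?_
    rw [Finset.mem_range] at hk
    have h2 : (q : ℂ) ^ k * q ^ (-(N : ℤ)) = q ^ ((k : ℤ) - N) := by
      rw [← zpow_natCast q k, ← zpow_add₀ hq0, sub_eq_add_neg]
    have h3 : (q : ℂ) ^ ((k : ℤ) - N) = 1 := by
      rw [← h2]; linear_combination -h0
    have h4 : (q : ℂ) ^ ((N - k : ℕ)) = 1 := by
      rw [← zpow_natCast q (N - k)]
      have h5 : ((N - k : ℕ) : ℤ) = -((k : ℤ) - N) := by omega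
      rw [h5, zpow_neg, h3, inv_one]
    exact hq1 (N - k) (by omega) h4
  have hden : (q : ℂ) ^ s * qPoch q (q ^ (-(N : ℤ))) s ≠ 0 :=
    mul_ne_zero (pow_ne_zero _ hq0) hDne
  rw [eq_div_iff hden, deriv_step' q N s hs]
  exact prod_step' q hq0 N s hs
end

section
/- Jacobi's interpolation formula: given distinct points x_0, ..., x_{m+n} and values ψ_0, ..., ψ_{m+n} (all nonzero), define u_s = ψ_s / F'(x_s) where F(x) = ∏_{i=0}^{m+n}(x - x_i). Then the polynomials P(x) = F(x) · det[ ∑_{s=0}^{m+n} u_s x_s^{i+j} / (x - x_s) ]_{i,j=0}^{n} and Q(x) = det[ ∑_{s=0}^{m+n} u_s x_s^{i+j} (x - x_s) ]_{i,j=0}^{n-1} have degrees at most m and n respectively, and (assuming Q(x_s) ≠ 0 for all s) satisfy ψ_s = P(x_s)/Q(x_s) for s = 0, 1, ..., m+n. -/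
open scoped BigOperators

open Matrix Finset in
theorem det_add_rankOne {R : Type*} [CommRing R] {k : ℕ}
    (M : Matrix (Fin k) (Fin k) R) (c w : Fin k → R) :
    (M + Matrix.of fun i j => c i * w j).det
      = M.det + ∑ i, c i * (M.updateRow i w).det := by
  classical
  set f : (Fin k → R) [⋀^Fin k]→ₗ[R] R := Matrix.detRowAlternating with hf
  have hrows : (M + Matrix.of fun i j => c i * w j)
      = (fun i => c i • w) + (fun i => M i) := by
    ext i j
    simp [Matrix.add_apply, smul_eq_mul, add_comm]
  have key : f ((fun i => c i • w) + (fun i => M i))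
      = ∑ s : Finset (Fin k), f (s.piecewise (fun i => c i • w) (fun i => M i)) :=
    f.toMultilinearMap.map_add_univ _ _
  have hzero : ∀ s : Finset (Fin k), ¬ s.card ≤ 1 →
      f (s.piecewise (fun i => c i • w) (fun i => M i)) = 0 := by
    intro s hs
    obtain ⟨i, hi, j, hj, hij⟩ := Finset.one_lt_card.mp (not_le.mp hs)
    set g : Fin k → (Fin k → R) := s.piecewise (fun _ => w) (fun i => M i) with hg
    have hp : s.piecewise (fun i => c i • w) (fun i => M i)
        = s.piecewise (fun i => c i • g i) g := by
      funext a
      by_cases ha : a ∈ s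
      · simp [Finset.piecewise_eq_of_mem _ _ _ ha, hg]
      · simp [hg, Finset.piecewise_eq_of_notMem _ _ _ ha]
    have hwz : f g = 0 := by
      apply f.map_eq_zero_of_eq _ _ hij
      simp [hg, Finset.piecewise_eq_of_mem _ _ _ hi, Finset.piecewise_eq_of_mem _ _ _ hj]
    calc f (s.piecewise (fun i => c i • w) (fun i => M i))
        = f (s.piecewise (fun i => c i • g i) g) := by rw [hp]
      _ = (∏ i ∈ s, c i) • f g := f.toMultilinearMap.map_piecewise_smul c g s
      _ = 0 := by rw [hwz, smul_zero]
  have hsplit : ∑ s : Finset (Fin k), f (s.piecewise (fun i => c i • w) (fun i => M i))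
      = ∑ s ∈ (Finset.univ.filter (fun s : Finset (Fin k) => s.card ≤ 1)),
          f (s.piecewise (fun i => c i • w) (fun i => M i)) := by
    rw [Finset.sum_filter_of_ne]
    intro s _ hne
    by_contra hcard
    exact hne (hzero s hcard)
  have hset : (Finset.univ.filter (fun s : Finset (Fin k) => s.card ≤ 1))
      = insert ∅ (Finset.univ.image (fun i : Fin k => ({i} : Finset (Fin k)))) := by
    ext s
    simp only [Finset.mem_filter, Finset.mem_univ, true_and, Finset.mem_insert,
      Finset.mem_image]
    constructor
    · intro h
      rcases s.eq_empty_or_nonempty with rfl | ⟨i, hi⟩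
      · exact Or.inl rfl
      · refine Or.inr ⟨i, ?_⟩
        simp [(Finset.eq_singleton_iff_unique_mem.mpr
            ⟨hi, fun b hb => Finset.card_le_one.mp h b hb i hi⟩).symm]
    · rintro (rfl | ⟨i, hh⟩)
      · simp
      · rw [← hh]; simp
  have hmain : (M + Matrix.of fun i j => c i * w j).det
      = f ((fun i => c i • w) + (fun i => M i)) := by rw [← hrows]; rfl
  rw [hmain, key, hsplit, hset, Finset.sum_insert (by simp),
    Finset.sum_image (fun a _ b _ h => by simpa using (Finset.singleton_injective h))]
  have h0 : f (Finset.piecewise ∅ (fun i => c i • w) (fun i => M i)) = M.det := by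
    rw [Finset.piecewise_empty]; rfl
  have h1 : ∀ i : Fin k, f (Finset.piecewise {i} (fun i => c i • w) (fun i => M i))
      = c i * (M.updateRow i w).det := by
    intro i
    rw [Finset.piecewise_singleton]
    have : f (Function.update (fun i => M i) i (c i • w))
        = (Matrix.updateRow M i (c i • w)).det := rfl
    rw [this, Matrix.det_updateRow_smul]
  rw [h0]
  exact congrArg _ (Finset.sum_congr rfl fun i _ => h1 i)


theorem degree_det_le_card_mul {R : Type*} [CommRing R] {k d : ℕ}
    (M : Matrix (Fin k) (Fin k) (Polynomial R)) (h : ∀ i j, (M i j).degree ≤ (d : ℕ)) :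
    M.det.degree ≤ ((k * d : ℕ) : WithBot ℕ) := by
  rw [Matrix.det_apply']
  refine le_trans (Polynomial.degree_sum_le _ _) ?_
  rw [Finset.sup_le_iff]
  intro σ _
  refine le_trans (Polynomial.degree_mul_le _ _) ?_
  have h1 : (Polynomial.degree ((Equiv.Perm.sign σ : ℤ) : Polynomial R)) ≤ 0 :=
    Polynomial.degree_intCast_le _
  have h2 : (∏ i, M (σ i) i).degree ≤ ((k * d : ℕ) : WithBot ℕ) := by
    refine le_trans (Polynomial.degree_prod_le _ _) ?_
    refine le_trans (Finset.sum_le_sum fun i _ => h (σ i) i) ?_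
    simp [Finset.sum_const, nsmul_eq_mul]
  calc Polynomial.degree _ + Polynomial.degree _ ≤ 0 + ((k * d : ℕ) : WithBot ℕ) :=
        add_le_add h1 h2
    _ = ((k * d : ℕ) : WithBot ℕ) := by rw [zero_add]

theorem det_smul_updateRow {R : Type*} [CommRing R] [IsDomain R] {k : ℕ}
    (c : R) (hc : c ≠ 0) (B : Matrix (Fin (k + 1)) (Fin (k + 1)) R) (i : Fin (k + 1))
    (w : Fin (k + 1) → R) :
    ((c • B).updateRow i w).det = c ^ k * (B.updateRow i w).det := by
  have h1 : (c • (B.updateRow i w)) = (c • B).updateRow i (c • w) := by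
    ext a b
    by_cases hai : a = i
    · subst hai; simp [Matrix.updateRow_apply]
    · simp [Matrix.updateRow_apply, hai]
  have h2 : ((c • B).updateRow i (c • w)).det = c ^ (k + 1) * (B.updateRow i w).det := by
    rw [← h1, Matrix.det_smul]
    simp
  rw [Matrix.det_updateRow_smul] at h2
  have h3 : c * ((c • B).updateRow i w).det = c * (c ^ k * (B.updateRow i w).det) := by
    rw [h2, pow_succ]; ring
  exact mul_left_cancel₀ hc h3

open Matrix Finset in
/-- The key moment-matrix identity. -/
theorem moment_identity {n : ℕ} {ι : Type*} [Fintype ι] [DecidableEq ι]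
    (a : ℂ) (γ : ι → ℂ) (y : ι → ℂ) :
    ∑ i : Fin (n + 1), a ^ (i : ℕ) *
      ((Matrix.of fun k l : Fin (n + 1) => ∑ s, γ s * y s ^ ((k : ℕ) + (l : ℕ))).updateRow i
        (fun j => a ^ (j : ℕ))).det
    = (Matrix.of fun i j : Fin n =>
        ∑ s, (γ s * (a - y s) ^ 2) * y s ^ ((i : ℕ) + (j : ℕ))).det := by
  classical
  set B : Matrix (Fin (n + 1)) (Fin (n + 1)) ℂ :=
    Matrix.of fun k l : Fin (n + 1) => ∑ s, γ s * y s ^ ((k : ℕ) + (l : ℕ)) with hB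
  set w : Fin (n + 1) → ℂ := fun j => a ^ (j : ℕ) with hw
  set E : Matrix (Fin (n + 1)) (Fin (n + 1)) ℂ :=
    Matrix.of fun i j => (if j = i then (1 : ℂ) else 0) +
      (if (i : ℕ) = (j : ℕ) + 1 then -a else 0) with hE
  -- E is lower triangular with unit diagonal
  have hEdet : E.det = 1 := by
    have htri : E.BlockTriangular OrderDual.toDual := by
      intro i j hij
      have : (i : ℕ) < (j : ℕ) := hij
      simp only [hE, Matrix.of_apply]
      rw [if_neg (by intro h; rw [h] at this; omega), if_neg (by omega)]
      ring
    rw [Matrix.det_of_lowerTriangular E htri]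
    have : ∀ i : Fin (n + 1), E i i = 1 := by
      intro i
      simp [hE]
    simp [this]
  -- row sums of E against power vectors
  have hEsum0 : ∀ z : ℂ, (∑ k, E 0 k * z ^ (k : ℕ)) = 1 := by
    intro z
    rw [Finset.sum_eq_single (0 : Fin (n + 1))]
    · simp [hE]
    · intro b _ hb
      simp only [hE, Matrix.of_apply]
      rw [if_neg hb, if_neg (by simp)]
      ring
    · simp
  have hEsum : ∀ (i : Fin n) (z : ℂ), (∑ k, E i.succ k * z ^ (k : ℕ))
      = z ^ ((i : ℕ) + 1) - a * z ^ (i : ℕ) := by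
    intro i z
    have hterm : ∀ k : Fin (n + 1), E i.succ k * z ^ (k : ℕ)
        = (if k = i.succ then z ^ ((i : ℕ) + 1) else 0)
          + (if k = i.castSucc then -(a * z ^ (i : ℕ)) else 0) := by
      intro k
      simp only [hE, Matrix.of_apply]
      by_cases h1 : k = i.succ
      · subst h1
        rw [if_pos rfl, if_pos rfl, if_neg (by simp [Fin.ext_iff] <;> omega),
          if_neg (by simp [Fin.ext_iff] <;> omega)]
        simp [Fin.val_succ]
      · rw [if_neg h1, if_neg h1]
        by_cases h2 : k = i.castSucc
        · subst h2
          rw [if_pos (by simp [Fin.val_succ]), if_pos rfl]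
          simp [Fin.coe_castSucc] <;> ring
        · rw [if_neg ?_, if_neg h2]
          · ring
          · intro hc
            apply h2
            have : (k : ℕ) = (i : ℕ) := by simp [Fin.val_succ] at hc; omega
            exact Fin.ext (by simp [Fin.coe_castSucc, this])
    rw [Finset.sum_congr rfl fun k _ => hterm k, Finset.sum_add_distrib,
      Finset.sum_ite_eq' Finset.univ i.succ, Finset.sum_ite_eq' Finset.univ i.castSucc]
    simp
    ring
  have hEw : ∀ i : Fin (n + 1), (∑ k, E i k * w k) = if i = 0 then 1 else 0 := by
    intro i
    induction i using Fin.cases with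
    | zero => rw [if_pos rfl]; exact hEsum0 a
    | succ i =>
      rw [if_neg (Fin.succ_ne_zero i)]
      rw [hEsum i a]
      ring
  have hws : ∀ i : Fin (n + 1), w i = a ^ (i : ℕ) := fun _ => rfl
  -- entries of E * B * Eᵀ
  have hEBE : ∀ i j : Fin (n + 1), (E * B * Eᵀ) i j
      = ∑ s, γ s * (∑ k : Fin (n + 1), E i k * y s ^ (k : ℕ))
          * (∑ l : Fin (n + 1), E j l * y s ^ (l : ℕ)) := by
    intro i j
    have h1 : (E * B * Eᵀ) i j
        = ∑ l : Fin (n + 1), (∑ k : Fin (n + 1), E i k * B k l) * E j l := by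
      simp [Matrix.mul_apply, Matrix.transpose_apply]
    rw [h1]
    have h2 : ∀ l : Fin (n + 1), (∑ k : Fin (n + 1), E i k * B k l) * E j l
        = ∑ k : Fin (n + 1), ∑ s : ι, E i k * (γ s * y s ^ (k : ℕ) * y s ^ (l : ℕ)) * E j l := by
      intro l
      rw [Finset.sum_mul]
      refine Finset.sum_congr rfl fun k _ => ?_
      have hBkl : B k l = ∑ s, γ s * y s ^ (k : ℕ) * y s ^ (l : ℕ) := by
        simp only [hB, Matrix.of_apply]
        exact Finset.sum_congr rfl fun s _ => by rw [pow_add, mul_assoc]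
      rw [hBkl, Finset.mul_sum, Finset.sum_mul]
    rw [Finset.sum_congr rfl fun l _ => h2 l]
    have h3 : ∀ s : ι, γ s * (∑ k : Fin (n + 1), E i k * y s ^ (k : ℕ))
          * (∑ l : Fin (n + 1), E j l * y s ^ (l : ℕ))
        = ∑ k : Fin (n + 1), ∑ l : Fin (n + 1),
            E i k * (γ s * y s ^ (k : ℕ) * y s ^ (l : ℕ)) * E j l := by
      intro s
      simp only [Finset.mul_sum, Finset.sum_mul]
      rw [Finset.sum_comm]
      refine Finset.sum_congr rfl fun k _ => Finset.sum_congr rfl fun l _ => by ring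
    rw [Finset.sum_congr rfl fun s _ => h3 s]
    rw [Finset.sum_congr rfl fun l _ => Finset.sum_comm, Finset.sum_comm]
    exact Finset.sum_congr rfl fun s _ => Finset.sum_comm
  set e0 : Fin (n + 1) → ℂ := fun i => if i = 0 then (1 : ℂ) else 0 with he0
  set W : Matrix (Fin (n + 1)) (Fin (n + 1)) ℂ := Matrix.of fun i j => w i * w j with hW
  have hEWE : E * W * Eᵀ = Matrix.of fun i j => e0 i * e0 j := by
    ext i j
    have h1 : (E * W * Eᵀ) i j
        = ∑ l : Fin (n + 1), (∑ k : Fin (n + 1), E i k * (w k * w l)) * E j l := by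
      simp [Matrix.mul_apply, Matrix.transpose_apply, hW]
    rw [h1]
    have h2 : ∀ l : Fin (n + 1), (∑ k : Fin (n + 1), E i k * (w k * w l)) * E j l
        = (∑ k : Fin (n + 1), E i k * w k) * (w l * E j l) := by
      intro l
      rw [Finset.sum_mul, Finset.sum_mul]
      refine Finset.sum_congr rfl fun k _ => by ring
    have h3 : (∑ l : Fin (n + 1), w l * E j l) = if j = 0 then (1 : ℂ) else 0 := by
      rw [← hEw j]
      exact Finset.sum_congr rfl fun l _ => by ring
    rw [Finset.sum_congr rfl fun l _ => h2 l, ← Finset.mul_sum, hEw i, h3]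
    simp [he0]
  -- step 1 : rank one expansion of `det (B + w ⊗ w)`
  have hstep1 : (B + Matrix.of fun i j => w i * w j).det
      = B.det + ∑ i : Fin (n + 1), a ^ (i : ℕ) * (B.updateRow i w).det := by
    rw [det_add_rankOne B w w]
  -- step 2 : congruence by E
  have hdetEB : (E * (B + W) * Eᵀ).det = (B + W).det := by
    rw [Matrix.det_mul, Matrix.det_mul, Matrix.det_transpose, hEdet]
    ring
  have hsplitM : E * (B + W) * Eᵀ
      = (E * B * Eᵀ) + Matrix.of fun i j => e0 i * e0 j := by
    rw [Matrix.mul_add, Matrix.add_mul, hEWE]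
  have hdetEBE : (E * B * Eᵀ).det = B.det := by
    rw [Matrix.det_mul, Matrix.det_mul, Matrix.det_transpose, hEdet]
    ring
  have hdet2 : ((E * B * Eᵀ) + Matrix.of fun i j => e0 i * e0 j).det
      = (E * B * Eᵀ).det + ((E * B * Eᵀ).updateRow 0 e0).det := by
    rw [det_add_rankOne (E * B * Eᵀ) e0 e0]
    congr 1
    rw [Finset.sum_eq_single (0 : Fin (n + 1))]
    · simp [he0]
    · intro b _ hb
      simp [he0, hb]
    · simp
  -- step 3 : the minor
  have hminor : ((E * B * Eᵀ).updateRow 0 e0).det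
      = (Matrix.of fun i j : Fin n =>
          ∑ s, (γ s * (a - y s) ^ 2) * y s ^ ((i : ℕ) + (j : ℕ))).det := by
    rw [Matrix.det_succ_row_zero]
    rw [Finset.sum_eq_single (0 : Fin (n + 1))]
    · have hentry : ((E * B * Eᵀ).updateRow 0 e0) 0 (0 : Fin (n + 1)) = 1 := by
        rw [Matrix.updateRow_self]
        simp [he0]
      rw [hentry]
      have hsub : (((E * B * Eᵀ).updateRow 0 e0).submatrix Fin.succ
            (Fin.succAbove 0))
          = Matrix.of (fun i j : Fin n =>
              ∑ s, (γ s * (a - y s) ^ 2) * y s ^ ((i : ℕ) + (j : ℕ))) := by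
        ext i j
        have h1 : (((E * B * Eᵀ).updateRow 0 e0).submatrix Fin.succ (Fin.succAbove 0)) i j
            = (E * B * Eᵀ) i.succ j.succ := by
          simp [Matrix.submatrix_apply, Fin.zero_succAbove,
            Matrix.updateRow_ne (Fin.succ_ne_zero i)]
        rw [h1, hEBE i.succ j.succ]
        simp only [Matrix.of_apply]
        refine Finset.sum_congr rfl fun s _ => ?_
        rw [hEsum i (y s), hEsum j (y s)]
        rw [pow_add, pow_succ, pow_succ]
        ring
      rw [hsub]
      simp
    · intro b _ hb
      have : ((E * B * Eᵀ).updateRow 0 e0) 0 b = 0 := by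
        rw [Matrix.updateRow_self]
        simp [he0, hb]
      rw [this]
      ring
    · simp
  -- assemble
  have hfinal : B.det + ∑ i : Fin (n + 1), a ^ (i : ℕ) * (B.updateRow i w).det
      = B.det + (Matrix.of fun i j : Fin n =>
          ∑ s, (γ s * (a - y s) ^ 2) * y s ^ ((i : ℕ) + (j : ℕ))).det := by
    rw [← hstep1, ← hdetEB, hsplitM, hdet2, hdetEBE, hminor]
  exact add_left_cancel hfinal

theorem eval_det' {k : ℕ} (M : Matrix (Fin k) (Fin k) (Polynomial ℂ)) (t : ℂ) :
    Polynomial.eval t M.det = (M.map (Polynomial.eval t)).det := by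
  have h := RingHom.map_det (Polynomial.evalRingHom t) M
  simpa [RingHom.mapMatrix_apply, Polynomial.coe_evalRingHom] using h

open Polynomial Finset in
/-- Jacobi's interpolation formula: the determinantal expressions
`P(x) = F(x)·det[∑_s u_s x_s^{i+j}/(x-x_s)]` and
`Q(x) = det[∑_s u_s x_s^{i+j}(x-x_s)]` with `u_s = ψ_s/F'(x_s)`
are polynomials of degrees at most `m`, `n` solving the interpolation
problem `ψ_s = P(x_s)/Q(x_s)`. -/
theorem stmt4 (m n : ℕ) (x : Fin (m + n + 1) → ℂ) (hx : Function.Injective x)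
    (ψ : Fin (m + n + 1) → ℂ) (hψ : ∀ s, ψ s ≠ 0) :
    let u : Fin (m + n + 1) → ℂ :=
      fun s => ψ s / ∏ i ∈ Finset.univ.erase s, (x s - x i)
    let Pe : ℂ → ℂ := fun t =>
      (∏ s, (t - x s)) *
        Matrix.det (Matrix.of fun i j : Fin (n + 1) =>
          ∑ s, u s * (x s) ^ ((i : ℕ) + (j : ℕ)) / (t - x s))
    let Qe : ℂ → ℂ := fun t =>
      Matrix.det (Matrix.of fun i j : Fin n =>
        ∑ s, u s * (x s) ^ ((i : ℕ) + (j : ℕ)) * (t - x s))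
    ∃ p qp : Polynomial ℂ, p.degree ≤ m ∧ qp.degree ≤ n ∧
      (∀ t : ℂ, (∀ s, t ≠ x s) → p.eval t = Pe t) ∧
      (∀ t : ℂ, qp.eval t = Qe t) ∧
      ((∀ s, Qe (x s) ≠ 0) → ∀ s, ψ s = p.eval (x s) / Qe (x s)) := by
  classical
  intro u Pe Qe
  -- basic nonvanishing facts
  have hxne : ∀ {s i : Fin (m + n + 1)}, i ≠ s → x s - x i ≠ 0 := by
    intro s i hi
    exact sub_ne_zero.mpr fun h => hi (hx h.symm)
  have hF'ne : ∀ s, (∏ i ∈ Finset.univ.erase s, (x s - x i)) ≠ 0 := by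
    intro s
    exact Finset.prod_ne_zero_iff.mpr fun i hi => hxne (Finset.mem_erase.mp hi).1
  have hu : ∀ s, u s * (∏ i ∈ Finset.univ.erase s, (x s - x i)) = ψ s :=
    fun s => div_mul_cancel₀ _ (hF'ne s)
  set F : Polynomial ℂ := ∏ s, (X - C (x s)) with hF
  set G : Fin (m + n + 1) → Polynomial ℂ :=
    fun s => ∏ i ∈ Finset.univ.erase s, (X - C (x i)) with hG
  have hGev : ∀ (s : Fin (m + n + 1)) (t : ℂ),
      (G s).eval t = ∏ i ∈ Finset.univ.erase s, (t - x i) := by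
    intro s t
    simp [hG, Polynomial.eval_prod]
  have hFG : ∀ r, F = (X - C (x r)) * G r :=
    fun r => (Finset.mul_prod_erase _ _ (Finset.mem_univ r)).symm
  have hFev : ∀ t : ℂ, F.eval t = ∏ s, (t - x s) := by
    intro t
    simp [hF, Polynomial.eval_prod]
  set A : Matrix (Fin (n + 1)) (Fin (n + 1)) (Polynomial ℂ) :=
    Matrix.of fun i j => ∑ s, C (u s * x s ^ ((i : ℕ) + (j : ℕ))) * G s with hA
  set D : Polynomial ℂ := A.det with hD
  have hQe : ∀ t : ℂ, Qe t = (Matrix.of fun i j : Fin n =>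
      ∑ s, u s * x s ^ ((i : ℕ) + (j : ℕ)) * (t - x s)).det := fun t => rfl
  -- the per-node factorization
  have key : ∀ r : Fin (m + n + 1), ∃ Hr : Polynomial ℂ,
      D = (X - C (x r)) ^ n * Hr ∧
      Hr.eval (x r) = ψ r * ((∏ i ∈ Finset.univ.erase r, (x r - x i)) ^ n * Qe (x r)) := by
    intro r
    obtain ⟨qr, hqr⟩ := Polynomial.X_sub_C_dvd_sub_C_eval (a := x r) (p := G r)
    set Gd : Fin (m + n + 1) → Polynomial ℂ :=
      fun s => if s = r then qr else ∏ i ∈ (Finset.univ.erase s).erase r, (X - C (x i))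
      with hGdDef
    have hGd : ∀ s, G s = (X - C (x r)) * Gd s +
        (if s = r then C (∏ i ∈ Finset.univ.erase r, (x r - x i)) else 0) := by
      intro s
      by_cases hs : s = r
      · subst hs
        rw [if_pos rfl]
        simp only [hGdDef, if_pos rfl]
        have : (G s).eval (x s) = ∏ i ∈ Finset.univ.erase s, (x s - x i) := hGev s (x s)
        rw [← this]
        linear_combination hqr
      · rw [if_neg hs, add_zero]
        simp only [hGdDef, if_neg hs, hG]
        exact (Finset.mul_prod_erase (Finset.univ.erase s) (fun i => X - C (x i))
          (Finset.mem_erase.mpr ⟨fun h => hs h.symm, Finset.mem_univ r⟩)).symm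
    have hGdev : ∀ s, s ≠ r → (x r - x s) * (Gd s).eval (x r)
        = ∏ i ∈ Finset.univ.erase r, (x r - x i) := by
      intro s hs
      simp only [hGdDef, if_neg hs]
      rw [Polynomial.eval_prod]
      simp only [Polynomial.eval_sub, Polynomial.eval_X, Polynomial.eval_C]
      rw [show (Finset.univ.erase s).erase r = (Finset.univ.erase r).erase s from by
        ext a; simp [Finset.mem_erase]; tauto]
      exact Finset.mul_prod_erase (Finset.univ.erase r) (fun i => x r - x i)
        (Finset.mem_erase.mpr ⟨hs, Finset.mem_univ s⟩)
    set Br : Matrix (Fin (n + 1)) (Fin (n + 1)) (Polynomial ℂ) :=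
      Matrix.of fun i j => ∑ s, C (u s * x s ^ ((i : ℕ) + (j : ℕ))) * Gd s with hBr
    have hAsplit : A = ((X - C (x r)) • Br) +
        Matrix.of (fun i j : Fin (n + 1) =>
          C (ψ r * x r ^ (i : ℕ)) * C (x r ^ (j : ℕ))) := by
      ext i j
      simp only [hA, hBr, Matrix.add_apply, Matrix.smul_apply, Matrix.of_apply,
        smul_eq_mul]
      have e1 : ∀ s : Fin (m + n + 1), C (u s * x s ^ ((i : ℕ) + (j : ℕ))) * G s
          = (X - C (x r)) * (C (u s * x s ^ ((i : ℕ) + (j : ℕ))) * Gd s)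
            + (if s = r then C (u s * x s ^ ((i : ℕ) + (j : ℕ)))
                * C (∏ i ∈ Finset.univ.erase r, (x r - x i)) else 0) := by
        intro s
        rw [hGd s]
        by_cases hs : s = r
        · subst hs; rw [if_pos rfl, if_pos rfl]; ring
        · rw [if_neg hs, if_neg hs]; ring
      rw [Finset.sum_congr rfl fun s _ => e1 s, Finset.sum_add_distrib, ← Finset.mul_sum,
        Finset.sum_ite_eq' Finset.univ r, if_pos (Finset.mem_univ r)]
      have e2 : C (u r * x r ^ ((i : ℕ) + (j : ℕ))) * C (∏ i ∈ Finset.univ.erase r, (x r - x i))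
          = C (ψ r * x r ^ (i : ℕ)) * C (x r ^ (j : ℕ)) := by
        rw [← Polynomial.C_mul, ← Polynomial.C_mul]
        refine congrArg _ ?_
        rw [pow_add]
        linear_combination (x r ^ (i : ℕ) * x r ^ (j : ℕ)) * hu r
      rw [e2]
    have hXa : (X - C (x r)) ≠ (0 : Polynomial ℂ) := Polynomial.X_sub_C_ne_zero (x r)
    set wc : Fin (n + 1) → Polynomial ℂ := fun j => C (x r ^ (j : ℕ)) with hwc
    refine ⟨(X - C (x r)) * Br.det +
        ∑ i : Fin (n + 1), C (ψ r * x r ^ (i : ℕ)) * ((Br.updateRow i wc).det), ?_, ?_⟩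
    · -- the factorization of D at node r
      have h1 := det_add_rankOne ((X - C (x r)) • Br)
        (fun i : Fin (n + 1) => C (ψ r * x r ^ (i : ℕ))) wc
      rw [hD, hAsplit, h1, Matrix.det_smul, Fintype.card_fin]
      have h2 : ∀ i : Fin (n + 1),
          C (ψ r * x r ^ (i : ℕ)) * (((X - C (x r)) • Br).updateRow i wc).det
          = (X - C (x r)) ^ n * (C (ψ r * x r ^ (i : ℕ)) * (Br.updateRow i wc).det) := by
        intro i
        rw [det_smul_updateRow _ hXa Br i wc]
        ring
      rw [Finset.sum_congr rfl fun i _ => h2 i, ← Finset.mul_sum]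
      rw [pow_succ]
      ring
    · -- evaluation at x r
      set γ : Fin (m + n + 1) → ℂ := fun s => u s * (Gd s).eval (x r) with hγ
      have hBrmap : Br.map (Polynomial.eval (x r))
          = Matrix.of fun k l : Fin (n + 1) => ∑ s, γ s * x s ^ ((k : ℕ) + (l : ℕ)) := by
        ext k l
        simp only [Matrix.map_apply, hBr, Matrix.of_apply]
        rw [Polynomial.eval_finset_sum]
        refine Finset.sum_congr rfl fun s _ => ?_
        rw [Polynomial.eval_mul, Polynomial.eval_C, hγ]
        ring
      have hevdet : ∀ i : Fin (n + 1),
          Polynomial.eval (x r) ((Br.updateRow i wc).det)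
          = ((Matrix.of fun k l : Fin (n + 1) =>
              ∑ s, γ s * x s ^ ((k : ℕ) + (l : ℕ))).updateRow i
              (fun j => x r ^ (j : ℕ))).det := by
        intro i
        rw [eval_det', Matrix.map_updateRow, hBrmap]
        have hcomp : (Polynomial.eval (x r) ∘ wc) = (fun j : Fin (n + 1) => x r ^ (j : ℕ)) := by
          funext j
          simp [hwc]
        rw [hcomp]
      rw [Polynomial.eval_add, Polynomial.eval_mul, Polynomial.eval_sub, Polynomial.eval_X,
        Polynomial.eval_C, sub_self, zero_mul, zero_add, Polynomial.eval_finset_sum]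
      have h3 : ∀ i : Fin (n + 1), Polynomial.eval (x r)
            (C (ψ r * x r ^ (i : ℕ)) * (Br.updateRow i wc).det)
          = ψ r * (x r ^ (i : ℕ) * ((Matrix.of fun k l : Fin (n + 1) =>
              ∑ s, γ s * x s ^ ((k : ℕ) + (l : ℕ))).updateRow i
              (fun j => x r ^ (j : ℕ))).det) := by
        intro i
        rw [Polynomial.eval_mul, Polynomial.eval_C, hevdet i]
        ring
      rw [Finset.sum_congr rfl fun i _ => h3 i, ← Finset.mul_sum,
        moment_identity (x r) γ x]
      have hminor : (Matrix.of fun i j : Fin n =>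
            ∑ s, (γ s * (x r - x s) ^ 2) * x s ^ ((i : ℕ) + (j : ℕ)))
          = (∏ i ∈ Finset.univ.erase r, (x r - x i)) •
            Matrix.of (fun i j : Fin n =>
              ∑ s, u s * x s ^ ((i : ℕ) + (j : ℕ)) * (x r - x s)) := by
        ext i j
        simp only [Matrix.of_apply, Matrix.smul_apply, smul_eq_mul, Finset.mul_sum]
        refine Finset.sum_congr rfl fun s _ => ?_
        by_cases hs : s = r
        · subst hs
          rw [sub_self]
          ring
        · have h := hGdev s hs
          simp only [hγ]
          linear_combination (u s * (x r - x s) * x s ^ ((i : ℕ) + (j : ℕ))) * h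
      rw [hminor, Matrix.det_smul, Fintype.card_fin, hQe (x r)]
  -- global divisibility by F^n
  have hdvd : F ^ n ∣ D := by
    have hFn : F ^ n = ∏ r, (X - C (x r)) ^ n := by
      rw [hF, ← Finset.prod_pow]
    rw [hFn]
    refine Finset.prod_dvd_of_coprime ?_ fun r _ => ?_
    · intro a _ b _ hab
      exact (Polynomial.pairwise_coprime_X_sub_C hx hab).pow
    · obtain ⟨Hr, hfac, _⟩ := key r
      exact ⟨Hr, hfac⟩
  obtain ⟨p, hp⟩ := hdvd
  -- degree facts
  have hFmonic : F.Monic := monic_prod_of_monic _ _ fun s _ => monic_X_sub_C (x s)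
  have hFdeg : F.natDegree = m + n + 1 := by
    rw [hF, Polynomial.natDegree_prod _ _ fun i _ => Polynomial.X_sub_C_ne_zero (x i)]
    simp [Polynomial.natDegree_X_sub_C]
  have hDdeg : D.degree ≤ (((n + 1) * (m + n) : ℕ) : WithBot ℕ) := by
    refine degree_det_le_card_mul A fun i j => ?_
    show (∑ s, C (u s * x s ^ ((i : ℕ) + (j : ℕ))) * G s).degree ≤ ((m + n : ℕ) : WithBot ℕ)
    refine le_trans (Polynomial.degree_sum_le _ _) ?_
    rw [Finset.sup_le_iff]
    intro s _
    refine le_trans (Polynomial.degree_mul_le _ _) ?_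
    have hdegG : (G s).degree ≤ ((m + n : ℕ) : WithBot ℕ) := by
      rw [hG]
      refine le_trans (Polynomial.degree_prod_le _ _) ?_
      rw [Finset.sum_congr rfl fun i _ => Polynomial.degree_X_sub_C (x i)]
      rw [Finset.sum_const, Finset.card_erase_of_mem (Finset.mem_univ s), Finset.card_univ,
        Fintype.card_fin]
      simp [nsmul_eq_mul, mul_one]
    calc (C (u s * x s ^ ((i : ℕ) + (j : ℕ)))).degree + (G s).degree
        ≤ 0 + ((m + n : ℕ) : WithBot ℕ) := add_le_add Polynomial.degree_C_le hdegG
      _ = ((m + n : ℕ) : WithBot ℕ) := by rw [zero_add]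
  have hpdeg : p.degree ≤ (m : WithBot ℕ) := by
    by_cases hp0 : p = 0
    · rw [hp0, Polynomial.degree_zero]
      exact bot_le
    · have hFn0 : F ^ n ≠ 0 := pow_ne_zero _ hFmonic.ne_zero
      have hnat : D.natDegree = (F ^ n).natDegree + p.natDegree := by
        rw [hp, Polynomial.natDegree_mul hFn0 hp0]
      have hFpow : (F ^ n).natDegree = n * (m + n + 1) := by
        rw [Polynomial.natDegree_pow, hFdeg]
      have hDnat : D.natDegree ≤ (n + 1) * (m + n) :=
        Polynomial.natDegree_le_iff_degree_le.mpr hDdeg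
      have hple : p.natDegree ≤ m := by nlinarith [hnat, hFpow, hDnat]
      exact Polynomial.degree_le_of_natDegree_le hple
  -- the matrix for Q
  set qpM : Matrix (Fin n) (Fin n) (Polynomial ℂ) :=
    Matrix.of fun i j => ∑ s, C (u s * x s ^ ((i : ℕ) + (j : ℕ))) * (X - C (x s)) with hqpM
  have hqpdeg : qpM.det.degree ≤ (n : WithBot ℕ) := by
    have h := degree_det_le_card_mul (d := 1) qpM fun i j => ?_
    · simpa using h
    · show (∑ s, C (u s * x s ^ ((i : ℕ) + (j : ℕ))) * (X - C (x s))).degree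
        ≤ ((1 : ℕ) : WithBot ℕ)
      refine le_trans (Polynomial.degree_sum_le _ _) ?_
      rw [Finset.sup_le_iff]
      intro s _
      refine le_trans (Polynomial.degree_mul_le _ _) ?_
      calc (C (u s * x s ^ ((i : ℕ) + (j : ℕ)))).degree + (X - C (x s)).degree
          ≤ 0 + ((1 : ℕ) : WithBot ℕ) :=
            add_le_add Polynomial.degree_C_le (Polynomial.degree_X_sub_C (x s)).le
        _ = ((1 : ℕ) : WithBot ℕ) := by rw [zero_add]
  have hqpev : ∀ t : ℂ, Polynomial.eval t qpM.det = Qe t := by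
    intro t
    rw [eval_det', hQe t]
    congr 1
    ext i j
    simp only [Matrix.map_apply, hqpM, Matrix.of_apply]
    rw [Polynomial.eval_finset_sum]
    refine Finset.sum_congr rfl fun s _ => ?_
    simp
  refine ⟨p, qpM.det, hpdeg, hqpdeg, ?_, hqpev, ?_⟩
  · -- evaluation of p away from the nodes
    intro t ht
    have hFt : F.eval t ≠ 0 := by
      rw [hFev]
      exact Finset.prod_ne_zero_iff.mpr fun s _ => sub_ne_zero.mpr (ht s)
    have h1 : D.eval t = (F.eval t) ^ n * p.eval t := by
      rw [hp, Polynomial.eval_mul, Polynomial.eval_pow]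
    have hmap : A.map (Polynomial.eval t) = (F.eval t) •
        Matrix.of (fun i j : Fin (n + 1) =>
          ∑ s, u s * x s ^ ((i : ℕ) + (j : ℕ)) / (t - x s)) := by
      ext i j
      simp only [Matrix.map_apply, hA, Matrix.of_apply, Matrix.smul_apply, smul_eq_mul,
        Finset.mul_sum]
      rw [Polynomial.eval_finset_sum]
      refine Finset.sum_congr rfl fun s _ => ?_
      rw [Polynomial.eval_mul, Polynomial.eval_C, hGev s t]
      have hts : t - x s ≠ 0 := sub_ne_zero.mpr (ht s)
      have hFts : F.eval t = (t - x s) * ∏ i ∈ Finset.univ.erase s, (t - x i) := by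
        rw [hFev]
        exact (Finset.mul_prod_erase Finset.univ (fun i => t - x i) (Finset.mem_univ s)).symm
      rw [hFts]
      field_simp
    have h2 : D.eval t = (F.eval t) ^ (n + 1) *
        (Matrix.of fun i j : Fin (n + 1) =>
          ∑ s, u s * x s ^ ((i : ℕ) + (j : ℕ)) / (t - x s)).det := by
      rw [hD, eval_det', hmap, Matrix.det_smul, Fintype.card_fin]
    have h3 : (F.eval t) ^ n * p.eval t = (F.eval t) ^ n * ((F.eval t) *
        (Matrix.of fun i j : Fin (n + 1) =>
          ∑ s, u s * x s ^ ((i : ℕ) + (j : ℕ)) / (t - x s)).det) := by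
      rw [← h1, h2, pow_succ]
      ring
    have h4 : p.eval t = (F.eval t) *
        (Matrix.of fun i j : Fin (n + 1) =>
          ∑ s, u s * x s ^ ((i : ℕ) + (j : ℕ)) / (t - x s)).det :=
      mul_left_cancel₀ (pow_ne_zero n hFt) h3
    have hPet : Pe t = (∏ s, (t - x s)) *
        (Matrix.of fun i j : Fin (n + 1) =>
          ∑ s, u s * x s ^ ((i : ℕ) + (j : ℕ)) / (t - x s)).det := rfl
    rw [h4, hPet, hFev]
  · -- the interpolation property
    intro hQ s
    obtain ⟨Hr, hfac, hval⟩ := key s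
    have hGrn : (X - C (x s)) ^ n * Hr = (X - C (x s)) ^ n * ((G s) ^ n * p) := by
      rw [← hfac, hp, hFG s, mul_pow]
      ring
    have hHr : Hr = (G s) ^ n * p :=
      mul_left_cancel₀ (pow_ne_zero _ (Polynomial.X_sub_C_ne_zero (x s))) hGrn
    have hevalHr : Hr.eval (x s)
        = (∏ i ∈ Finset.univ.erase s, (x s - x i)) ^ n * p.eval (x s) := by
      rw [hHr, Polynomial.eval_mul, Polynomial.eval_pow, hGev s (x s)]
    have hps : p.eval (x s) = ψ s * Qe (x s) := by
      have h2 : (∏ i ∈ Finset.univ.erase s, (x s - x i)) ^ n * p.eval (x s)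
          = (∏ i ∈ Finset.univ.erase s, (x s - x i)) ^ n * (ψ s * Qe (x s)) := by
        rw [← hevalHr, hval]
        ring
      exact mul_left_cancel₀ (pow_ne_zero _ (hF'ne s)) h2
    rw [hps, mul_div_assoc, div_self (hQ s), mul_one]
end

section
/- Let ψ(x) = ∑_{k≥0} p_k x^k be a formal power series with p_0 = 1 (and p_i = 0 for i < 0). Define the Schur function s_λ by the Jacobi-Trudi formula s_{(λ_1,...,λ_l)} = det( p_{λ_i - i + j} )_{i,j=1}^l. Then the polynomials P(x) = ∑_{i=0}^{m} s_{(m^n, i)} x^i and Q(x) = ∑_{i=0}^{n} s_{((m+1)^i, m^{n-i})} (-x)^i of degrees at most m and n satisfy the Padé condition: the power series ψ(x)·Q(x) − P(x) has vanishing coefficients in degrees 0 through m+n. -/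
open scoped BigOperators

/-- The Schur function given by the Jacobi-Trudi determinant
`s_{(λ_1,…,λ_l)} = det(p_{λ_i - i + j})_{i,j=1}^l`. -/
noncomputable def jacobiTrudi (p : ℤ → ℂ) (l : ℕ) (lam : Fin l → ℕ) : ℂ :=
  Matrix.det (Matrix.of fun i j : Fin l =>
    p (((lam i : ℕ) : ℤ) - ((i : ℕ) : ℤ) + ((j : ℕ) : ℤ)))

/-- The cofactor of the last row of the `(n+1)×(n+1)` Jacobi–Trudi matrix of the
partition `(m,…,m,d)` at column `j` is the Jacobi–Trudi determinant of the
partition `((m+1)^{n-j}, m^{j})`. -/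
lemma minor_lemma (p : ℤ → ℂ) (m n : ℕ) (j : Fin (n+1)) :
    Matrix.det (Matrix.of fun i k : Fin n =>
        p ((m : ℤ) - ((i : ℕ) : ℤ) + (((j.succAbove k : Fin (n+1)) : ℕ) : ℤ))) =
    jacobiTrudi p n (fun k => if (k : ℕ) < n - (j : ℕ) then m + 1 else m) := by
  unfold jacobiTrudi
  have hM : (Matrix.of fun i k : Fin n =>
        p ((m : ℤ) - ((i : ℕ) : ℤ) + (((j.succAbove k : Fin (n+1)) : ℕ) : ℤ))) =
      ((Matrix.of fun a b : Fin n =>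
        p ((((if (a : ℕ) < n - (j : ℕ) then m + 1 else m : ℕ)) : ℤ) - ((a : ℕ) : ℤ) +
          ((b : ℕ) : ℤ))).transpose.submatrix Fin.revPerm Fin.revPerm) := by
    ext a b
    obtain ⟨a, ha⟩ := a
    obtain ⟨b, hb⟩ := b
    obtain ⟨j, hj⟩ := j
    simp only [Matrix.submatrix_apply, Matrix.transpose_apply, Matrix.of_apply,
      Fin.revPerm_apply, Fin.succAbove, Fin.lt_def, Fin.coe_castSucc, Fin.val_rev,
      Fin.val_mk, Fin.val_succ]
    split_ifs with h1 h2 h2 <;>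
      simp only [Fin.coe_castSucc, Fin.val_succ, Fin.val_mk] <;>
      (congr 1; omega)
  rw [hM, Matrix.det_submatrix_equiv_self, Matrix.det_transpose]

/-- The Padé condition: for `ψ(x) = ∑ p_k x^k` with `p_0 = 1`, the polynomials
`P(x) = ∑_{i=0}^m s_{(m^n,i)} x^i` and `Q(x) = ∑_{i=0}^n s_{((m+1)^i,m^{n-i})}(-x)^i`
satisfy that `ψ·Q - P` has vanishing coefficients in degrees `0,…,m+n`. -/
theorem stmt5 (m n : ℕ) (p : ℤ → ℂ) (hp0 : p 0 = 1)
    (hpneg : ∀ i : ℤ, i < 0 → p i = 0) :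
    ∀ d : ℕ, d ≤ m + n →
      (∑ i ∈ Finset.range (n + 1),
          ((-1 : ℂ) ^ i * jacobiTrudi p n (fun k => if (k : ℕ) < i then m + 1 else m)) *
            p ((d : ℤ) - (i : ℤ))) =
        (if d ≤ m then jacobiTrudi p (n + 1) (fun k => if (k : ℕ) < n then m else d)
          else 0) := by
  intro d hd
  have key : (∑ i ∈ Finset.range (n + 1),
          ((-1 : ℂ) ^ i * jacobiTrudi p n (fun k => if (k : ℕ) < i then m + 1 else m)) *
            p ((d : ℤ) - (i : ℤ)))
      = jacobiTrudi p (n + 1) (fun k => if (k : ℕ) < n then m else d) := by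
    rw [← Finset.sum_range_reflect]
    conv_rhs => rw [jacobiTrudi]
    rw [Matrix.det_succ_row _ (Fin.last n), ← Fin.sum_univ_eq_sum_range]
    refine Finset.sum_congr rfl fun j _ => ?_
    have hj : (j : ℕ) ≤ n := Nat.lt_succ_iff.mp j.is_lt
    have hsub : ((Matrix.of fun i k : Fin (n+1) =>
          p (((if (i : ℕ) < n then m else d : ℕ) : ℤ) - ((i : ℕ) : ℤ) + ((k : ℕ) : ℤ))).submatrix
            (Fin.last n).succAbove j.succAbove)
        = Matrix.of fun i k : Fin n =>
            p ((m : ℤ) - ((i : ℕ) : ℤ) + (((j.succAbove k : Fin (n+1)) : ℕ) : ℤ)) := by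
      ext i k
      simp only [Matrix.submatrix_apply, Matrix.of_apply, Fin.succAbove_last,
        Fin.coe_castSucc]
      rw [if_pos i.is_lt]
    have hsign : ((-1 : ℂ)) ^ (n + 1 - 1 - (j : ℕ)) = (-1) ^ (((Fin.last n : Fin (n+1)) : ℕ) + (j : ℕ)) := by
      rw [Fin.val_last, show n + (j : ℕ) = (n - (j : ℕ)) + 2 * (j : ℕ) by omega,
        pow_add, pow_mul]
      simp
    have harg : (d : ℤ) - ((n + 1 - 1 - (j : ℕ) : ℕ) : ℤ)
        = ((if ((Fin.last n : Fin (n+1)) : ℕ) < n then m else d : ℕ) : ℤ)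
            - (((Fin.last n : Fin (n+1)) : ℕ) : ℤ) + ((j : ℕ) : ℤ) := by
      rw [Fin.val_last, if_neg (lt_irrefl n)]
      omega
    rw [hsub, minor_lemma p m n j]
    simp only [Nat.add_sub_cancel] at hsign harg ⊢
    rw [hsign, harg]
    simp only [Matrix.of_apply]
    ring
  rw [key]
  by_cases hdm : d ≤ m
  · rw [if_pos hdm]
  · rw [if_neg hdm]
    push_neg at hdm
    unfold jacobiTrudi
    refine Matrix.det_zero_of_row_eq (i := ⟨n - (d - m), by omega⟩) (j := Fin.last n)
      (Fin.ne_of_val_ne ?_) ?_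
    · simp only [Fin.val_last, Fin.val_mk]; omega
    · funext k
      simp only [Matrix.of_apply, Fin.val_last, Fin.val_mk]
      rw [if_pos (by omega : n - (d - m) < n), if_neg (lt_irrefl n)]
      congr 1
      omega
end

section
/- With notation as in the Jacobi-Trudi Padé construction (p_k the coefficients of a formal power series with p_0=1), the polynomial P(x) = ∑_{i=0}^m s_{(m^n,i)} x^i satisfies P(x) = x^m · det( q_{m - i + j} )_{i,j=1}^{n+1}, where q_r = ∑_{j=0}^{r} x^{-j} p_{r-j}; that is, P equals x^m times the Schur determinant s_{(m^{n+1})} with each p_i replaced by ∑_{j=0}^{i} x^{-j} p_{i-j}. -/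
open scoped BigOperators

/-- det is additive over a finite sum in one row. -/
lemma det_updateRow_finset_sum {N : ℕ} (M : Matrix (Fin N) (Fin N) ℂ) (r : Fin N)
    {ι : Type*} (s : Finset ι) (v : ι → Fin N → ℂ) :
    (M.updateRow r (∑ i ∈ s, v i)).det = ∑ i ∈ s, (M.updateRow r (v i)).det := by
  classical
  induction s using Finset.induction_on with
  | empty =>
    simp only [Finset.sum_empty]
    exact Matrix.det_eq_zero_of_row_eq_zero r (fun j => by simp)
  | insert a t h ih =>
    rw [Finset.sum_insert h, Finset.sum_insert h, Matrix.det_updateRow_add, ih]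

/-- `P(x) = ∑_{i=0}^m s_{(m^n,i)} x^i` equals `x^m` times the Schur determinant
`s_{(m^{n+1})}` with each `p_i` replaced by `q_i = ∑_{j=0}^i x^{-j} p_{i-j}`. -/
theorem stmt6 (m n : ℕ) (p : ℤ → ℂ) (hp0 : p 0 = 1)
    (hpneg : ∀ i : ℤ, i < 0 → p i = 0) (x : ℂ) (hx : x ≠ 0) :
    let qq : ℤ → ℂ := fun r =>
      ∑ j ∈ Finset.range (r.toNat + 1), x ^ (-(j : ℤ)) * p (r - (j : ℤ))
    (∑ i ∈ Finset.range (m + 1),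
        jacobiTrudi p (n + 1) (fun k => if (k : ℕ) < n then m else i) * x ^ i) =
      x ^ m * Matrix.det (Matrix.of fun i j : Fin (n + 1) =>
        qq ((m : ℤ) - ((i : ℕ) : ℤ) + ((j : ℕ) : ℤ))) := by
  intro qq
  -- extended-sum description of qq
  have qq_ext : ∀ (r : ℤ) (N : ℕ), r.toNat + 1 ≤ N →
      qq r = ∑ j ∈ Finset.range N, x ^ (-(j : ℤ)) * p (r - (j : ℤ)) := by
    intro r N h
    refine Finset.sum_subset (Finset.range_subset_range.2 h) ?_
    intro j _ hj'
    rw [Finset.mem_range, not_lt] at hj'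
    have : r - (j : ℤ) < 0 := by omega
    rw [hpneg _ this, mul_zero]
  set M' : ℕ := m + n + 1 with hM'
  set Q : Matrix (Fin (n + 1)) (Fin (n + 1)) ℂ :=
    Matrix.of fun i j : Fin (n + 1) => qq ((m : ℤ) - ((i : ℕ) : ℤ) + ((j : ℕ) : ℤ)) with hQ
  set A : Matrix (Fin (n + 1)) (Fin (n + 1)) ℂ :=
    Matrix.of fun i k : Fin (n + 1) =>
      if (i : ℕ) ≤ (k : ℕ) then x ^ (((i : ℕ) : ℤ) - ((k : ℕ) : ℤ)) else 0 with hA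
  set B : Matrix (Fin (n + 1)) (Fin (n + 1)) ℂ :=
    Matrix.of fun k j : Fin (n + 1) =>
      if (k : ℕ) < n then p ((m : ℤ) - ((k : ℕ) : ℤ) + ((j : ℕ) : ℤ))
      else qq ((m : ℤ) - (n : ℤ) + ((j : ℕ) : ℤ)) with hB
  -- Q = A * B
  have hQAB : Q = A * B := by
    ext i j
    have hi : (i : ℕ) ≤ n := Nat.lt_succ_iff.mp i.isLt
    have hj : (j : ℕ) ≤ n := Nat.lt_succ_iff.mp j.isLt
    rw [Matrix.mul_apply, hQ, Matrix.of_apply, Fin.sum_univ_castSucc]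
    have hlast : A i (Fin.last n) * B (Fin.last n) j
        = x ^ (((i : ℕ) : ℤ) - (n : ℤ)) * qq ((m : ℤ) - (n : ℤ) + ((j : ℕ) : ℤ)) := by
      rw [hA, hB]
      simp only [Matrix.of_apply, Fin.val_last]
      rw [if_pos hi, if_neg (lt_irrefl n)]
    rw [hlast]
    have hfirst : (∑ k : Fin n, A i k.castSucc * B k.castSucc j)
        = ∑ t ∈ Finset.range (n - (i : ℕ)),
            x ^ (-(t : ℤ)) * p ((m : ℤ) - ((i : ℕ) : ℤ) + ((j : ℕ) : ℤ) - (t : ℤ)) := by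
      have e1 : (∑ k : Fin n, A i k.castSucc * B k.castSucc j)
          = ∑ kk ∈ Finset.range n,
              (if (i : ℕ) ≤ kk then x ^ (((i : ℕ) : ℤ) - (kk : ℤ)) else 0)
                * p ((m : ℤ) - (kk : ℤ) + ((j : ℕ) : ℤ)) := by
        rw [← Fin.sum_univ_eq_sum_range (fun kk =>
          (if (i : ℕ) ≤ kk then x ^ (((i : ℕ) : ℤ) - (kk : ℤ)) else 0)
            * p ((m : ℤ) - (kk : ℤ) + ((j : ℕ) : ℤ))) n]
        refine Finset.sum_congr rfl fun k _ => ?_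
        rw [hA, hB]
        simp only [Matrix.of_apply, Fin.coe_castSucc]
        rw [if_pos k.isLt]
      have e2 : (∑ kk ∈ Finset.range n,
              (if (i : ℕ) ≤ kk then x ^ (((i : ℕ) : ℤ) - (kk : ℤ)) else 0)
                * p ((m : ℤ) - (kk : ℤ) + ((j : ℕ) : ℤ)))
          = ∑ kk ∈ Finset.Ico (i : ℕ) n,
              (if (i : ℕ) ≤ kk then x ^ (((i : ℕ) : ℤ) - (kk : ℤ)) else 0)
                * p ((m : ℤ) - (kk : ℤ) + ((j : ℕ) : ℤ)) := by
        rw [Finset.range_eq_Ico]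
        refine (Finset.sum_subset (Finset.Ico_subset_Ico (Nat.zero_le _) le_rfl) ?_).symm
        intro kk hkk hkk'
        rw [Finset.mem_Ico] at hkk hkk'
        have : ¬ (i : ℕ) ≤ kk := by omega
        rw [if_neg this, zero_mul]
      rw [e1, e2, Finset.sum_Ico_eq_sum_range]
      refine Finset.sum_congr rfl fun t _ => ?_
      rw [if_pos (Nat.le_add_right _ _)]
      have e3 : (((i : ℕ) : ℤ) - (((i : ℕ) + t : ℕ) : ℤ)) = -(t : ℤ) := by push_cast; ring
      have e4 : ((m : ℤ) - (((i : ℕ) + t : ℕ) : ℤ) + ((j : ℕ) : ℤ))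
          = (m : ℤ) - ((i : ℕ) : ℤ) + ((j : ℕ) : ℤ) - (t : ℤ) := by push_cast; ring
      rw [e3, e4]
    rw [hfirst]
    -- now expand qq on the left
    have hbound : ((m : ℤ) - ((i : ℕ) : ℤ) + ((j : ℕ) : ℤ)).toNat + 1 ≤ (n - (i : ℕ)) + M' := by
      omega
    have hsecond : (∑ s ∈ Finset.range M',
          x ^ (-((n - (i : ℕ) + s : ℕ) : ℤ))
            * p ((m : ℤ) - ((i : ℕ) : ℤ) + ((j : ℕ) : ℤ) - ((n - (i : ℕ) + s : ℕ) : ℤ)))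
        = x ^ (((i : ℕ) : ℤ) - (n : ℤ)) * qq ((m : ℤ) - (n : ℤ) + ((j : ℕ) : ℤ)) := by
      rw [qq_ext ((m : ℤ) - (n : ℤ) + ((j : ℕ) : ℤ)) M' (by omega), Finset.mul_sum]
      refine Finset.sum_congr rfl fun s _ => ?_
      rw [← mul_assoc, ← zpow_add₀ hx]
      have e4 : (-((n - (i : ℕ) + s : ℕ) : ℤ)) = (((i : ℕ) : ℤ) - (n : ℤ)) + (-(s : ℤ)) := by
        push_cast [hi]; ring
      have e5 : ((m : ℤ) - ((i : ℕ) : ℤ) + ((j : ℕ) : ℤ) - ((n - (i : ℕ) + s : ℕ) : ℤ))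
          = (m : ℤ) - (n : ℤ) + ((j : ℕ) : ℤ) - (s : ℤ) := by push_cast [hi]; ring
      rw [e4, e5]
    rw [qq_ext _ _ hbound, Finset.sum_range_add, hsecond]
  -- det A = 1
  have hdetA : A.det = 1 := by
    have ht : A.BlockTriangular id := by
      intro a b hab
      have h : ¬ (a : ℕ) ≤ (b : ℕ) := by
        have : (b : ℕ) < (a : ℕ) := hab
        omega
      show A a b = 0
      rw [hA]
      simp only [Matrix.of_apply]
      rw [if_neg h]
    rw [Matrix.det_of_upperTriangular ht]
    refine Finset.prod_eq_one fun k _ => ?_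
    simp [hA]
  -- multilinear expansion of det B in the last row
  have hBup : B = B.updateRow (Fin.last n)
      (∑ s ∈ Finset.range M', fun j : Fin (n + 1) =>
        x ^ (-(s : ℤ)) * p ((m : ℤ) - (n : ℤ) + ((j : ℕ) : ℤ) - (s : ℤ))) := by
    ext k j
    by_cases hk : k = Fin.last n
    · subst hk
      rw [Matrix.updateRow_self]
      have hj : (j : ℕ) ≤ n := Nat.lt_succ_iff.mp j.isLt
      have : B (Fin.last n) j = qq ((m : ℤ) - (n : ℤ) + ((j : ℕ) : ℤ)) := by
        simp [hB, Fin.last]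
      rw [this, qq_ext _ M' (by omega)]
      simp
    · rw [Matrix.updateRow_ne hk]
  have hdetB : B.det = ∑ s ∈ Finset.range M',
      x ^ (-(s : ℤ)) * (B.updateRow (Fin.last n)
        (fun j : Fin (n + 1) => p ((m : ℤ) - (n : ℤ) + ((j : ℕ) : ℤ) - (s : ℤ)))).det := by
    conv_lhs => rw [hBup]
    rw [det_updateRow_finset_sum]
    refine Finset.sum_congr rfl fun s _ => ?_
    have : (fun j : Fin (n + 1) =>
        x ^ (-(s : ℤ)) * p ((m : ℤ) - (n : ℤ) + ((j : ℕ) : ℤ) - (s : ℤ)))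
        = x ^ (-(s : ℤ)) • (fun j : Fin (n + 1) =>
            p ((m : ℤ) - (n : ℤ) + ((j : ℕ) : ℤ) - (s : ℤ))) := by
      ext j; simp [smul_eq_mul]
    rw [this, Matrix.det_updateRow_smul]

  -- identify each summand
  have hDle : ∀ s : ℕ, s ≤ m → (B.updateRow (Fin.last n)
      (fun j : Fin (n + 1) => p ((m : ℤ) - (n : ℤ) + ((j : ℕ) : ℤ) - (s : ℤ)))).det
      = jacobiTrudi p (n + 1) (fun k => if (k : ℕ) < n then m else m - s) := by
    intro s hs
    unfold jacobiTrudi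
    congr 1
    ext k j
    by_cases hk : (k : ℕ) < n
    · have hk' : k ≠ Fin.last n := by
        intro h; rw [h] at hk; simp [Fin.last] at hk
      rw [Matrix.updateRow_ne hk']
      simp [hB, hk]
    · have hk' : k = Fin.last n := by
        apply Fin.ext
        have := Nat.lt_succ_iff.mp k.isLt
        simp [Fin.last]; omega
      subst hk'
      rw [Matrix.updateRow_self]
      simp only [Matrix.of_apply, hk, if_false]
      congr 1
      have : ((m - s : ℕ) : ℤ) = (m : ℤ) - (s : ℤ) := by push_cast [hs]; ring
      rw [this]
      simp [Fin.last]
      ring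
  have hDgt : ∀ s : ℕ, m < s → (B.updateRow (Fin.last n)
      (fun j : Fin (n + 1) => p ((m : ℤ) - (n : ℤ) + ((j : ℕ) : ℤ) - (s : ℤ)))).det = 0 := by
    intro s hs
    refine Matrix.det_eq_zero_of_row_eq_zero (Fin.last n) fun j => ?_
    rw [Matrix.updateRow_self]
    have hj : (j : ℕ) ≤ n := Nat.lt_succ_iff.mp j.isLt
    exact hpneg _ (by omega)
  -- assemble
  rw [hQAB, Matrix.det_mul, hdetA, one_mul, hdetB, Finset.mul_sum]
  rw [← Finset.sum_subset (Finset.range_subset_range.2 (by omega : m + 1 ≤ M'))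
      (fun s _ hs => by
        rw [hDgt s (by simpa [Finset.mem_range, Nat.lt_succ_iff, not_le] using hs)]
        ring)]
  rw [← Finset.sum_range_reflect (fun i => jacobiTrudi p (n + 1)
      (fun k => if (k : ℕ) < n then m else i) * x ^ i) (m + 1)]
  refine Finset.sum_congr rfl fun s hs => ?_
  rw [Finset.mem_range, Nat.lt_succ_iff] at hs
  rw [hDle s hs]
  have e6 : m + 1 - 1 - s = m - s := by omega
  rw [e6]
  have e7 : (x : ℂ) ^ m * x ^ (-(s : ℤ)) = x ^ (m - s) := by
    rw [← zpow_natCast x m, ← zpow_add₀ hx, ← zpow_natCast x (m - s)]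
    congr 1
    push_cast [hs]
    ring
  rw [← mul_assoc, e7, mul_comm]
end

section
/- With p_k the coefficients of a formal power series with p_0=1, the polynomial Q(x) = ∑_{i=0}^{n} s_{((m+1)^i, m^{n-i})} (-x)^i satisfies Q(x) = (-x)^n · det( r_{m+1 - i + j} )_{i,j=1}^{n}, where r_k = p_k − x^{-1} p_{k-1}; that is, Q equals (-x)^n times the Schur determinant s_{((m+1)^n)} with each p_i replaced by p_i − x^{-1} p_{i-1}. -/
open scoped BigOperators

section aux
variable {n : ℕ}

/-- upward-closed sets of `Fin n` -/
def GoodSet (s : Finset (Fin n)) : Prop := ∀ k l : Fin n, k ∈ s → k ≤ l → l ∈ s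

def tailSet (n i : ℕ) : Finset (Fin n) := Finset.univ.filter (fun k => i ≤ (k : ℕ))

lemma tailSet_good (i : ℕ) : GoodSet (tailSet n i) := by
  intro k l hk hkl
  simp only [tailSet, Finset.mem_filter, Finset.mem_univ, true_and] at hk ⊢
  exact hk.trans hkl

lemma tailSet_card {i : ℕ} (hi : i ≤ n) : (tailSet n i).card = n - i := by
  rcases Nat.lt_or_ge i n with h | h
  · have he : tailSet n i = Finset.Ici (⟨i, h⟩ : Fin n) := by
      ext k
      simp [tailSet, Fin.le_def]
    rw [he, Fin.card_Ici]
  · have he : tailSet n i = ∅ := by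
      ext k
      simp only [tailSet, Finset.mem_filter, Finset.mem_univ, true_and,
        Finset.notMem_empty, iff_false]
      have := k.isLt
      omega
    rw [he]
    simp
    omega

lemma good_chain {s t : Finset (Fin n)} (hs : GoodSet s) (ht : GoodSet t) :
    s ⊆ t ∨ t ⊆ s := by
  by_contra h
  push_neg at h
  obtain ⟨hst, hts⟩ := h
  obtain ⟨a, ha, hat⟩ := Finset.not_subset.mp hst
  obtain ⟨b, hb, hbs⟩ := Finset.not_subset.mp hts
  rcases le_total a b with hab | hab
  · exact hbs (hs a b ha hab)
  · exact hat (ht b a hb hab)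

lemma good_eq_tail {s : Finset (Fin n)} (hs : GoodSet s) : s = tailSet n (n - s.card) := by
  have hcard : s.card ≤ n := by simpa using Finset.card_le_card (Finset.subset_univ s)
  have hct : (tailSet n (n - s.card)).card = s.card := by
    rw [tailSet_card (Nat.sub_le _ _), Nat.sub_sub_self hcard]
  rcases good_chain hs (tailSet_good (n := n) (n - s.card)) with h | h
  · exact Finset.eq_of_subset_of_card_le h (le_of_eq hct)
  · exact (Finset.eq_of_subset_of_card_le h (le_of_eq hct.symm)).symm

lemma good_of_succ {s : Finset (Fin n)}
    (h : ∀ (j : Fin n) (hj : (j : ℕ) + 1 < n), j ∈ s → (⟨(j : ℕ) + 1, hj⟩ : Fin n) ∈ s) :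
    GoodSet s := by
  intro k l hk hkl
  obtain ⟨d, hd⟩ : ∃ d, (l : ℕ) = (k : ℕ) + d := ⟨(l : ℕ) - (k : ℕ), by omega⟩
  clear hkl
  induction d generalizing l with
  | zero =>
    have : l = k := Fin.ext (by omega)
    exact this ▸ hk
  | succ d ih =>
    have hlt : (k : ℕ) + d < n := by have := l.isLt; omega
    have hmem : (⟨(k : ℕ) + d, hlt⟩ : Fin n) ∈ s := ih ⟨(k : ℕ) + d, hlt⟩ rfl
    have h2 : (k : ℕ) + d + 1 < n := by have := l.isLt; omega
    have hmem2 := h ⟨(k : ℕ) + d, hlt⟩ h2 hmem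
    have hl : l = (⟨(k : ℕ) + d + 1, h2⟩ : Fin n) := Fin.ext (by simp only [Fin.val_mk]; omega)
    rw [hl]
    exact hmem2

end aux

/-- `Q(x) = ∑_{i=0}^n s_{((m+1)^i,m^{n-i})} (-x)^i` equals `(-x)^n` times the Schur
determinant `s_{((m+1)^n)}` with each `p_i` replaced by `r_i = p_i - x⁻¹ p_{i-1}`. -/
theorem stmt7 (m n : ℕ) (p : ℤ → ℂ) (hp0 : p 0 = 1)
    (hpneg : ∀ i : ℤ, i < 0 → p i = 0) (x : ℂ) (hx : x ≠ 0) :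
    let rr : ℤ → ℂ := fun k => p k - x⁻¹ * p (k - 1)
    (∑ i ∈ Finset.range (n + 1),
        jacobiTrudi p n (fun k => if (k : ℕ) < i then m + 1 else m) * (-x) ^ i) =
      (-x) ^ n * Matrix.det (Matrix.of fun i j : Fin n =>
        rr ((m : ℤ) + 1 - ((i : ℕ) : ℤ) + ((j : ℕ) : ℤ))) := by
  intro rr
  classical
  set c : ℂ := -x⁻¹ with hc
  set A : Fin n → Fin n → ℂ := fun i j => p ((m : ℤ) + 1 - (i : ℕ) + (j : ℕ)) with hA
  set B : Fin n → Fin n → ℂ := fun i j => p ((m : ℤ) - (i : ℕ) + (j : ℕ)) with hB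
  set D : Finset (Fin n) → ℂ := fun s =>
    Matrix.det (Matrix.of fun i j : Fin n => if i ∈ s then B i j else A i j) with hD
  have detRA : ∀ M : Matrix (Fin n) (Fin n) ℂ, M.det = Matrix.detRowAlternating M :=
    fun _ => rfl
  -- Step 1: expand the determinant
  have key : Matrix.det (Matrix.of fun i j : Fin n =>
      rr ((m : ℤ) + 1 - ((i : ℕ) : ℤ) + ((j : ℕ) : ℤ)))
      = ∑ s : Finset (Fin n), c ^ s.card * D s := by
    have h1 : (Matrix.of fun i j : Fin n =>
        rr ((m : ℤ) + 1 - ((i : ℕ) : ℤ) + ((j : ℕ) : ℤ)))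
        = (fun i => c • B i) + A := by
      funext i j
      have harg : (m : ℤ) + 1 - (i : ℕ) + (j : ℕ) - 1 = (m : ℤ) - (i : ℕ) + (j : ℕ) := by ring
      simp only [Matrix.of_apply, Pi.add_apply, Pi.smul_apply, smul_eq_mul, hA, hB, hc, rr,
        harg]
      ring
    rw [h1]; refine (detRA _).trans ?_
    have expand : Matrix.detRowAlternating ((fun i => c • B i) + A)
        = ∑ s : Finset (Fin n), Matrix.detRowAlternating
            (s.piecewise (fun i => c • B i) A) :=
      (Matrix.detRowAlternating :
        (Fin n → ℂ) [⋀^Fin n]→ₗ[ℂ] ℂ).toMultilinearMap.map_add_univ (fun i => c • B i) A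
    rw [expand]
    refine Finset.sum_congr rfl fun s _ => ?_
    have h2 : s.piecewise (fun i => c • B i) A
        = s.piecewise (fun i => c • (s.piecewise B A) i) (s.piecewise B A) := by
      funext i
      by_cases h : i ∈ s <;> simp [Finset.piecewise, h]
    have h3 : Matrix.detRowAlternating
          (s.piecewise (fun i => c • (s.piecewise B A) i) (s.piecewise B A))
        = (∏ _i ∈ s, c) • Matrix.detRowAlternating (s.piecewise B A) :=
      (Matrix.detRowAlternating :
        (Fin n → ℂ) [⋀^Fin n]→ₗ[ℂ] ℂ).toMultilinearMap.map_piecewise_smul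
        (fun _ => c) (s.piecewise B A) s
    have h4 : (Matrix.detRowAlternating (s.piecewise B A) : ℂ) = D s := by
      show _ = Matrix.det (Matrix.of fun i j : Fin n => if i ∈ s then B i j else A i j)
      rw [detRA]
      congr 1
      funext i k
      by_cases h : i ∈ s <;> simp [Finset.piecewise, h]
    rw [h2, h3, h4]
    simp [smul_eq_mul]
  -- Step 2: vanishing for non-good sets
  have vanish : ∀ s : Finset (Fin n), ¬ GoodSet s → D s = 0 := by
    intro s hgs
    have hex : ∃ (j : Fin n) (hj : (j : ℕ) + 1 < n),
        j ∈ s ∧ (⟨(j : ℕ) + 1, hj⟩ : Fin n) ∉ s := by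
      by_contra h
      push_neg at h
      exact hgs (good_of_succ (fun j hj hjs => h j hj hjs))
    obtain ⟨j, hj, hjs, hjs'⟩ := hex
    set j' : Fin n := ⟨(j : ℕ) + 1, hj⟩ with hj'
    have hne : j ≠ j' := by
      intro h
      rw [Fin.ext_iff] at h
      simp [hj'] at h
    rw [hD]
    apply Matrix.det_zero_of_row_eq hne
    funext k
    simp only [Matrix.of_apply]
    rw [if_pos hjs, if_neg hjs']
    rw [hB, hA]
    congr 1
    simp only [hj', Fin.val_mk]
    push_cast
    ring
  -- Step 3: restrict sum to good sets
  have step3 : ∑ s : Finset (Fin n), c ^ s.card * D s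
      = ∑ s ∈ Finset.univ.filter (fun s => GoodSet s), c ^ s.card * D s := by
    symm
    apply Finset.sum_subset (Finset.filter_subset _ _)
    intro s _ hs
    simp only [Finset.mem_filter, Finset.mem_univ, true_and] at hs
    rw [vanish s hs, mul_zero]
  -- Step 4: reindex good sets by range (n+1)
  have step4 : ∑ s ∈ Finset.univ.filter (fun s => GoodSet s), c ^ s.card * D s
      = ∑ i ∈ Finset.range (n + 1), c ^ (n - i) * D (tailSet n i) := by
    refine Finset.sum_nbij' (fun s => n - s.card) (fun i => tailSet n i) ?_ ?_ ?_ ?_ ?_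
    · intro s hs
      simp only [Finset.mem_range]
      omega
    · intro i hi
      simp only [Finset.mem_filter, Finset.mem_univ, true_and]
      exact tailSet_good i
    · intro s hs
      simp only [Finset.mem_filter, Finset.mem_univ, true_and] at hs
      exact (good_eq_tail hs).symm
    · intro i hi
      simp only [Finset.mem_range] at hi
      show n - (tailSet n i).card = i
      rw [tailSet_card (n := n) (by omega : i ≤ n)]
      omega
    · intro s hs
      simp only [Finset.mem_filter, Finset.mem_univ, true_and] at hs
      have hcard : s.card ≤ n := by simpa using Finset.card_le_card (Finset.subset_univ s)
      show c ^ s.card * D s = c ^ (n - (n - s.card)) * D (tailSet n (n - s.card))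
      rw [Nat.sub_sub_self hcard, ← good_eq_tail hs]
  -- Step 5: identify D (tailSet n i) with jacobiTrudi
  have step5 : ∀ i, D (tailSet n i)
      = jacobiTrudi p n (fun k => if (k : ℕ) < i then m + 1 else m) := by
    intro i
    rw [jacobiTrudi]
    show Matrix.det (Matrix.of fun k j : Fin n => if k ∈ tailSet n i then B k j else A k j) = _
    congr 1
    funext k j
    simp only [Matrix.of_apply]
    by_cases h : (k : ℕ) < i
    · rw [if_neg (by simp [tailSet]; omega), if_pos h, hA]
      push_cast
      ring_nf
    · rw [if_pos (by simp [tailSet]; omega), if_neg h, hB]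
  rw [key, step3, step4, Finset.mul_sum]
  refine Finset.sum_congr rfl fun i hi => ?_
  simp only [Finset.mem_range] at hi
  rw [step5 i]
  have hcoef : (-x) ^ n * c ^ (n - i) = (-x) ^ i := by
    have h1 : (-x) ^ n = (-x) ^ i * (-x) ^ (n - i) := by
      rw [← pow_add]
      congr 1
      omega
    rw [h1, hc, mul_assoc, ← mul_pow]
    have h2 : -x * -x⁻¹ = 1 := by field_simp
    rw [h2, one_pow, mul_one]
  rw [← mul_assoc, hcoef, mul_comm]
end

section
/- Terminating q-Appell–Lauricella to hypergeometric transformation (Andrews): for |u| < 1 and generic parameters, the generalized q-hypergeometric series satisfies _{l+1}φ_l( a, b_1, ..., b_l ; c_1, ..., c_l ; q, u ) = ( (au;q)_∞/(u;q)_∞ ) · ∏_{k=1}^{l} ( (b_k;q)_∞/(c_k;q)_∞ ) · φ_D^{(l)}( u, c_1/b_1, ..., c_l/b_l, au ; b_1, ..., b_l ), where φ_D^{(l)}(α,β_1,...,β_l,γ;z_1,...,z_l) = ∑_{m_i≥0} ( (α;q)_{|m|} ∏(β_i;q)_{m_i} / ( (γ;q)_{|m|} ∏(q;q)_{m_i}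 ) ) ∏ z_i^{m_i}. -/
open scoped BigOperators

/-- The infinite q-Pochhammer symbol `(z;q)_∞ = ∏_{k≥0} (1 - q^k z)`. -/
noncomputable def qPochInf (q z : ℂ) : ℂ := ∏' k : ℕ, (1 - q ^ k * z)

/-- The q-Appell Lauricella function `φ_D^{(l)}(α,β_1,…,β_l,γ;z_1,…,z_l)`. -/
noncomputable def qAppell (q : ℂ) (l : ℕ) (α γ : ℂ) (β z : Fin l → ℂ) : ℂ :=
  ∑' m : Fin l → ℕ,
    (qPoch q α (∑ i, m i) * ∏ i, qPoch q (β i) (m i)) /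
        (qPoch q γ (∑ i, m i) * ∏ i, qPoch q q (m i)) *
      ∏ i, (z i) ^ (m i)

lemma qPoch_succ (q z : ℂ) (s : ℕ) : qPoch q z (s+1) = qPoch q z s * (1 - q ^ s * z) :=
  Finset.prod_range_succ _ _

lemma qPoch_zero (q z : ℂ) : qPoch q z 0 = 1 := rfl

lemma norm_qPoch_le (q z : ℂ) (hq : ‖q‖ < 1) (s : ℕ) :
    ‖qPoch q z s‖ ≤ Real.exp (‖z‖ / (1 - ‖q‖)) := by
  have hq0 : (0:ℝ) ≤ ‖q‖ := norm_nonneg q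
  have h1q : (0:ℝ) < 1 - ‖q‖ := by linarith
  have h1 : ‖qPoch q z s‖ = ∏ k ∈ Finset.range s, ‖(1 - q ^ k * z)‖ := norm_prod _ _
  have h2 : ∀ k ∈ Finset.range s, ‖(1 - q ^ k * z)‖ ≤ Real.exp (‖q‖ ^ k * ‖z‖) := by
    intro k _
    have : ‖(1 - q ^ k * z)‖ ≤ 1 + ‖q‖ ^ k * ‖z‖ := by
      calc ‖(1 - q ^ k * z)‖ ≤ ‖(1:ℂ)‖ + ‖q ^ k * z‖ := norm_sub_le _ _
      _ = 1 + ‖q‖ ^ k * ‖z‖ := by rw [norm_one, norm_mul, norm_pow]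
    refine this.trans ?_
    have := Real.add_one_le_exp (‖q‖ ^ k * ‖z‖)
    linarith
  have h3 : ∏ k ∈ Finset.range s, ‖(1 - q ^ k * z)‖ ≤
      ∏ k ∈ Finset.range s, Real.exp (‖q‖ ^ k * ‖z‖) :=
    Finset.prod_le_prod (fun k _ => norm_nonneg _) h2
  have h4 : ∏ k ∈ Finset.range s, Real.exp (‖q‖ ^ k * ‖z‖) =
      Real.exp (∑ k ∈ Finset.range s, ‖q‖ ^ k * ‖z‖) := (Real.exp_sum _ _).symm
  have h5 : ∑ k ∈ Finset.range s, ‖q‖ ^ k * ‖z‖ ≤ ‖z‖ / (1 - ‖q‖) := by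
    rw [← Finset.sum_mul]
    have hsum : ∑ k ∈ Finset.range s, ‖q‖ ^ k ≤ (1 - ‖q‖)⁻¹ := by
      have := Summable.sum_le_tsum (Finset.range s) (fun k _ => pow_nonneg hq0 k)
        (summable_geometric_of_lt_one hq0 hq)
      rwa [tsum_geometric_of_lt_one hq0 hq] at this
    calc (∑ k ∈ Finset.range s, ‖q‖ ^ k) * ‖z‖ ≤ (1 - ‖q‖)⁻¹ * ‖z‖ :=
          mul_le_mul_of_nonneg_right hsum (norm_nonneg z)
    _ = ‖z‖ / (1 - ‖q‖) := by rw [div_eq_inv_mul]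
  rw [h1]
  exact h3.trans (h4.le.trans (Real.exp_le_exp.2 h5))

lemma one_sub_sum_le_prod (r : ℕ) (f : ℕ → ℝ) (h0 : ∀ i, 0 ≤ f i) (h1 : ∀ i, f i ≤ 1) :
    1 - ∑ i ∈ Finset.range r, f i ≤ ∏ i ∈ Finset.range r, (1 - f i) := by
  induction r with
  | zero => simp
  | succ r ih =>
    rw [Finset.sum_range_succ, Finset.prod_range_succ]
    have hs : 0 ≤ ∑ i ∈ Finset.range r, f i := Finset.sum_nonneg fun i _ => h0 i
    have h2 : (1 - ∑ i ∈ Finset.range r, f i) * (1 - f r) ≤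
        (∏ i ∈ Finset.range r, (1 - f i)) * (1 - f r) :=
      mul_le_mul_of_nonneg_right ih (by linarith [h1 r])
    nlinarith [mul_nonneg hs (h0 r)]

lemma qPoch_q_lower (q : ℂ) (hq : ‖q‖ < 1) : ∃ δ : ℝ, 0 < δ ∧ ∀ s, δ ≤ ‖qPoch q q s‖ := by
  set t := ‖q‖ with ht
  have ht0 : (0:ℝ) ≤ t := norm_nonneg q
  have h1t : (0:ℝ) < 1 - t := by linarith
  -- lower bound of each norm
  have hfac : ∀ k, (1 : ℝ) - t ^ (k+1) ≤ ‖(1 - q ^ k * q)‖ := by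
    intro k
    have : ‖(1:ℂ)‖ - ‖q ^ k * q‖ ≤ ‖(1 - q ^ k * q)‖ := norm_sub_norm_le _ _
    rw [norm_one, norm_mul, norm_pow] at this
    calc (1:ℝ) - t ^ (k+1) = 1 - t ^ k * t := by rw [pow_succ]
    _ ≤ ‖(1 - q ^ k * q)‖ := this
  have hfacpos : ∀ k : ℕ, (0:ℝ) < 1 - t ^ (k+1) := by
    intro k
    have : t ^ (k+1) ≤ t := by
      calc t ^ (k+1) ≤ t ^ 1 := pow_le_pow_of_le_one ht0 hq.le (by omega)
      _ = t := pow_one t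
    linarith
  set P : ℕ → ℝ := fun s => ∏ k ∈ Finset.range s, (1 - t ^ (k+1)) with hP
  have hPpos : ∀ s, 0 < P s := fun s => Finset.prod_pos fun k _ => hfacpos k
  have hPle : ∀ s, P s ≤ ‖qPoch q q s‖ := by
    intro s
    rw [qPoch, norm_prod]
    exact Finset.prod_le_prod (fun k _ => (hfacpos k).le) (fun k _ => hfac k)
  -- choose N
  obtain ⟨N, hN⟩ : ∃ N : ℕ, t ^ (N + 1) * (1 - t)⁻¹ ≤ 1/2 := by
    have htend : Filter.Tendsto (fun n : ℕ => t ^ (n+1) * (1 - t)⁻¹) Filter.atTop (nhds 0) := by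
      have h := (tendsto_pow_atTop_nhds_zero_of_lt_one ht0 hq).mul_const (1 - t)⁻¹
      rw [zero_mul] at h
      exact h.comp (Filter.tendsto_add_atTop_nat 1)
    have := htend.eventually_le_const (show (0:ℝ) < 1/2 by norm_num)
    exact this.exists
  have hsplit : ∀ a r : ℕ, P (a + r) = P a * ∏ k ∈ Finset.range r, (1 - t ^ (a + k + 1)) := by
    intro a r
    simp only [hP]
    rw [Finset.prod_range_add]
  refine ⟨P N / 2, div_pos (hPpos N) (by norm_num), fun s => ?_⟩
  have key : P N / 2 ≤ P s := by
    rcases le_or_gt s N with hsN | hNs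
    · -- P s ≥ P N
      have : P N ≤ P s := by
        have hNe : N = s + (N - s) := by omega
        rw [hNe, hsplit]
        have h2 : ∏ k ∈ Finset.range (N - s), (1 - t ^ (s + k + 1)) ≤ 1 :=
          Finset.prod_le_one (fun k _ => (hfacpos (s+k)).le)
            (fun k _ => by nlinarith [pow_nonneg ht0 (s + k + 1)])
        nlinarith [hPpos s, (hPpos s).le]
      linarith [hPpos N]
    · -- s > N
      have hs : s = N + (s - N) := by omega
      have hPs : P s = P N * ∏ k ∈ Finset.range (s - N), (1 - t ^ (N + k + 1)) := by
        rw [hs, hsplit]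
        simp
      rw [hPs]
      have hhalf : (1:ℝ)/2 ≤ ∏ k ∈ Finset.range (s - N), (1 - t ^ (N + k + 1)) := by
        have hb : ∑ k ∈ Finset.range (s - N), t ^ (N + k + 1) ≤ 1/2 := by
          have h1 : ∀ k ∈ Finset.range (s - N), t ^ (N + k + 1) = t ^ (N+1) * t ^ k := by
            intro k _; rw [← pow_add]; ring_nf
          rw [Finset.sum_congr rfl h1, ← Finset.mul_sum]
          have hsum : ∑ k ∈ Finset.range (s - N), t ^ k ≤ (1 - t)⁻¹ := by
            have := Summable.sum_le_tsum (Finset.range (s - N)) (fun k _ => pow_nonneg ht0 k)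
              (summable_geometric_of_lt_one ht0 hq)
            rwa [tsum_geometric_of_lt_one ht0 hq] at this
          calc t ^ (N+1) * ∑ k ∈ Finset.range (s - N), t ^ k
              ≤ t ^ (N+1) * (1 - t)⁻¹ := by
                exact mul_le_mul_of_nonneg_left hsum (pow_nonneg ht0 _)
          _ ≤ 1/2 := hN
        have := one_sub_sum_le_prod (s - N) (fun k => t ^ (N + k + 1))
          (fun k => pow_nonneg ht0 _)
          (fun k => by nlinarith [pow_nonneg ht0 (N + k + 1), hfacpos (N + k)])
        linarith
      nlinarith [hPpos N, (hPpos N).le]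
  exact key.trans (hPle s)

lemma multipliable_qfac (q w : ℂ) (hq : ‖q‖ < 1) :
    Multipliable (fun k : ℕ => 1 - q ^ k * w) := by
  by_cases hzero : ∃ k, (1 : ℂ) - q ^ k * w = 0
  · obtain ⟨k, hk⟩ := hzero
    refine ⟨0, ?_⟩
    have hev : ∀ᶠ (s : Finset ℕ) in Filter.atTop, ∏ i ∈ s, (1 - q ^ i * w) = (0:ℂ) := by
      filter_upwards [Filter.eventually_ge_atTop ({k} : Finset ℕ)] with s hs
      exact Finset.prod_eq_zero (hs (Finset.mem_singleton_self k)) hk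
    exact Filter.Tendsto.congr' (Filter.EventuallyEq.symm hev) tendsto_const_nhds
  · push_neg at hzero
    refine Complex.multipliable_of_summable_log ?_
    -- Summable fun n => log (1 - q^n w)
    obtain ⟨N, hN⟩ : ∃ N : ℕ, ∀ n ≥ N, ‖q‖ ^ n * ‖w‖ ≤ 1/2 := by
      have htend : Filter.Tendsto (fun n : ℕ => ‖q‖ ^ n * ‖w‖) Filter.atTop (nhds 0) := by
        have h := (tendsto_pow_atTop_nhds_zero_of_lt_one (norm_nonneg q) hq).mul_const ‖w‖
        rwa [zero_mul] at h
      exact (Filter.eventually_atTop.1 (htend.eventually_le_const (show (0:ℝ) < 1/2 by norm_num)))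
    rw [← summable_nat_add_iff N]
    refine Summable.of_norm_bounded (g := fun n => 3/2 * (‖q‖ ^ N * ‖w‖) * ‖q‖ ^ n) ?_ ?_
    · exact ((summable_geometric_of_lt_one (norm_nonneg q) hq).mul_left _)
    · intro n
      have hnorm : ‖q ^ (n + N) * w‖ = ‖q‖ ^ (n + N) * ‖w‖ := by rw [norm_mul, norm_pow]
      have hle : ‖q ^ (n + N) * w‖ ≤ 1/2 := by
        rw [hnorm]; exact hN (n + N) (by omega)
      have := Complex.norm_log_one_add_half_le_self (z := -(q ^ (n + N) * w))
        (by rwa [norm_neg])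
      rw [← sub_eq_add_neg] at this
      calc ‖Complex.log (1 - q ^ (n+N) * w)‖ ≤ 3/2 * ‖-(q ^ (n+N) * w)‖ := this
      _ = 3/2 * (‖q‖ ^ (n+N) * ‖w‖) := by rw [norm_neg, hnorm]
      _ = 3/2 * (‖q‖ ^ N * ‖w‖) * ‖q‖ ^ n := by rw [pow_add]; ring

lemma qPochInf_split (q z : ℂ) (hq : ‖q‖ < 1) (s : ℕ) :
    qPochInf q z = qPoch q z s * qPochInf q (q ^ s * z) := by
  have hm : Multipliable (fun n : ℕ => 1 - q ^ (n + s) * z) := by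
    have := multipliable_qfac q (q ^ s * z) hq
    refine this.congr fun n => ?_
    show (1:ℂ) - q ^ n * (q ^ s * z) = 1 - q ^ (n + s) * z
    rw [pow_add]; ring
  have := Multipliable.prod_mul_tprod_nat_mul' (f := fun k : ℕ => 1 - q ^ k * z) (k := s) hm
  rw [qPochInf, ← this, qPoch, qPochInf]
  congr 1
  refine tprod_congr fun n => ?_
  show (1:ℂ) - q ^ (n + s) * z = 1 - q ^ n * (q ^ s * z)
  rw [pow_add]; ring

/-! ### The q-binomial theorem -/

noncomputable def qCoef (q aa : ℂ) (n : ℕ) : ℂ := qPoch q aa n / qPoch q q n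

lemma one_sub_ne {w : ℂ} (h : ‖w‖ < 1) : (1 : ℂ) - w ≠ 0 := by
  intro h0
  have hw : w = 1 := (sub_eq_zero.1 h0).symm
  rw [hw] at h; simp at h

lemma qPoch_q_ne_zero {q : ℂ} (hq : ‖q‖ < 1) (n : ℕ) : qPoch q q n ≠ 0 := by
  obtain ⟨δ, hδ, h⟩ := qPoch_q_lower q hq
  intro h0
  have := h n
  rw [h0, norm_zero] at this
  linarith

lemma norm_qCoef_le {q : ℂ} (hq : ‖q‖ < 1) (aa : ℂ) :
    ∃ C : ℝ, 0 < C ∧ ∀ n, ‖qCoef q aa n‖ ≤ C := by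
  obtain ⟨δ, hδ, h⟩ := qPoch_q_lower q hq
  refine ⟨Real.exp (‖aa‖ / (1 - ‖q‖)) / δ, by positivity, fun n => ?_⟩
  rw [qCoef, norm_div]
  have h1 := norm_qPoch_le q aa hq n
  have h2 := h n
  have h3 : (0:ℝ) < ‖qPoch q q n‖ := lt_of_lt_of_le hδ h2
  calc ‖qPoch q aa n‖ / ‖qPoch q q n‖ ≤ Real.exp (‖aa‖ / (1 - ‖q‖)) / ‖qPoch q q n‖ := by
        gcongr
  _ ≤ Real.exp (‖aa‖ / (1 - ‖q‖)) / δ :=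
        div_le_div_of_nonneg_left (Real.exp_pos _).le hδ h2

lemma summable_norm_qCoef {q : ℂ} (hq : ‖q‖ < 1) (aa z : ℂ) (hz : ‖z‖ < 1) :
    Summable (fun n => ‖qCoef q aa n * z ^ n‖) := by
  obtain ⟨C, hC0, hC⟩ := norm_qCoef_le hq aa
  refine Summable.of_nonneg_of_le (fun n => norm_nonneg _) (fun n => ?_)
    (((summable_geometric_of_lt_one (norm_nonneg z) hz)).mul_left C)
  rw [norm_mul, norm_pow]
  exact mul_le_mul_of_nonneg_right (hC n) (by positivity)

lemma summable_qCoef {q : ℂ} (hq : ‖q‖ < 1) (aa z : ℂ) (hz : ‖z‖ < 1) :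
    Summable (fun n => qCoef q aa n * z ^ n) :=
  (summable_norm_qCoef hq aa z hz).of_norm

lemma qCoef_zero (q aa : ℂ) : qCoef q aa 0 = 1 := by
  rw [qCoef, qPoch_zero, qPoch_zero, div_one]

lemma qCoef_rec {q : ℂ} (hq : ‖q‖ < 1) (aa : ℂ) (n : ℕ) :
    qCoef q aa (n+1) * (1 - q ^ (n+1)) = qCoef q aa n * (1 - aa * q ^ n) := by
  have hne : qPoch q q n ≠ 0 := qPoch_q_ne_zero hq n
  have hne2 : (1 : ℂ) - q ^ n * q ≠ 0 := by
    have := qPoch_q_ne_zero hq (n+1)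
    rw [qPoch_succ] at this
    exact right_ne_zero_of_mul this
  have hpow : q ^ n * q = q ^ (n+1) := (pow_succ q n).symm
  rw [qCoef, qCoef, qPoch_succ, qPoch_succ, hpow]
  rw [← hpow]
  field_simp

lemma qbinom_funeq {q : ℂ} (hq : ‖q‖ < 1) (aa : ℂ) {z : ℂ} (hz : ‖z‖ < 1) :
    (1 - z) * ∑' n, qCoef q aa n * z ^ n
      = (1 - aa * z) * ∑' n, qCoef q aa n * (q * z) ^ n := by
  have hqz : ‖q * z‖ < 1 := by
    rw [norm_mul]
    nlinarith [norm_nonneg q, norm_nonneg z]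
  have S1 := (summable_qCoef hq aa z hz).hasSum
  have S2 := (summable_qCoef hq aa (q*z) hqz).hasSum
  set G1 := ∑' n, qCoef q aa n * z ^ n
  set G2 := ∑' n, qCoef q aa n * (q * z) ^ n
  have h1 : HasSum (fun n => qCoef q aa n * z ^ n * (1 - q ^ n)) (G1 - G2) := by
    have e : (fun n => qCoef q aa n * z ^ n * (1 - q ^ n))
        = fun n => qCoef q aa n * z ^ n - qCoef q aa n * (q * z) ^ n := by
      funext n; rw [mul_pow]; ring
    rw [e]; exact S1.sub S2
  have h2 : HasSum (fun n => qCoef q aa n * z ^ (n+1) * (1 - aa * q ^ n))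
      (z * G1 - aa * z * G2) := by
    have e : (fun n => qCoef q aa n * z ^ (n+1) * (1 - aa * q ^ n))
        = fun n => z * (qCoef q aa n * z ^ n) - (aa * z) * (qCoef q aa n * (q * z) ^ n) := by
      funext n; rw [mul_pow, pow_succ]; ring
    rw [e]
    exact (S1.mul_left z).sub (S2.mul_left (aa * z))
  have h3 : HasSum (fun n => qCoef q aa (n+1) * z ^ (n+1) * (1 - q ^ (n+1)))
      (G1 - G2 - ∑ i ∈ Finset.range 1, qCoef q aa i * z ^ i * (1 - q ^ i)) :=
    (hasSum_nat_add_iff' 1).2 h1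
  have h4 : (∑ i ∈ Finset.range 1, qCoef q aa i * z ^ i * (1 - q ^ i)) = 0 := by
    simp
  rw [h4, sub_zero] at h3
  have h5 : (fun n => qCoef q aa (n+1) * z ^ (n+1) * (1 - q ^ (n+1)))
      = fun n => qCoef q aa n * z ^ (n+1) * (1 - aa * q ^ n) := by
    funext n
    have := qCoef_rec hq aa n
    calc qCoef q aa (n+1) * z ^ (n+1) * (1 - q ^ (n+1))
        = qCoef q aa (n+1) * (1 - q ^ (n+1)) * z ^ (n+1) := by ring
    _ = qCoef q aa n * (1 - aa * q ^ n) * z ^ (n+1) := by rw [this]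
    _ = qCoef q aa n * z ^ (n+1) * (1 - aa * q ^ n) := by ring
  rw [h5] at h3
  have heq : G1 - G2 = z * G1 - aa * z * G2 := h3.unique h2
  linear_combination heq

lemma qPoch_shift (q z : ℂ) (N : ℕ) : qPoch q z (N+1) = (1 - z) * qPoch q (q*z) N := by
  rw [qPoch, Finset.prod_range_succ', qPoch]
  have h1 : ∀ k, (1 : ℂ) - q ^ (k+1) * z = 1 - q ^ k * (q * z) := by
    intro k; rw [pow_succ]; ring
  rw [Finset.prod_congr rfl (fun k _ => h1 k)]
  simp [mul_comm]

lemma qbinom_iter {q : ℂ} (hq : ‖q‖ < 1) (aa : ℂ) :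
    ∀ (N : ℕ) (z : ℂ), ‖z‖ < 1 →
      qPoch q z N * ∑' n, qCoef q aa n * z ^ n
        = qPoch q (aa * z) N * ∑' n, qCoef q aa n * (q ^ N * z) ^ n := by
  intro N
  induction N with
  | zero => intro z hz; simp [qPoch_zero]
  | succ N ih =>
    intro z hz
    have hqz : ‖q * z‖ < 1 := by
      rw [norm_mul]; nlinarith [norm_nonneg q, norm_nonneg z]
    calc qPoch q z (N+1) * ∑' n, qCoef q aa n * z ^ n
        = qPoch q (q*z) N * ((1 - z) * ∑' n, qCoef q aa n * z ^ n) := by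
          rw [qPoch_shift]; ring
    _ = qPoch q (q*z) N * ((1 - aa * z) * ∑' n, qCoef q aa n * (q * z) ^ n) := by
          rw [qbinom_funeq hq aa hz]
    _ = (1 - aa * z) * (qPoch q (q*z) N * ∑' n, qCoef q aa n * (q * z) ^ n) := by ring
    _ = (1 - aa * z) * (qPoch q (aa * (q*z)) N * ∑' n, qCoef q aa n * (q ^ N * (q * z)) ^ n) := by
          rw [ih (q*z) hqz]
    _ = qPoch q (aa * z) (N+1) * ∑' n, qCoef q aa n * (q ^ (N+1) * z) ^ n := by
          rw [qPoch_shift q (aa * z) N]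
          have e1 : aa * (q * z) = q * (aa * z) := by ring
          have e2 : q ^ N * (q * z) = q ^ (N+1) * z := by rw [pow_succ]; ring
          rw [e1, e2]; ring

theorem qbinom {q : ℂ} (hq : ‖q‖ < 1) (aa : ℂ) {z : ℂ} (hz : ‖z‖ < 1) :
    (∑' n, qCoef q aa n * z ^ n) * qPochInf q z = qPochInf q (aa * z) := by
  obtain ⟨C, hC0, hC⟩ := norm_qCoef_le hq aa
  have h1z : (0:ℝ) < 1 - ‖z‖ := by linarith
  set G : ℂ → ℂ := fun w => ∑' n, qCoef q aa n * w ^ n with hG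
  have T1 : Filter.Tendsto (fun N => qPoch q z N) Filter.atTop (nhds (qPochInf q z)) :=
    (multipliable_qfac q z hq).hasProd.tendsto_prod_nat
  have T2 : Filter.Tendsto (fun N => qPoch q (aa*z) N) Filter.atTop (nhds (qPochInf q (aa*z))) :=
    (multipliable_qfac q (aa*z) hq).hasProd.tendsto_prod_nat
  -- bound for G near 0
  have hbnd : ∀ N : ℕ, ‖G (q ^ N * z) - 1‖ ≤ (C / (1 - ‖z‖)) * (‖q‖ ^ N * ‖z‖) := by
    intro N
    set w : ℂ := q ^ N * z with hw
    have hwn : ‖w‖ = ‖q‖ ^ N * ‖z‖ := by rw [hw, norm_mul, norm_pow]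
    have hwle : ‖w‖ ≤ ‖z‖ := by
      rw [hwn]
      have : ‖q‖ ^ N ≤ 1 := pow_le_one₀ (norm_nonneg q) hq.le
      nlinarith [norm_nonneg z]
    have hwlt : ‖w‖ < 1 := lt_of_le_of_lt hwle hz
    have hsum := summable_qCoef hq aa w hwlt
    have hzero : G w = qCoef q aa 0 * w ^ 0 + ∑' n, qCoef q aa (n+1) * w ^ (n+1) :=
      Summable.tsum_eq_zero_add hsum
    have hzero' : G w - 1 = ∑' n, qCoef q aa (n+1) * w ^ (n+1) := by
      rw [hzero, qCoef_zero]; simp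
    rw [hzero']
    have hsnorm : Summable (fun n => ‖qCoef q aa (n+1) * w ^ (n+1)‖) :=
      ((summable_nat_add_iff 1).2 (summable_norm_qCoef hq aa w hwlt))
    calc ‖∑' n, qCoef q aa (n+1) * w ^ (n+1)‖
        ≤ ∑' n, ‖qCoef q aa (n+1) * w ^ (n+1)‖ := norm_tsum_le_tsum_norm hsnorm
    _ ≤ ∑' n : ℕ, (C * ‖w‖) * ‖w‖ ^ n := by
        refine Summable.tsum_le_tsum (fun n => ?_) hsnorm
          (((summable_geometric_of_lt_one (norm_nonneg w) hwlt)).mul_left _)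
        rw [norm_mul, norm_pow, pow_succ]
        calc ‖qCoef q aa (n+1)‖ * (‖w‖ ^ n * ‖w‖) ≤ C * (‖w‖ ^ n * ‖w‖) :=
              mul_le_mul_of_nonneg_right (hC (n+1)) (by positivity)
        _ = C * ‖w‖ * ‖w‖ ^ n := by ring
    _ = (C * ‖w‖) * (1 - ‖w‖)⁻¹ := by
        rw [tsum_mul_left, tsum_geometric_of_lt_one (norm_nonneg w) hwlt]
    _ ≤ (C / (1 - ‖z‖)) * (‖q‖ ^ N * ‖z‖) := by
        rw [← hwn]
        have h1w : (0:ℝ) < 1 - ‖w‖ := by linarith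
        have hinv : (1 - ‖w‖)⁻¹ ≤ (1 - ‖z‖)⁻¹ := by
          apply inv_anti₀ h1z
          linarith
        calc C * ‖w‖ * (1 - ‖w‖)⁻¹ ≤ C * ‖w‖ * (1 - ‖z‖)⁻¹ :=
              mul_le_mul_of_nonneg_left hinv (by positivity)
        _ = C / (1 - ‖z‖) * ‖w‖ := by ring
  have T3 : Filter.Tendsto (fun N => G (q ^ N * z)) Filter.atTop (nhds 1) := by
    have htend0 : Filter.Tendsto (fun N : ℕ => (C / (1 - ‖z‖)) * (‖q‖ ^ N * ‖z‖))
        Filter.atTop (nhds 0) := by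
      have h := (tendsto_pow_atTop_nhds_zero_of_lt_one (norm_nonneg q) hq).mul_const ‖z‖
      rw [zero_mul] at h
      have h2 := h.const_mul (C / (1 - ‖z‖))
      rwa [mul_zero] at h2
    have hdiff : Filter.Tendsto (fun N => G (q ^ N * z) - 1) Filter.atTop (nhds 0) :=
      squeeze_zero_norm hbnd htend0
    have := hdiff.add_const 1
    rw [zero_add] at this
    refine this.congr fun N => by ring
  have hiter : ∀ N, qPoch q z N * G z = qPoch q (aa * z) N * G (q ^ N * z) :=
    fun N => qbinom_iter hq aa N z hz
  have L : Filter.Tendsto (fun N => qPoch q z N * G z) Filter.atTop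
      (nhds (qPochInf q z * G z)) := T1.mul_const _
  have R : Filter.Tendsto (fun N => qPoch q z N * G z) Filter.atTop
      (nhds (qPochInf q (aa * z) * 1)) := by
    refine (T2.mul T3).congr fun N => (hiter N).symm
  have := tendsto_nhds_unique L R
  rw [mul_one] at this
  rw [mul_comm]
  exact this

/-! ### Products of sums over `Fin l → ℕ` -/

lemma summable_pi_prod_real : ∀ {n : ℕ} (f : Fin n → ℕ → ℝ), (∀ i, Summable (f i)) →
    (∀ i k, 0 ≤ f i k) → Summable (fun m : Fin n → ℕ => ∏ i, f i (m i)) := by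
  intro n
  induction n with
  | zero =>
    intro f _ _
    exact (hasSum_single (f := fun m : Fin 0 → ℕ => ∏ i, f i (m i)) default
      (fun b hb => absurd (Subsingleton.elim b default) hb)).summable
  | succ n ih =>
    intro f hf h0
    rw [← (Fin.consEquiv (fun _ : Fin (n+1) => ℕ)).summable_iff]
    have key : ∀ p : ℕ × (Fin n → ℕ),
        (∏ i, f i (((Fin.consEquiv (fun _ : Fin (n+1) => ℕ)) p) i))
          = f 0 p.1 * ∏ i : Fin n, f i.succ (p.2 i) := by
      intro p
      have hep : ((Fin.consEquiv (fun _ : Fin (n+1) => ℕ)) p) = Fin.cons p.1 p.2 := rfl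
      rw [hep, Fin.prod_univ_succ, Fin.cons_zero]
      refine congrArg _ (Finset.prod_congr rfl fun i _ => ?_)
      rw [Fin.cons_succ]
    have hs : Summable (fun p : ℕ × (Fin n → ℕ) => f 0 p.1 * ∏ i : Fin n, f i.succ (p.2 i)) := by
      have h2 : Summable (fun m : Fin n → ℕ => ∏ i : Fin n, f i.succ (m i)) :=
        ih (fun i => f i.succ) (fun i => hf i.succ) (fun i k => h0 i.succ k)
      have h3 : 0 ≤ (fun k => f 0 k) := fun k => h0 0 k
      have h4 : 0 ≤ (fun m : Fin n → ℕ => ∏ i : Fin n, f i.succ (m i)) :=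
        fun m => Finset.prod_nonneg fun i _ => h0 i.succ (m i)
      exact Summable.mul_of_nonneg (f := fun k => f 0 k)
        (g := fun m : Fin n → ℕ => ∏ i : Fin n, f i.succ (m i)) (hf 0) h2 h3 h4
    exact hs.congr fun p => (key p).symm

lemma summable_pi_prod_norm {n : ℕ} (f : Fin n → ℕ → ℂ) (h : ∀ i, Summable fun k => ‖f i k‖) :
    Summable (fun m : Fin n → ℕ => ‖∏ i, f i (m i)‖) := by
  have e : (fun m : Fin n → ℕ => ‖∏ i, f i (m i)‖) = fun m => ∏ i, ‖f i (m i)‖ :=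
    funext fun m => norm_prod _ _
  rw [e]
  exact summable_pi_prod_real (fun i k => ‖f i k‖) h (fun i k => norm_nonneg _)

lemma tsum_pi_prod : ∀ {n : ℕ} (f : Fin n → ℕ → ℂ), (∀ i, Summable fun k => ‖f i k‖) →
    ∑' m : Fin n → ℕ, ∏ i, f i (m i) = ∏ i, ∑' k, f i k := by
  intro n
  induction n with
  | zero =>
    intro f _
    rw [tsum_eq_single default (fun b hb => absurd (Subsingleton.elim b default) hb)]
    simp
  | succ n ih =>
    intro f hf
    rw [← ((Fin.consEquiv (fun _ : Fin (n+1) => ℕ)).tsum_eq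
      (fun m : Fin (n+1) → ℕ => ∏ i, f i (m i)))]
    have key : ∀ p : ℕ × (Fin n → ℕ),
        (∏ i, f i (((Fin.consEquiv (fun _ : Fin (n+1) => ℕ)) p) i))
          = f 0 p.1 * ∏ i : Fin n, f i.succ (p.2 i) := by
      intro p
      have hep : ((Fin.consEquiv (fun _ : Fin (n+1) => ℕ)) p) = Fin.cons p.1 p.2 := rfl
      rw [hep, Fin.prod_univ_succ, Fin.cons_zero]
      refine congrArg _ (Finset.prod_congr rfl fun i _ => ?_)
      rw [Fin.cons_succ]
    calc ∑' p : ℕ × (Fin n → ℕ), ∏ i, f i (((Fin.consEquiv (fun _ : Fin (n+1) => ℕ)) p) i)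
        = ∑' p : ℕ × (Fin n → ℕ), f 0 p.1 * ∏ i : Fin n, f i.succ (p.2 i) := tsum_congr key
    _ = (∑' k, f 0 k) * ∑' m : Fin n → ℕ, ∏ i : Fin n, f i.succ (m i) :=
        (tsum_mul_tsum_of_summable_norm (hf 0)
          (summable_pi_prod_norm (fun i => f i.succ) (fun i => hf i.succ))).symm
    _ = ∏ i : Fin (n+1), ∑' k, f i k := by
        rw [ih (fun i => f i.succ) (fun i => hf i.succ), Fin.prod_univ_succ]

/-! ### Corollaries of the q-binomial theorem -/

/-- Inner sum evaluation. -/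
lemma qbinom_inner {q bk ck : ℂ} (hq : ‖q‖ < 1) (hbk : ‖bk‖ < 1) (hbkne : bk ≠ 0)
    (hcinf : qPochInf q ck ≠ 0) (hcs : ∀ s, qPoch q ck s ≠ 0) (s : ℕ) :
    qPochInf q bk / qPochInf q ck * ∑' n, qCoef q (ck / bk) n * (bk * q ^ s) ^ n
      = qPoch q bk s / qPoch q ck s := by
  have hz : ‖bk * q ^ s‖ < 1 := by
    rw [norm_mul, norm_pow]
    have h1 : ‖q‖ ^ s ≤ 1 := pow_le_one₀ (norm_nonneg q) hq.le
    calc ‖bk‖ * ‖q‖ ^ s ≤ ‖bk‖ * 1 := mul_le_mul_of_nonneg_left h1 (norm_nonneg bk)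
    _ = ‖bk‖ := mul_one _
    _ < 1 := hbk
  have hqb := qbinom hq (ck / bk) hz
  have haz : (ck / bk) * (bk * q ^ s) = q ^ s * ck := by
    field_simp
  rw [haz] at hqb
  have hcomm : bk * q ^ s = q ^ s * bk := mul_comm _ _
  rw [hcomm] at hqb
  have hsplitB := qPochInf_split q bk hq s
  have hsplitC := qPochInf_split q ck hq s
  have hCtail : qPochInf q (q ^ s * ck) ≠ 0 := by
    intro h0
    rw [hsplitC, h0, mul_zero] at hcinf
    exact hcinf rfl
  rw [hsplitB, hsplitC]
  calc qPoch q bk s * qPochInf q (q ^ s * bk) / (qPoch q ck s * qPochInf q (q ^ s * ck)) *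
        ∑' n, qCoef q (ck / bk) n * (bk * q ^ s) ^ n
      = qPoch q bk s * ((∑' n, qCoef q (ck / bk) n * (q ^ s * bk) ^ n) * qPochInf q (q ^ s * bk))
          / (qPoch q ck s * qPochInf q (q ^ s * ck)) := by
        rw [hcomm]; ring
  _ = qPoch q bk s * qPochInf q (q ^ s * ck) / (qPoch q ck s * qPochInf q (q ^ s * ck)) := by
        rw [hqb]
  _ = qPoch q bk s / qPoch q ck s := by
        rw [mul_div_mul_right _ _ hCtail]

/-- Outer sum evaluation. -/
lemma qbinom_outer {q u a : ℂ} (hq : ‖q‖ < 1) (hu : ‖u‖ < 1)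
    (huinf : qPochInf q u ≠ 0) (hauM : ∀ M, qPoch q (a * u) M ≠ 0) (M : ℕ) :
    ∑' s, qCoef q a s * (u * q ^ M) ^ s
      = qPochInf q (a * u) / qPochInf q u * (qPoch q u M / qPoch q (a * u) M) := by
  have hz : ‖u * q ^ M‖ < 1 := by
    rw [norm_mul, norm_pow]
    have h1 : ‖q‖ ^ M ≤ 1 := pow_le_one₀ (norm_nonneg q) hq.le
    calc ‖u‖ * ‖q‖ ^ M ≤ ‖u‖ * 1 := mul_le_mul_of_nonneg_left h1 (norm_nonneg u)
    _ = ‖u‖ := mul_one _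
    _ < 1 := hu
  have hqb := qbinom hq a hz
  have haz : a * (u * q ^ M) = q ^ M * (a * u) := by ring
  rw [haz] at hqb
  have hcomm : u * q ^ M = q ^ M * u := mul_comm _ _
  rw [hcomm] at hqb
  have hsplitU := qPochInf_split q u hq M
  have hsplitAU := qPochInf_split q (a * u) hq M
  have hUM : qPoch q u M ≠ 0 := by
    intro h0
    rw [hsplitU, h0, zero_mul] at huinf
    exact huinf rfl
  have hUtail : qPochInf q (q ^ M * u) ≠ 0 := by
    intro h0
    rw [hsplitU, h0, mul_zero] at huinf
    exact huinf rfl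
  have hsum : ∑' s, qCoef q a s * (u * q ^ M) ^ s
      = qPochInf q (q ^ M * (a * u)) / qPochInf q (q ^ M * u) := by
    rw [hcomm, eq_div_iff hUtail]
    exact hqb
  rw [hsum, hsplitU, hsplitAU]
  have h5 : qPoch q (a * u) M ≠ 0 := hauM M
  field_simp [hUM, h5, hUtail]

/-! ### Main theorem -/

/-- Andrews' transformation:
`_{l+1}φ_l(a, b_1,…,b_l; c_1,…,c_l; q, u) = ((au;q)_∞/(u;q)_∞) ∏_k ((b_k;q)_∞/(c_k;q)_∞)
· φ_D^{(l)}(u, c_1/b_1, …, c_l/b_l, au; b_1, …, b_l)`. -/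
theorem stmt16 (l : ℕ) (q u a : ℂ) (b c : Fin l → ℂ)
    (hq0 : 0 < ‖q‖) (hq1 : ‖q‖ < 1) (hu : ‖u‖ < 1)
    (hb : ∀ k, ‖b k‖ < 1) (hbne : ∀ k, b k ≠ 0)
    (hden1 : qPochInf q u ≠ 0) (hden2 : ∀ k, qPochInf q (c k) ≠ 0)
    (hden3 : ∀ k, ∀ s : ℕ, qPoch q (c k) s ≠ 0)
    (hden4 : ∀ M : ℕ, qPoch q (a * u) M ≠ 0) :
    (∑' s : ℕ,
        (qPoch q a s * ∏ k, qPoch q (b k) s) /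
            (qPoch q q s * ∏ k, qPoch q (c k) s) * u ^ s) =
      qPochInf q (a * u) / qPochInf q u *
        (∏ k, qPochInf q (b k) / qPochInf q (c k)) *
        qAppell q l u (a * u) (fun k => c k / b k) b := by
  have hq : ‖q‖ < 1 := hq1
  have hu' : ‖u‖ < 1 := hu
  have hb' : ∀ k, ‖b k‖ < 1 := fun k => hb k
  classical
  set F : ℕ × (Fin l → ℕ) → ℂ := fun p =>
    (qCoef q a p.1 * u ^ p.1) *
      ∏ k, (qCoef q (c k / b k) (p.2 k) * (b k * q ^ p.1) ^ (p.2 k)) with hF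
  have hqpow : ∀ s : ℕ, ‖q‖ ^ s ≤ 1 := fun s => pow_le_one₀ (norm_nonneg q) hq.le
  have hz : ∀ (k : Fin l) (s : ℕ), ‖b k * q ^ s‖ < 1 := by
    intro k s
    rw [norm_mul, norm_pow]
    calc ‖b k‖ * ‖q‖ ^ s ≤ ‖b k‖ * 1 := mul_le_mul_of_nonneg_left (hqpow s) (norm_nonneg _)
    _ = ‖b k‖ := mul_one _
    _ < 1 := hb' k
  -- summability of F
  obtain ⟨Ca, hCa0, hCa⟩ := norm_qCoef_le hq a
  choose Ck hCk0 hCk using fun k : Fin l => norm_qCoef_le hq (c k / b k)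
  have hFbound : ∀ p : ℕ × (Fin l → ℕ), ‖F p‖ ≤
      (Ca * ‖u‖ ^ p.1) * ∏ k, (Ck k * ‖b k‖ ^ (p.2 k)) := by
    intro p
    have hFn : ‖F p‖ = (‖qCoef q a p.1‖ * ‖u‖ ^ p.1) *
        ∏ k, (‖qCoef q (c k / b k) (p.2 k)‖ * ‖b k * q ^ p.1‖ ^ (p.2 k)) := by
      simp only [hF]
      rw [norm_mul, norm_mul, norm_pow, norm_prod]
      congr 1
      exact Finset.prod_congr rfl fun k _ => by rw [norm_mul, norm_pow]
    rw [hFn]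
    have h1 : ‖qCoef q a p.1‖ * ‖u‖ ^ p.1 ≤ Ca * ‖u‖ ^ p.1 :=
      mul_le_mul_of_nonneg_right (hCa p.1) (by positivity)
    have h2 : ∏ k, (‖qCoef q (c k / b k) (p.2 k)‖ * ‖b k * q ^ p.1‖ ^ (p.2 k))
        ≤ ∏ k, (Ck k * ‖b k‖ ^ (p.2 k)) := by
      refine Finset.prod_le_prod (fun k _ => by positivity) (fun k _ => ?_)
      have hbq : ‖b k * q ^ p.1‖ ≤ ‖b k‖ := by
        rw [norm_mul, norm_pow]
        calc ‖b k‖ * ‖q‖ ^ p.1 ≤ ‖b k‖ * 1 :=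
              mul_le_mul_of_nonneg_left (hqpow p.1) (norm_nonneg _)
        _ = ‖b k‖ := mul_one _
      have hpow : ‖b k * q ^ p.1‖ ^ (p.2 k) ≤ ‖b k‖ ^ (p.2 k) :=
        pow_le_pow_left₀ (norm_nonneg _) hbq _
      exact mul_le_mul (hCk k (p.2 k)) hpow (pow_nonneg (norm_nonneg _) _) (hCk0 k).le
    exact mul_le_mul h1 h2
      (Finset.prod_nonneg fun k _ =>
        mul_nonneg (norm_nonneg _) (pow_nonneg (norm_nonneg _) _))
      (mul_nonneg hCa0.le (pow_nonneg (norm_nonneg _) _))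
  have hgsum : Summable (fun p : ℕ × (Fin l → ℕ) =>
      (Ca * ‖u‖ ^ p.1) * ∏ k, (Ck k * ‖b k‖ ^ (p.2 k))) := by
    have hf1 : Summable (fun s : ℕ => Ca * ‖u‖ ^ s) :=
      (summable_geometric_of_lt_one (norm_nonneg u) hu').mul_left Ca
    have hf2 : Summable (fun m : Fin l → ℕ => ∏ k, (Ck k * ‖b k‖ ^ (m k))) :=
      summable_pi_prod_real (fun k n => Ck k * ‖b k‖ ^ n)
        (fun k => (summable_geometric_of_lt_one (norm_nonneg (b k)) (hb' k)).mul_left (Ck k))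
        (fun k n => mul_nonneg (hCk0 k).le (pow_nonneg (norm_nonneg _) _))
    have h3 : 0 ≤ (fun s : ℕ => Ca * ‖u‖ ^ s) :=
      fun s => mul_nonneg hCa0.le (pow_nonneg (norm_nonneg _) _)
    have h4 : 0 ≤ (fun m : Fin l → ℕ => ∏ k, (Ck k * ‖b k‖ ^ (m k))) :=
      fun m => Finset.prod_nonneg fun k _ => mul_nonneg (hCk0 k).le (pow_nonneg (norm_nonneg _) _)
    exact Summable.mul_of_nonneg (f := fun s : ℕ => Ca * ‖u‖ ^ s)
      (g := fun m : Fin l → ℕ => ∏ k, (Ck k * ‖b k‖ ^ (m k))) hf1 hf2 h3 h4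
  have hFsum : Summable F := Summable.of_norm_bounded hgsum hFbound
  -- inner evaluation at fixed s
  have hinner : ∀ s : ℕ, (∑' m : Fin l → ℕ, F (s, m)) =
      (qCoef q a s * u ^ s) * ∏ k, ∑' n, qCoef q (c k / b k) n * (b k * q ^ s) ^ n := by
    intro s
    have hsummk : ∀ k : Fin l, Summable (fun n => ‖qCoef q (c k / b k) n * (b k * q ^ s) ^ n‖) :=
      fun k => summable_norm_qCoef hq _ _ (hz k s)
    calc ∑' m : Fin l → ℕ, F (s, m)
        = ∑' m : Fin l → ℕ, (qCoef q a s * u ^ s) *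
            ∏ k, (qCoef q (c k / b k) (m k) * (b k * q ^ s) ^ (m k)) := rfl
    _ = (qCoef q a s * u ^ s) * ∑' m : Fin l → ℕ,
            ∏ k, (qCoef q (c k / b k) (m k) * (b k * q ^ s) ^ (m k)) := tsum_mul_left
    _ = (qCoef q a s * u ^ s) * ∏ k, ∑' n, qCoef q (c k / b k) n * (b k * q ^ s) ^ n := by
        rw [tsum_pi_prod _ hsummk]
  have claimA : ∀ s : ℕ,
      (qPoch q a s * ∏ k, qPoch q (b k) s) / (qPoch q q s * ∏ k, qPoch q (c k) s) * u ^ s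
        = (∏ k, qPochInf q (b k) / qPochInf q (c k)) * ∑' m : Fin l → ℕ, F (s, m) := by
    intro s
    rw [hinner s]
    have hstep : (∏ k, qPochInf q (b k) / qPochInf q (c k)) *
        ((qCoef q a s * u ^ s) * ∏ k, ∑' n, qCoef q (c k / b k) n * (b k * q ^ s) ^ n)
        = (qCoef q a s * u ^ s) * ∏ k, ((qPochInf q (b k) / qPochInf q (c k)) *
            ∑' n, qCoef q (c k / b k) n * (b k * q ^ s) ^ n) := by
      rw [Finset.prod_mul_distrib]; ring
    rw [hstep]
    have hk : ∀ k : Fin l, (qPochInf q (b k) / qPochInf q (c k)) *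
        ∑' n, qCoef q (c k / b k) n * (b k * q ^ s) ^ n
          = qPoch q (b k) s / qPoch q (c k) s :=
      fun k => qbinom_inner hq (hb' k) (hbne k) (hden2 k) (hden3 k) s
    rw [Finset.prod_congr rfl fun k _ => hk k]
    rw [qCoef]
    simp only [div_eq_mul_inv, mul_inv, Finset.prod_mul_distrib, Finset.prod_inv_distrib]
    ring
  -- Fubini
  have hunc : Summable (Function.uncurry fun (s : ℕ) (m : Fin l → ℕ) => F (s, m)) := by
    exact hFsum.congr fun p => rfl
  have hswap : ∑' (s : ℕ) (m : Fin l → ℕ), F (s, m) = ∑' (m : Fin l → ℕ) (s : ℕ), F (s, m) :=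
    (Summable.tsum_comm hunc).symm
  -- evaluation at fixed m
  have hMeval : ∀ m : Fin l → ℕ, (∑' s : ℕ, F (s, m)) =
      (∏ k, qCoef q (c k / b k) (m k) * b k ^ (m k)) *
        (qPochInf q (a * u) / qPochInf q u *
          (qPoch q u (∑ i, m i) / qPoch q (a * u) (∑ i, m i))) := by
    intro m
    have hterm : ∀ s : ℕ, F (s, m) =
        (∏ k, qCoef q (c k / b k) (m k) * b k ^ (m k)) *
          (qCoef q a s * (u * q ^ (∑ i, m i)) ^ s) := by
      intro s
      have e1 : (∏ k, qCoef q (c k / b k) (m k) * b k ^ (m k)) * (q ^ s) ^ (∑ i, m i)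
          = ∏ k, (qCoef q (c k / b k) (m k) * (b k * q ^ s) ^ (m k)) := by
        rw [← Finset.prod_pow_eq_pow_sum, ← Finset.prod_mul_distrib]
        refine Finset.prod_congr rfl fun k _ => ?_
        rw [mul_pow]; ring
      have e2 : (u * q ^ (∑ i, m i)) ^ s = u ^ s * (q ^ s) ^ (∑ i, m i) := by
        rw [mul_pow, ← pow_mul, ← pow_mul, Nat.mul_comm]
      calc F (s, m) = (qCoef q a s * u ^ s) *
            ∏ k, (qCoef q (c k / b k) (m k) * (b k * q ^ s) ^ (m k)) := rfl
      _ = (qCoef q a s * u ^ s) *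
            ((∏ k, qCoef q (c k / b k) (m k) * b k ^ (m k)) * (q ^ s) ^ (∑ i, m i)) := by
            rw [e1]
      _ = (∏ k, qCoef q (c k / b k) (m k) * b k ^ (m k)) *
            (qCoef q a s * (u * q ^ (∑ i, m i)) ^ s) := by
            rw [e2]; ring
    rw [tsum_congr hterm, tsum_mul_left, qbinom_outer hq hu' hden1 hden4 (∑ i, m i)]
  -- rewrite each m-term into the Appell form
  have hfinal : ∀ m : Fin l → ℕ,
      (∏ k, qCoef q (c k / b k) (m k) * b k ^ (m k)) *
        (qPochInf q (a * u) / qPochInf q u *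
          (qPoch q u (∑ i, m i) / qPoch q (a * u) (∑ i, m i)))
      = (qPochInf q (a * u) / qPochInf q u) *
          ((qPoch q u (∑ i, m i) * ∏ i, qPoch q (c i / b i) (m i)) /
              (qPoch q (a * u) (∑ i, m i) * ∏ i, qPoch q q (m i)) *
            ∏ i, b i ^ (m i)) := by
    intro m
    have h1 : ∀ k : Fin l, qCoef q (c k / b k) (m k) * b k ^ (m k)
        = qPoch q (c k / b k) (m k) / qPoch q q (m k) * b k ^ (m k) := fun k => by rw [qCoef]
    rw [Finset.prod_congr rfl fun k _ => h1 k]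
    simp only [div_eq_mul_inv, mul_inv, Finset.prod_mul_distrib, Finset.prod_inv_distrib]
    ring
  have hqA : qAppell q l u (a * u) (fun k => c k / b k) b
      = ∑' m : Fin l → ℕ,
          (qPoch q u (∑ i, m i) * ∏ i, qPoch q (c i / b i) (m i)) /
              (qPoch q (a * u) (∑ i, m i) * ∏ i, qPoch q q (m i)) *
            ∏ i, b i ^ (m i) := rfl
  calc (∑' s : ℕ,
        (qPoch q a s * ∏ k, qPoch q (b k) s) /
            (qPoch q q s * ∏ k, qPoch q (c k) s) * u ^ s)
      = ∑' s : ℕ, (∏ k, qPochInf q (b k) / qPochInf q (c k)) * ∑' m : Fin l → ℕ, F (s, m) :=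
        tsum_congr claimA
  _ = (∏ k, qPochInf q (b k) / qPochInf q (c k)) * ∑' (s : ℕ) (m : Fin l → ℕ), F (s, m) :=
        tsum_mul_left
  _ = (∏ k, qPochInf q (b k) / qPochInf q (c k)) * ∑' (m : Fin l → ℕ) (s : ℕ), F (s, m) := by
        rw [hswap]
  _ = (∏ k, qPochInf q (b k) / qPochInf q (c k)) *
        ∑' m : Fin l → ℕ, (qPochInf q (a * u) / qPochInf q u) *
          ((qPoch q u (∑ i, m i) * ∏ i, qPoch q (c i / b i) (m i)) /
              (qPoch q (a * u) (∑ i, m i) * ∏ i, qPoch q q (m i)) *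
            ∏ i, b i ^ (m i)) := by
        rw [tsum_congr fun m => (hMeval m).trans (hfinal m)]
  _ = (∏ k, qPochInf q (b k) / qPochInf q (c k)) *
        ((qPochInf q (a * u) / qPochInf q u) * qAppell q l u (a * u) (fun k => c k / b k) b) := by
        rw [tsum_mul_left, hqA]
  _ = qPochInf q (a * u) / qPochInf q u *
        (∏ k, qPochInf q (b k) / qPochInf q (c k)) *
        qAppell q l u (a * u) (fun k => c k / b k) b := by ring
end

section
/- Given the Casorati determinant factorizations D_1(x) = w_0 ψ(x) x^{m+n+1} F(f,x)/A(x), D_2(x) = w_1 ψ(x) x^{m+n+1}/(1−a_1 x), D_3(x) = w_1 ψ(x) x^{m+n+1} (1−b_1 x) G(g,x)/A(x), where A(x)=∏_{i=1}^{N+1}(1−a_i x), the first relation is equivalent to the statement: the expression B(x)P(x)Q(qx) − A(x)P(qx)Q(x), where B(x)=∏_{i=1}^{N+1}(1−b_i x), P, Q are polynomials of degrees m, n with ψ(x)Q(x) − P(x) = O(x^{m+n+1}), is a polynomial of degree at most m+n+N+1 divisible by x^{m+n+1}; i.e., B(x)P(x)Q(qx) − A(x)P(qx)Q(x) = x^{m+n+1}·(polynomial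 of degree ≤ N). -/
open scoped BigOperators

open Polynomial PowerSeries

lemma coe_comp_C_mul_X (q : ℂ) (Q : Polynomial ℂ) :
    ((Q.comp (Polynomial.C q * Polynomial.X) : Polynomial ℂ) : PowerSeries ℂ) =
      PowerSeries.rescale q (Q : PowerSeries ℂ) := by
  have : (Polynomial.coeToPowerSeries.ringHom.comp
        (Polynomial.compRingHom (Polynomial.C q * Polynomial.X)) :
        Polynomial ℂ →+* PowerSeries ℂ)
      = (PowerSeries.rescale q).comp Polynomial.coeToPowerSeries.ringHom := by
    apply Polynomial.ringHom_ext
    · intro c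
      simp only [Polynomial.coe_compRingHom_apply, RingHom.coe_comp, Function.comp_apply,
        Polynomial.C_comp, Polynomial.coe_C]
      ext d
      simp [PowerSeries.coeff_rescale, PowerSeries.coeff_C]
      split <;> simp_all
    · simp [Polynomial.coe_compRingHom_apply, PowerSeries.rescale_X]
  have h2 := congrArg (fun f => f Q) (congrArg DFunLike.coe this)
  simpa [Polynomial.coe_compRingHom_apply] using h2

lemma mul_coeff_zero {M : ℕ} (f g : PowerSeries ℂ)
    (hg : ∀ d ≤ M, PowerSeries.coeff d g = 0) :
    ∀ d ≤ M, PowerSeries.coeff d (f * g) = 0 := by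
  intro d hd
  rw [PowerSeries.coeff_mul]
  apply Finset.sum_eq_zero
  intro p hp
  replace hp := Finset.HasAntidiagonal.mem_antidiagonal.mp hp
  rw [hg p.2 (by omega), mul_zero]

/-- Given the Padé condition `ψ(x)Q(x) - P(x) = O(x^{m+n+1})` and the functional
equation `ψ(qx) A(x) = ψ(x) B(x)` with `A(x) = ∏(1-a_i x)`, `B(x) = ∏(1-b_i x)`,
the Casoratian `B(x)P(x)Q(qx) - A(x)P(qx)Q(x)` equals `x^{m+n+1}` times a
polynomial of degree at most `N`. -/
theorem stmt17 (N m n : ℕ) (q : ℂ) (a b : Fin (N + 1) → ℂ)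
    (P Q : Polynomial ℂ) (hP : P.degree ≤ m) (hQ : Q.degree ≤ n)
    (ψ : PowerSeries ℂ)
    (hfunc : (PowerSeries.rescale q ψ) *
        ((∏ i, (1 - Polynomial.C (a i) * Polynomial.X) : Polynomial ℂ) : PowerSeries ℂ) =
      ψ * ((∏ i, (1 - Polynomial.C (b i) * Polynomial.X) : Polynomial ℂ) : PowerSeries ℂ))
    (hpade : ∀ d : ℕ, d ≤ m + n →
      PowerSeries.coeff d (ψ * (Q : PowerSeries ℂ)) =
        PowerSeries.coeff d (P : PowerSeries ℂ)) :
    ∃ R : Polynomial ℂ, R.degree ≤ N ∧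
      (∏ i, (1 - Polynomial.C (b i) * Polynomial.X)) * P *
            (Q.comp (Polynomial.C q * Polynomial.X)) -
          (∏ i, (1 - Polynomial.C (a i) * Polynomial.X)) *
            (P.comp (Polynomial.C q * Polynomial.X)) * Q =
        Polynomial.X ^ (m + n + 1) * R := by
  set A : Polynomial ℂ := ∏ i, (1 - Polynomial.C (a i) * Polynomial.X) with hA
  set B : Polynomial ℂ := ∏ i, (1 - Polynomial.C (b i) * Polynomial.X) with hB
  set D : Polynomial ℂ :=
    B * P * (Q.comp (Polynomial.C q * Polynomial.X)) -
      A * (P.comp (Polynomial.C q * Polynomial.X)) * Q with hD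
  -- Padé remainder
  have h1 : ∀ d ≤ m + n,
      PowerSeries.coeff d (ψ * (Q : PowerSeries ℂ) - (P : PowerSeries ℂ)) = 0 := by
    intro d hd
    rw [map_sub, hpade d hd, sub_self]
  have h2 : ∀ d ≤ m + n,
      PowerSeries.coeff d
        (PowerSeries.rescale q ψ * PowerSeries.rescale q (Q : PowerSeries ℂ) -
          PowerSeries.rescale q (P : PowerSeries ℂ)) = 0 := by
    intro d hd
    have : PowerSeries.rescale q ψ * PowerSeries.rescale q (Q : PowerSeries ℂ) -
          PowerSeries.rescale q (P : PowerSeries ℂ)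
        = PowerSeries.rescale q (ψ * (Q : PowerSeries ℂ) - (P : PowerSeries ℂ)) := by
      rw [map_sub, map_mul]
    rw [this, PowerSeries.coeff_rescale, h1 d hd, mul_zero]
  -- key power series identity
  have hDps : ((D : Polynomial ℂ) : PowerSeries ℂ)
      = ((B : PowerSeries ℂ) * PowerSeries.rescale q (Q : PowerSeries ℂ)) *
          ((P : PowerSeries ℂ) - ψ * (Q : PowerSeries ℂ)) +
        ((A : PowerSeries ℂ) * (Q : PowerSeries ℂ)) *
          (PowerSeries.rescale q ψ * PowerSeries.rescale q (Q : PowerSeries ℂ) -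
            PowerSeries.rescale q (P : PowerSeries ℂ)) := by
    rw [hD]
    push_cast [Polynomial.coe_sub, Polynomial.coe_mul, coe_comp_C_mul_X]
    linear_combination (-( (Q : PowerSeries ℂ) * PowerSeries.rescale q (Q : PowerSeries ℂ))) * hfunc
  -- low coefficients of D vanish
  have hcoeff : ∀ d < m + n + 1, D.coeff d = 0 := by
    intro d hd
    have hd' : d ≤ m + n := by omega
    have := congrArg (PowerSeries.coeff d) hDps
    rw [Polynomial.coeff_coe, map_add] at this
    rw [this,
      mul_coeff_zero _ _ (fun e he => by
        have := h1 e he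
        simp only [map_sub] at this ⊢
        linear_combination -this) d hd',
      mul_coeff_zero _ _ h2 d hd', add_zero]
  obtain ⟨R, hR⟩ : Polynomial.X ^ (m + n + 1) ∣ D := Polynomial.X_pow_dvd_iff.mpr hcoeff
  refine ⟨R, ?_, hR⟩
  -- degree bounds
  have hone : (Polynomial.C q * Polynomial.X : Polynomial ℂ).natDegree ≤ 1 :=
    (Polynomial.natDegree_mul_le).trans (by simp)
  have hfac : ∀ c : ℂ, (1 - Polynomial.C c * Polynomial.X : Polynomial ℂ).natDegree ≤ 1 := by
    intro c
    refine (Polynomial.natDegree_sub_le _ _).trans ?_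
    simp only [Polynomial.natDegree_one]
    exact max_le (by norm_num) ((Polynomial.natDegree_mul_le).trans (by simp))
  have hBdeg : B.natDegree ≤ N + 1 := by
    refine (Polynomial.natDegree_prod_le _ _).trans ?_
    have h := Finset.sum_le_sum (s := (Finset.univ : Finset (Fin (N+1))))
      (g := fun _ => 1) (fun i _ => hfac (b i))
    simpa using h
  have hAdeg : A.natDegree ≤ N + 1 := by
    refine (Polynomial.natDegree_prod_le _ _).trans ?_
    have h := Finset.sum_le_sum (s := (Finset.univ : Finset (Fin (N+1))))
      (g := fun _ => 1) (fun i _ => hfac (a i))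
    simpa using h
  have hPn : P.natDegree ≤ m := Polynomial.natDegree_le_of_degree_le hP
  have hQn : Q.natDegree ≤ n := Polynomial.natDegree_le_of_degree_le hQ
  have hQc : (Q.comp (Polynomial.C q * Polynomial.X)).natDegree ≤ n :=
    (Polynomial.natDegree_comp_le).trans
      (by calc Q.natDegree * (Polynomial.C q * Polynomial.X).natDegree
            ≤ n * 1 := Nat.mul_le_mul hQn hone
          _ = n := by ring)
  have hPc : (P.comp (Polynomial.C q * Polynomial.X)).natDegree ≤ m :=
    (Polynomial.natDegree_comp_le).trans
      (by calc P.natDegree * (Polynomial.C q * Polynomial.X).natDegree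
            ≤ m * 1 := Nat.mul_le_mul hPn hone
          _ = m := by ring)
  have hDdeg : D.natDegree ≤ m + n + 1 + N := by
    refine (Polynomial.natDegree_sub_le _ _).trans (max_le ?_ ?_)
    · refine (Polynomial.natDegree_mul_le).trans ?_
      have := Polynomial.natDegree_mul_le (p := B) (q := P)
      omega
    · refine (Polynomial.natDegree_mul_le).trans ?_
      have := Polynomial.natDegree_mul_le (p := A)
        (q := P.comp (Polynomial.C q * Polynomial.X))
      omega
  rcases eq_or_ne R 0 with h0 | h0
  · simp [h0]
  · refine Polynomial.degree_le_of_natDegree_le ?_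
    have hX : (Polynomial.X : Polynomial ℂ) ^ (m + n + 1) ≠ 0 := by
      exact pow_ne_zero _ Polynomial.X_ne_zero
    have : D.natDegree = (m + n + 1) + R.natDegree := by
      rw [hR, Polynomial.natDegree_mul hX h0, Polynomial.natDegree_X_pow]
    omega
end

section
/- Let x_s = q^s for s = 0,...,m+n and let ψ_s be given values. Then the Jacobi interpolation determinant formulas specialize to: P(x) = F(x)/(q;q)_{m+n}^{n+1} · det[ ∑_{s=0}^{m+n} ψ_s ( (q^{-(m+n)};q)_s/(q;q)_s ) q^{s(i+j+1)}/(x − q^s) ]_{i,j=0}^{n} and Q(x) = 1/(q;q)_{m+n}^{n} · det[ ∑_{s=0}^{m+n} ψ_s ( (q^{-(m+n)};q)_s/(q;q)_s ) q^{s(i+j+1)} (x − q^s) ]_{i,j=0}^{n-1}, where F(x) = ∏_{i=0}^{m+n}(x − q^i). These satisfy P(q^s)/Q(q^s) = ψ_s whenever Q(q^s) ≠ 0. -/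
open scoped BigOperators

namespace Stmt18

variable {N n : ℕ}

noncomputable def mu (x u : Fin (N+1) → ℂ) (k : ℕ) : ℂ := ∑ s, u s * x s ^ k

noncomputable def Mat (x u : Fin (N+1) → ℂ) (n : ℕ) (v : Fin (n+1) → ℂ) :
    Matrix (Fin (n+1)) (Fin (n+1)) ℂ :=
  Matrix.of fun i j => if j = 0 then v i else mu x u ((i:ℕ) + (j:ℕ) - 1)

noncomputable def Dcof (x u : Fin (N+1) → ℂ) (n : ℕ) (i : Fin (n+1)) : ℂ :=
  (-1)^(i:ℕ) * Matrix.det ((Mat x u n 0).submatrix i.succAbove Fin.succ)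

noncomputable def g (x u : Fin (N+1) → ℂ) (i : ℕ) : Polynomial ℂ :=
  ∑ s, Polynomial.C (u s * x s ^ i) *
    ∏ k ∈ Finset.univ.erase s, (Polynomial.X - Polynomial.C (x k))

noncomputable def pJac (x u : Fin (N+1) → ℂ) (n : ℕ) : Polynomial ℂ :=
  ∑ i : Fin (n+1), Polynomial.C ((-1)^n * Dcof x u n i) * g x u (i:ℕ)

lemma Mat_submatrix (x u : Fin (N+1) → ℂ) (n : ℕ) (v : Fin (n+1) → ℂ) (i : Fin (n+1)) :
    (Mat x u n v).submatrix i.succAbove Fin.succ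
      = (Mat x u n 0).submatrix i.succAbove Fin.succ := by
  ext a b
  simp [Mat, Fin.succ_ne_zero]

lemma det_Mat (x u : Fin (N+1) → ℂ) (n : ℕ) (v : Fin (n+1) → ℂ) :
    (Mat x u n v).det = ∑ i, Dcof x u n i * v i := by
  rw [Matrix.det_succ_column_zero]
  refine Finset.sum_congr rfl fun i _ => ?_
  rw [Mat_submatrix]
  simp only [Dcof, Mat, Matrix.of_apply, if_true]
  ring

end Stmt18

namespace Stmt18

noncomputable def hv (x u : Fin (N+1) → ℂ) (x₀ : ℂ) (k : ℕ) : ℂ :=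
  ∑ s, u s * x s ^ k / (x₀ - x s)

lemma hv_rec (x u : Fin (N+1) → ℂ) (x₀ : ℂ) (hx : ∀ s, x₀ ≠ x s) (k : ℕ) :
    x₀ * hv x u x₀ k - hv x u x₀ (k+1) = mu x u k := by
  rw [hv, hv, mu, Finset.mul_sum, ← Finset.sum_sub_distrib]
  refine Finset.sum_congr rfl fun s _ => ?_
  have hd : x₀ - x s ≠ 0 := sub_ne_zero.mpr (hx s)
  field_simp
  ring

noncomputable def Ecol (n : ℕ) (x₀ : ℂ) : Matrix (Fin (n+1)) (Fin (n+1)) ℂ :=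
  Matrix.of fun k j => if j = 0 then (if k = 0 then 1 else 0)
    else (x₀ * (if (k:ℕ)+1 = (j:ℕ) then 1 else 0) - (if k = j then 1 else 0))

lemma det_Ecol (n : ℕ) (x₀ : ℂ) : (Ecol n x₀).det = (-1)^n := by
  have ht : (Ecol n x₀).BlockTriangular id := by
    intro i j hij
    have hji : (j:ℕ) < (i:ℕ) := hij
    simp only [Ecol, Matrix.of_apply]
    have h1 : ¬ (i = 0) := by
      intro h; subst h; exact absurd hji (by simp)
    have h2 : ¬ ((i:ℕ)+1 = (j:ℕ)) := by omega
    have h3 : ¬ (i = j) := by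
      intro h; subst h; exact lt_irrefl _ hji
    by_cases hj : j = 0 <;> simp [hj, h1, h2, h3]
  rw [Matrix.det_of_upperTriangular ht]
  have hdiag : ∀ i : Fin (n+1), Ecol n x₀ i i = if i = 0 then 1 else -1 := by
    intro i
    by_cases hi : i = 0
    · simp [Ecol, hi]
    · have : ¬ ((i:ℕ)+1 = (i:ℕ)) := by omega
      simp [Ecol, hi, this]
  calc ∏ i : Fin (n+1), Ecol n x₀ i i = ∏ i : Fin (n+1), (if i = 0 then 1 else -1) :=
        Finset.prod_congr rfl fun i _ => hdiag i
    _ = (-1)^n := by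
        rw [Fin.prod_univ_succ]
        simp [Fin.succ_ne_zero]

end Stmt18

namespace Stmt18

noncomputable def Hmat (x u : Fin (N+1) → ℂ) (n : ℕ) (x₀ : ℂ) :
    Matrix (Fin (n+1)) (Fin (n+1)) ℂ :=
  Matrix.of fun i j => ∑ s, u s * x s ^ ((i:ℕ)+(j:ℕ)) / (x₀ - x s)

lemma Hmat_apply (x u : Fin (N+1) → ℂ) (n : ℕ) (x₀ : ℂ) (i j : Fin (n+1)) :
    Hmat x u n x₀ i j = hv x u x₀ ((i:ℕ)+(j:ℕ)) := rfl

lemma HE (x u : Fin (N+1) → ℂ) (n : ℕ) (x₀ : ℂ) (hx : ∀ s, x₀ ≠ x s) :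
    Hmat x u n x₀ * Ecol n x₀ = Mat x u n (fun i => hv x u x₀ (i:ℕ)) := by
  ext i j
  rw [Matrix.mul_apply]
  induction j using Fin.cases with
  | zero =>
      have hk : ∀ k : Fin (n+1), Hmat x u n x₀ i k * Ecol n x₀ k 0
          = if k = 0 then Hmat x u n x₀ i k else 0 := by
        intro k
        simp only [Ecol, Matrix.of_apply, if_pos rfl]
        by_cases h : k = 0 <;> simp [h]
      rw [Finset.sum_congr rfl (fun k _ => hk k),
        Finset.sum_ite_eq' Finset.univ (0 : Fin (n+1))]
      simp [Mat, Hmat_apply]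
  | succ j' =>
      have hk : ∀ k : Fin (n+1), Hmat x u n x₀ i k * Ecol n x₀ k (Fin.succ j')
          = x₀ * (if k = Fin.castSucc j' then Hmat x u n x₀ i k else 0)
            - (if k = Fin.succ j' then Hmat x u n x₀ i k else 0) := by
        intro k
        have hcond : ((k:ℕ)+1 = ((Fin.succ j' : Fin (n+1)) : ℕ)) = (k = Fin.castSucc j') := by
          apply propext; rw [Fin.ext_iff]
          simp only [Fin.val_succ, Fin.coe_castSucc]; omega
        have hne : (Fin.castSucc j' : Fin (n+1)) ≠ Fin.succ j' := by
          intro h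
          have := congrArg Fin.val h
          simp at this
        simp only [Ecol, Matrix.of_apply, if_neg (Fin.succ_ne_zero j'), hcond]
        by_cases h1 : k = Fin.castSucc j' <;> by_cases h2 : k = Fin.succ j'
        · exfalso
          have e1 : (k:ℕ) = (j':ℕ) := by rw [h1]; simp
          have e2 : (k:ℕ) = (j':ℕ)+1 := by rw [h2]; simp
          omega
        · simp [h1, h2, hne]; ring
        · simp [h1, h2, Ne.symm hne]
          try ring
        · simp [h1, h2]
      rw [Finset.sum_congr rfl (fun k _ => hk k), Finset.sum_sub_distrib,
        ← Finset.mul_sum,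
        Finset.sum_ite_eq' Finset.univ (Fin.castSucc j'),
        Finset.sum_ite_eq' Finset.univ (Fin.succ j')]
      simp only [Finset.mem_univ, if_true, Hmat_apply, Fin.coe_castSucc, Fin.val_succ]
      have : (i:ℕ) + ((j':ℕ)+1) = ((i:ℕ) + (j':ℕ)) + 1 := by omega
      rw [this, hv_rec x u x₀ hx]
      simp [Mat, Fin.succ_ne_zero]

end Stmt18

namespace Stmt18

lemma gEval (x u : Fin (N+1) → ℂ) (i : ℕ) (x₀ : ℂ) :
    (g x u i).eval x₀ = ∑ s, u s * x s ^ i * ∏ k ∈ Finset.univ.erase s, (x₀ - x k) := by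
  simp [g, Polynomial.eval_finset_sum, Polynomial.eval_prod]

lemma Fx_hv (x u : Fin (N+1) → ℂ) (x₀ : ℂ) (hx : ∀ s, x₀ ≠ x s) (i : ℕ) :
    (∏ k, (x₀ - x k)) * hv x u x₀ i = (g x u i).eval x₀ := by
  rw [gEval, hv, Finset.mul_sum]
  refine Finset.sum_congr rfl fun s _ => ?_
  have hd : x₀ - x s ≠ 0 := sub_ne_zero.mpr (hx s)
  rw [← Finset.mul_prod_erase Finset.univ _ (Finset.mem_univ s)]
  field_simp

lemma pJac_eval_offgrid (x u : Fin (N+1) → ℂ) (n : ℕ) (x₀ : ℂ) (hx : ∀ s, x₀ ≠ x s) :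
    (pJac x u n).eval x₀ = (∏ k, (x₀ - x k)) * (Hmat x u n x₀).det := by
  have h1 : (Mat x u n (fun i => hv x u x₀ (i:ℕ))).det = (Hmat x u n x₀).det * (-1)^n := by
    rw [← HE x u n x₀ hx, Matrix.det_mul, det_Ecol]
  have h2 : ∑ i : Fin (n+1), Dcof x u n i * hv x u x₀ (i:ℕ)
      = (Hmat x u n x₀).det * (-1)^n := by
    rw [← det_Mat, h1]
  have h3 : (pJac x u n).eval x₀
      = (-1)^n * ∑ i : Fin (n+1), Dcof x u n i * ((∏ k, (x₀ - x k)) * hv x u x₀ (i:ℕ)) := by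
    rw [pJac, Polynomial.eval_finset_sum, Finset.mul_sum]
    refine Finset.sum_congr rfl fun i _ => ?_
    rw [Polynomial.eval_mul, Polynomial.eval_C, Fx_hv x u x₀ hx]
    ring
  rw [h3]
  have h4 : ∑ i : Fin (n+1), Dcof x u n i * ((∏ k, (x₀ - x k)) * hv x u x₀ (i:ℕ))
      = (∏ k, (x₀ - x k)) * ∑ i : Fin (n+1), Dcof x u n i * hv x u x₀ (i:ℕ) := by
    rw [Finset.mul_sum]; refine Finset.sum_congr rfl fun i _ => by ring
  rw [h4, h2]
  have : ((-1:ℂ)^n) * ((-1:ℂ)^n) = 1 := by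
    rw [← pow_add]
    exact Even.neg_one_pow (Even.add_self n)
  calc (-1:ℂ)^n * ((∏ k, (x₀ - x k)) * ((Hmat x u n x₀).det * (-1)^n))
      = ((-1:ℂ)^n * (-1:ℂ)^n) * ((∏ k, (x₀ - x k)) * (Hmat x u n x₀).det) := by ring
    _ = (∏ k, (x₀ - x k)) * (Hmat x u n x₀).det := by rw [this, one_mul]

end Stmt18

namespace Stmt18

lemma g_eval_grid (x u : Fin (N+1) → ℂ) (i : ℕ) (t : Fin (N+1)) :
    (g x u i).eval (x t) = u t * x t ^ i * ∏ k ∈ Finset.univ.erase t, (x t - x k) := by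
  rw [gEval]
  refine Finset.sum_eq_single t (fun s _ hs => ?_) (fun h => absurd (Finset.mem_univ t) h)
  have ht : t ∈ Finset.univ.erase s := Finset.mem_erase.mpr ⟨Ne.symm hs, Finset.mem_univ t⟩
  rw [Finset.prod_eq_zero ht (sub_self (x t)), mul_zero]

noncomputable def Lmat (n : ℕ) (c : ℂ) : Matrix (Fin (n+1)) (Fin (n+1)) ℂ :=
  Matrix.of fun i k => if (i:ℕ) < n then
      (c * (if k = i then 1 else 0) - (if (k:ℕ) = (i:ℕ)+1 then 1 else 0))
    else (if k = i then 1 else 0)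

lemma det_Lmat (n : ℕ) (c : ℂ) : (Lmat n c).det = c^n := by
  have ht : (Lmat n c).BlockTriangular id := by
    intro i k hki
    have h : (k:ℕ) < (i:ℕ) := hki
    have h1 : ¬ (k = i) := fun he => absurd (congrArg Fin.val he) (by omega)
    have h2 : ¬ ((k:ℕ) = (i:ℕ)+1) := by omega
    by_cases hi : (i:ℕ) < n <;> simp [Lmat, hi, h1, h2]
  rw [Matrix.det_of_upperTriangular ht]
  have hdiag : ∀ i : Fin (n+1), Lmat n c i i = if (i:ℕ) < n then c else 1 := by
    intro i
    have h2 : ¬ ((i:ℕ) = (i:ℕ)+1) := by omega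
    by_cases hi : (i:ℕ) < n <;> simp [Lmat, hi, h2]
  rw [Finset.prod_congr rfl fun i _ => hdiag i, Fin.prod_univ_castSucc]
  have h1 : ∀ i : Fin n, ((Fin.castSucc i : Fin (n+1)) : ℕ) < n := fun i => by simp
  have h2 : ¬ (((Fin.last n : Fin (n+1)) : ℕ) < n) := by simp
  rw [if_neg h2, mul_one, Finset.prod_congr rfl fun i _ => if_pos (h1 i)]
  simp

noncomputable def Mpp (x u : Fin (N+1) → ℂ) (n : ℕ) (c : ℂ) :
    Matrix (Fin (n+1)) (Fin (n+1)) ℂ :=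
  Matrix.of fun i j => if (i:ℕ) < n then
      (if j = 0 then 0 else c * mu x u ((i:ℕ)+(j:ℕ)-1) - mu x u ((i:ℕ)+(j:ℕ)))
    else (if j = 0 then c^n else mu x u ((i:ℕ)+(j:ℕ)-1))

lemma LM (x u : Fin (N+1) → ℂ) (n : ℕ) (c : ℂ) :
    Lmat n c * Mat x u n (fun i => c^(i:ℕ)) = Mpp x u n c := by
  ext i j
  rw [Matrix.mul_apply]
  by_cases hi : (i:ℕ) < n
  · have isucc : Fin (n+1) := ⟨(i:ℕ)+1, by omega⟩
    set i' : Fin (n+1) := ⟨(i:ℕ)+1, by omega⟩ with hi'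
    have hk : ∀ k : Fin (n+1), Lmat n c i k * Mat x u n (fun a => c^(a:ℕ)) k j
        = c * (if k = i then Mat x u n (fun a => c^(a:ℕ)) k j else 0)
          - (if k = i' then Mat x u n (fun a => c^(a:ℕ)) k j else 0) := by
      intro k
      have hcond : ((k:ℕ) = (i:ℕ)+1) = (k = i') := by
        apply propext
        constructor
        · intro h; exact Fin.ext (by simp [hi', h])
        · intro h; rw [h]
      have hne : i ≠ i' := fun he => absurd (congrArg Fin.val he) (by simp [hi'])
      simp only [Lmat, Matrix.of_apply, if_pos hi, hcond]
      by_cases h1 : k = i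
      · subst h1
        simp only [if_pos rfl, if_true, if_neg hne, mul_one, sub_zero]
        try ring
      · by_cases h2 : k = i'
        · subst h2
          simp only [if_pos rfl, if_true, if_neg h1, mul_zero, zero_sub]
          ring
        · simp only [if_neg h1, if_neg h2, mul_zero, sub_zero]
          ring
    rw [Finset.sum_congr rfl (fun k _ => hk k), Finset.sum_sub_distrib, ← Finset.mul_sum,
      Finset.sum_ite_eq' Finset.univ i, Finset.sum_ite_eq' Finset.univ i']
    simp only [Finset.mem_univ, if_true]
    induction j using Fin.cases with
    | zero =>
        simp [Mat, Mpp, hi, pow_succ]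
        ring
    | succ j' =>
        have hj0 : (Fin.succ j' : Fin (n+1)) ≠ 0 := Fin.succ_ne_zero j'
        simp only [Mat, Matrix.of_apply, if_neg hj0, Mpp, if_pos hi]
        have e1 : (i':ℕ) + ((Fin.succ j' : Fin (n+1)):ℕ) - 1
            = (i:ℕ) + ((Fin.succ j' : Fin (n+1)):ℕ) := by
          simp [hi', Fin.val_succ]; omega
        rw [e1]
  · have hk : ∀ k : Fin (n+1), Lmat n c i k * Mat x u n (fun a => c^(a:ℕ)) k j
        = if k = i then Mat x u n (fun a => c^(a:ℕ)) k j else 0 := by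
      intro k
      simp only [Lmat, Matrix.of_apply, if_neg hi]
      by_cases h1 : k = i <;> simp [h1]
    rw [Finset.sum_congr rfl (fun k _ => hk k), Finset.sum_ite_eq' Finset.univ i]
    have hn : (i:ℕ) = n := by omega
    simp only [Finset.mem_univ, if_true, Mat, Matrix.of_apply, Mpp, if_neg hi, hn]
    rw [if_neg (lt_irrefl n)]

end Stmt18

namespace Stmt18

lemma det_Mpp (x u : Fin (N+1) → ℂ) (n : ℕ) (c : ℂ) :
    (Mpp x u n c).det = (-1)^n * c^n *
      (Matrix.of fun i j : Fin n =>
        c * mu x u ((i:ℕ)+(j:ℕ)) - mu x u ((i:ℕ)+(j:ℕ)+1)).det := by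
  rw [Matrix.det_succ_column_zero]
  rw [Finset.sum_eq_single (Fin.last n)]
  · have hlast : ¬ (((Fin.last n : Fin (n+1)) : ℕ) < n) := by simp
    have h0 : Mpp x u n c (Fin.last n) 0 = c^n := by
      simp [Mpp, hlast]
    have hsub : (Mpp x u n c).submatrix (Fin.last n).succAbove Fin.succ
        = Matrix.of fun i j : Fin n =>
            c * mu x u ((i:ℕ)+(j:ℕ)) - mu x u ((i:ℕ)+(j:ℕ)+1) := by
      ext a b
      have ha : ((Fin.castSucc a : Fin (n+1)) : ℕ) < n := by simp
      have e1 : ((Fin.castSucc a : Fin (n+1)) : ℕ) + ((Fin.succ b : Fin (n+1)) : ℕ) - 1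
          = (a:ℕ) + (b:ℕ) := by
        simp only [Fin.coe_castSucc, Fin.val_succ]; omega
      have e2 : ((Fin.castSucc a : Fin (n+1)) : ℕ) + ((Fin.succ b : Fin (n+1)) : ℕ)
          = (a:ℕ) + (b:ℕ) + 1 := by
        simp only [Fin.coe_castSucc, Fin.val_succ]; omega
      simp only [Matrix.submatrix_apply, Fin.succAbove_last, Mpp, Matrix.of_apply,
        if_pos ha, if_neg (Fin.succ_ne_zero b), e1, e2, Nat.add_sub_cancel]
    rw [h0, hsub, Fin.val_last]
  · intro i _ hi
    have hilt : (i:ℕ) < n := by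
      have := i.isLt
      rcases Nat.lt_or_ge (i:ℕ) n with h | h
      · exact h
      · exact absurd (Fin.ext (by omega : (i:ℕ) = n)) hi
    have h0 : Mpp x u n c i 0 = 0 := by simp [Mpp, hilt]
    rw [h0]
    ring
  · intro h; exact absurd (Finset.mem_univ _) h

lemma nu_matrix (x u : Fin (N+1) → ℂ) (n : ℕ) (c : ℂ) :
    (Matrix.of fun i j : Fin n => ∑ s, u s * x s^((i:ℕ)+(j:ℕ)) * (c - x s))
      = Matrix.of fun i j : Fin n =>
          c * mu x u ((i:ℕ)+(j:ℕ)) - mu x u ((i:ℕ)+(j:ℕ)+1) := by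
  ext i j
  simp only [Matrix.of_apply, mu, Finset.mul_sum, ← Finset.sum_sub_distrib]
  refine Finset.sum_congr rfl fun s _ => ?_
  rw [pow_succ]
  ring

lemma pJac_eval_grid (x u : Fin (N+1) → ℂ) (n : ℕ) (t : Fin (N+1)) (hxt : x t ≠ 0) :
    (pJac x u n).eval (x t)
      = (u t * ∏ k ∈ Finset.univ.erase t, (x t - x k)) *
        (Matrix.of fun i j : Fin n => ∑ s, u s * x s^((i:ℕ)+(j:ℕ)) * (x t - x s)).det := by
  set c := x t with hc
  have hMat : (Mat x u n (fun i => c^(i:ℕ))).det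
      = (-1)^n * (Matrix.of fun i j : Fin n =>
          c * mu x u ((i:ℕ)+(j:ℕ)) - mu x u ((i:ℕ)+(j:ℕ)+1)).det := by
    have h1 : (Lmat n c * Mat x u n (fun i => c^(i:ℕ))).det = (Mpp x u n c).det := by
      rw [LM]
    rw [Matrix.det_mul, det_Lmat, det_Mpp] at h1
    have hcn : c^n ≠ 0 := pow_ne_zero n hxt
    apply mul_left_cancel₀ hcn
    rw [show c ^ n * (Mat x u n fun i => c^(i:ℕ)).det
        = (Lmat n c).det * (Mat x u n fun i => c^(i:ℕ)).det by rw [det_Lmat]]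
    rw [← Matrix.det_mul, LM, det_Mpp]
    ring
  have heval : (pJac x u n).eval c
      = (-1)^n * (u t * ∏ k ∈ Finset.univ.erase t, (c - x k))
          * ∑ i : Fin (n+1), Dcof x u n i * c^(i:ℕ) := by
    rw [pJac, Polynomial.eval_finset_sum, Finset.mul_sum]
    refine Finset.sum_congr rfl fun i _ => ?_
    rw [Polynomial.eval_mul, Polynomial.eval_C, hc, g_eval_grid]
    ring
  rw [heval, ← det_Mat, hMat, nu_matrix]
  have hsq : ((-1:ℂ)^n) * ((-1:ℂ)^n) = 1 := by
    rw [← pow_add]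
    exact Even.neg_one_pow (Even.add_self n)
  calc (-1:ℂ)^n * (u t * ∏ k ∈ Finset.univ.erase t, (c - x k)) *
        ((-1)^n * (Matrix.of fun i j : Fin n =>
          c * mu x u ((i:ℕ)+(j:ℕ)) - mu x u ((i:ℕ)+(j:ℕ)+1)).det)
      = (((-1:ℂ)^n) * ((-1:ℂ)^n)) * ((u t * ∏ k ∈ Finset.univ.erase t, (c - x k)) *
        (Matrix.of fun i j : Fin n =>
          c * mu x u ((i:ℕ)+(j:ℕ)) - mu x u ((i:ℕ)+(j:ℕ)+1)).det) := by ring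
    _ = _ := by rw [hsq, one_mul]

end Stmt18

namespace Stmt18

noncomputable def Fpoly (x : Fin (N+1) → ℂ) : Polynomial ℂ :=
  ∏ k, (Polynomial.X - Polynomial.C (x k))

lemma Fpoly_monic (x : Fin (N+1) → ℂ) : (Fpoly x).Monic :=
  Polynomial.monic_prod_of_monic _ _ fun k _ => Polynomial.monic_X_sub_C (x k)

lemma Fpoly_natDegree (x : Fin (N+1) → ℂ) : (Fpoly x).natDegree = N+1 := by
  rw [Fpoly, Polynomial.natDegree_prod _ _ (fun k _ => Polynomial.X_sub_C_ne_zero (x k))]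
  simp [Polynomial.natDegree_X_sub_C]

lemma Ps_monic (x : Fin (N+1) → ℂ) (s : Fin (N+1)) :
    (∏ k ∈ Finset.univ.erase s, (Polynomial.X - Polynomial.C (x k))).Monic :=
  Polynomial.monic_prod_of_monic _ _ fun k _ => Polynomial.monic_X_sub_C (x k)

lemma Ps_natDegree (x : Fin (N+1) → ℂ) (s : Fin (N+1)) :
    (∏ k ∈ Finset.univ.erase s, (Polynomial.X - Polynomial.C (x k))).natDegree = N := by
  rw [Polynomial.natDegree_prod _ _ (fun k _ => Polynomial.X_sub_C_ne_zero (x k))]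
  simp [Polynomial.natDegree_X_sub_C, Finset.card_erase_of_mem (Finset.mem_univ s)]

lemma Ps_mul (x : Fin (N+1) → ℂ) (s : Fin (N+1)) :
    (∏ k ∈ Finset.univ.erase s, (Polynomial.X - Polynomial.C (x k)))
      * (Polynomial.X - Polynomial.C (x s)) = Fpoly x :=
  Finset.prod_erase_mul Finset.univ _ (Finset.mem_univ s)

lemma coeff_Ps (x : Fin (N+1) → ℂ) (s : Fin (N+1)) :
    ∀ d : ℕ, d ≤ N →
    (∏ k ∈ Finset.univ.erase s, (Polynomial.X - Polynomial.C (x k))).coeff (N - d)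
      = ∑ j ∈ Finset.range (d+1), x s ^ j * (Fpoly x).coeff (N + 1 - d + j) := by
  intro d
  induction d with
  | zero =>
      intro _
      rw [Finset.sum_range_one]
      simp only [Nat.sub_zero, pow_zero, one_mul, Nat.add_zero]
      have h1 : (∏ k ∈ Finset.univ.erase s, (Polynomial.X - Polynomial.C (x k))).coeff N
          = (1:ℂ) := by
        have := (Ps_monic x s).coeff_natDegree
        rwa [Ps_natDegree] at this
      have h2 : (Fpoly x).coeff (N+1) = (1:ℂ) := by
        have := (Fpoly_monic x).coeff_natDegree
        rwa [Fpoly_natDegree] at this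
      rw [h1, h2]
  | succ d ih =>
      intro hd
      have hdN : d ≤ N := by omega
      have hrec := Polynomial.coeff_mul_X_sub_C (p := ∏ k ∈ Finset.univ.erase s,
        (Polynomial.X - Polynomial.C (x k))) (r := x s) (a := N - (d+1))
      rw [Ps_mul] at hrec
      have e1 : N - (d+1) + 1 = N - d := by omega
      rw [e1] at hrec
      -- hrec : (Fpoly x).coeff (N-d) = Ps.coeff (N-(d+1)) - Ps.coeff (N-d) * x s
      have := sub_eq_iff_eq_add.mp hrec.symm
      -- rearrange : Ps.coeff (N-(d+1)) = Fpoly.coeff (N-d) + x s * Ps.coeff (N-d)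
      have hstep : (∏ k ∈ Finset.univ.erase s,
          (Polynomial.X - Polynomial.C (x k))).coeff (N - (d+1))
          = (Fpoly x).coeff (N - d)
            + x s * (∏ k ∈ Finset.univ.erase s,
                (Polynomial.X - Polynomial.C (x k))).coeff (N - d) := by
        rw [this]; ring
      rw [hstep, ih hdN, Finset.mul_sum]
      rw [Finset.sum_range_succ' (fun j => x s ^ j * (Fpoly x).coeff (N + 1 - (d+1) + j)) (d+1)]
      have e2 : N + 1 - (d+1) + 0 = N - d := by omega
      rw [e2]
      have e3 : ∀ j, j ∈ Finset.range (d+1) →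
          x s * (x s ^ j * (Fpoly x).coeff (N + 1 - d + j))
            = x s ^ (j+1) * (Fpoly x).coeff (N + 1 - (d+1) + (j+1)) := by
        intro j _
        have : N + 1 - (d+1) + (j+1) = N + 1 - d + j := by omega
        rw [this, pow_succ]
        ring
      rw [Finset.sum_congr rfl e3]
      ring

end Stmt18

namespace Stmt18

lemma coeff_g (x u : Fin (N+1) → ℂ) (i : ℕ) (d : ℕ) (hd : d ≤ N) :
    (g x u i).coeff (N - d)
      = ∑ j ∈ Finset.range (d+1), (Fpoly x).coeff (N + 1 - d + j) * mu x u (i + j) := by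
  rw [g, Polynomial.finset_sum_coeff]
  have h1 : ∀ s : Fin (N+1),
      (Polynomial.C (u s * x s ^ i) * ∏ k ∈ Finset.univ.erase s,
        (Polynomial.X - Polynomial.C (x k))).coeff (N - d)
      = ∑ j ∈ Finset.range (d+1),
          (Fpoly x).coeff (N + 1 - d + j) * (u s * x s ^ (i + j)) := by
    intro s
    rw [Polynomial.coeff_C_mul, coeff_Ps x s d hd, Finset.mul_sum]
    refine Finset.sum_congr rfl fun j _ => ?_
    rw [pow_add]
    ring
  rw [Finset.sum_congr rfl fun s _ => h1 s, Finset.sum_comm]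
  refine Finset.sum_congr rfl fun j _ => ?_
  rw [mu, Finset.mul_sum]

lemma det_Mat_mu (x u : Fin (N+1) → ℂ) (n : ℕ) (e : ℕ) (he : e < n) :
    (Mat x u n (fun i => mu x u ((i:ℕ) + e))).det = 0 := by
  have hne0 : (0 : Fin (n+1)) ≠ (⟨e+1, by omega⟩ : Fin (n+1)) := by
    intro h; have := congrArg Fin.val h; simp at this
  refine Matrix.det_zero_of_column_eq hne0 fun k => ?_
  have hne : (⟨e+1, by omega⟩ : Fin (n+1)) ≠ 0 := Ne.symm hne0
  simp only [Mat, Matrix.of_apply, if_pos rfl, if_neg hne]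
  norm_num

lemma g_degree (x u : Fin (N+1) → ℂ) (i : ℕ) : (g x u i).degree ≤ N := by
  refine (Polynomial.degree_sum_le _ _).trans ?_
  rw [Finset.sup_le_iff]
  intro s _
  refine (Polynomial.degree_mul_le _ _).trans ?_
  have h2 : (∏ k ∈ Finset.univ.erase s,
      (Polynomial.X - Polynomial.C (x k))).degree = (N : WithBot ℕ) := by
    rw [Polynomial.degree_eq_natDegree (Ps_monic x s).ne_zero, Ps_natDegree]
  calc (Polynomial.C (u s * x s ^ i)).degree
        + (∏ k ∈ Finset.univ.erase s, (Polynomial.X - Polynomial.C (x k))).degree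
      ≤ 0 + (N : WithBot ℕ) := add_le_add Polynomial.degree_C_le h2.le
    _ = (N : WithBot ℕ) := zero_add _

end Stmt18

namespace Stmt18

lemma pJac_degree_le_N (x u : Fin (N+1) → ℂ) (n : ℕ) : (pJac x u n).degree ≤ (N : WithBot ℕ) := by
  refine (Polynomial.degree_sum_le _ _).trans ?_
  rw [Finset.sup_le_iff]
  intro i _
  refine (Polynomial.degree_mul_le _ _).trans ?_
  calc (Polynomial.C ((-1)^n * Dcof x u n i)).degree + (g x u (i:ℕ)).degree
      ≤ 0 + (N : WithBot ℕ) := add_le_add Polynomial.degree_C_le (g_degree x u (i:ℕ))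
    _ = (N : WithBot ℕ) := zero_add _

lemma pJac_degree (m n : ℕ) (x u : Fin (m+n+1) → ℂ) :
    (pJac x u n).degree ≤ (m : WithBot ℕ) := by
  rw [Polynomial.degree_le_iff_coeff_zero]
  intro c hc
  have hc' : m < c := by exact_mod_cast hc
  by_cases hcN : c ≤ m + n
  · have hd : m + n - c ≤ m + n := by omega
    have hdn : m + n - c < n := by omega
    have hNc : m + n - (m + n - c) = c := by omega
    set d := m + n - c with hdd
    rw [pJac, Polynomial.finset_sum_coeff]
    have h1 : ∀ i : Fin (n+1),
        (Polynomial.C ((-1:ℂ)^n * Dcof x u n i) * g x u (i:ℕ)).coeff c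
        = (-1:ℂ)^n * (Dcof x u n i * ∑ j ∈ Finset.range (d+1),
            (Fpoly x).coeff (m+n+1-d+j) * mu x u ((i:ℕ)+j)) := by
      intro i
      rw [Polynomial.coeff_C_mul, ← hNc, coeff_g x u (i:ℕ) d hd]
      ring
    rw [Finset.sum_congr rfl fun i _ => h1 i, ← Finset.mul_sum]
    have h2 : ∑ i : Fin (n+1), Dcof x u n i * ∑ j ∈ Finset.range (d+1),
          (Fpoly x).coeff (m+n+1-d+j) * mu x u ((i:ℕ)+j)
        = ∑ j ∈ Finset.range (d+1), (Fpoly x).coeff (m+n+1-d+j)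
            * ∑ i : Fin (n+1), Dcof x u n i * mu x u ((i:ℕ)+j) := by
      calc ∑ i : Fin (n+1), Dcof x u n i * ∑ j ∈ Finset.range (d+1),
              (Fpoly x).coeff (m+n+1-d+j) * mu x u ((i:ℕ)+j)
          = ∑ i : Fin (n+1), ∑ j ∈ Finset.range (d+1),
              (Fpoly x).coeff (m+n+1-d+j) * (Dcof x u n i * mu x u ((i:ℕ)+j)) := by
            refine Finset.sum_congr rfl fun i _ => ?_
            rw [Finset.mul_sum]
            exact Finset.sum_congr rfl fun j _ => by ring
        _ = ∑ j ∈ Finset.range (d+1), ∑ i : Fin (n+1),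
              (Fpoly x).coeff (m+n+1-d+j) * (Dcof x u n i * mu x u ((i:ℕ)+j)) :=
            Finset.sum_comm
        _ = ∑ j ∈ Finset.range (d+1), (Fpoly x).coeff (m+n+1-d+j)
              * ∑ i : Fin (n+1), Dcof x u n i * mu x u ((i:ℕ)+j) := by
            refine Finset.sum_congr rfl fun j _ => ?_
            rw [Finset.mul_sum]
    rw [h2]
    have h3 : ∀ j, j ∈ Finset.range (d+1) →
        (Fpoly x).coeff (m+n+1-d+j) * ∑ i : Fin (n+1), Dcof x u n i * mu x u ((i:ℕ)+j)
          = 0 := by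
      intro j hj
      have hjn : j < n := by
        have := Finset.mem_range.mp hj
        omega
      rw [← det_Mat (x := x) (u := u) n (fun i => mu x u ((i:ℕ)+j)), det_Mat_mu x u n j hjn,
        mul_zero]
    rw [Finset.sum_congr rfl h3, Finset.sum_const_zero, mul_zero]
  · apply Polynomial.coeff_eq_zero_of_degree_lt
    refine lt_of_le_of_lt (pJac_degree_le_N x u n) ?_
    exact_mod_cast (by omega : m + n < c)

end Stmt18

namespace Stmt18

variable {q : ℂ}

lemma qPoch_ne_zero (hq1 : ∀ k : ℕ, 0 < k → q ^ k ≠ 1) (r : ℕ) : qPoch q q r ≠ 0 := by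
  rw [qPoch]
  refine Finset.prod_ne_zero_iff.mpr fun k _ => ?_
  rw [sub_ne_zero]
  intro h
  exact hq1 (k+1) (Nat.succ_pos k) (by rw [pow_succ, ← h])

lemma erase_prod_eq (M : ℕ) (f : ℕ → ℂ) (t : Fin (M+1)) :
    ∏ k ∈ Finset.univ.erase t, f (k:ℕ)
      = ∏ k ∈ (Finset.range (M+1)).erase (t:ℕ), f k := by
  have himg : Finset.image Fin.val (Finset.univ.erase t)
      = (Finset.range (M+1)).erase (t:ℕ) := by
    ext a
    simp only [Finset.mem_image, Finset.mem_erase, Finset.mem_univ, and_true, Finset.mem_range]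
    constructor
    · rintro ⟨k, hk, rfl⟩
      exact ⟨fun h => hk (Fin.ext h), k.isLt⟩
    · rintro ⟨ha, haM⟩
      exact ⟨⟨a, haM⟩, fun h => ha (congrArg Fin.val h), rfl⟩
  rw [← himg, Finset.prod_image (fun a _ b _ h => Fin.ext h)]

lemma erase_range_split (M T : ℕ) (hT : T ≤ M) (f : ℕ → ℂ) :
    ∏ k ∈ (Finset.range (M+1)).erase T, f k
      = (∏ k ∈ Finset.range T, f k) * ∏ k ∈ Finset.Ico (T+1) (M+1), f k := by
  rw [← Finset.prod_union]
  · congr 1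
    ext a
    simp only [Finset.mem_erase, Finset.mem_range, Finset.mem_union, Finset.mem_Ico]
    omega
  · rw [Finset.disjoint_left]
    intro a ha hb
    simp only [Finset.mem_range] at ha
    simp only [Finset.mem_Ico] at hb
    omega

lemma P1_eq (hq0 : q ≠ 0) (T : ℕ) :
    ∏ k ∈ Finset.range T, (q^T - q^k)
      = (-1)^T * q^(∑ k ∈ Finset.range T, k) * qPoch q q T := by
  have hfac : ∀ k, k ∈ Finset.range T → q^T - q^k = (-(q^k)) * (1 - q^(T-k)) := by
    intro k hk
    have hk' : k < T := Finset.mem_range.mp hk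
    have : q^k * q^(T-k) = q^T := by rw [← pow_add]; congr 1; omega
    rw [mul_sub, mul_one, ← this]
    ring
  rw [Finset.prod_congr rfl hfac, Finset.prod_mul_distrib]
  have h1 : ∏ k ∈ Finset.range T, (-(q^k)) = (-1)^T * q^(∑ k ∈ Finset.range T, k) := by
    rw [show (fun k => -(q^k)) = (fun k => (-1) * q^k) from funext fun k => by ring]
    rw [Finset.prod_mul_distrib, Finset.prod_const, Finset.prod_pow_eq_pow_sum]
    simp
  have h2 : ∏ k ∈ Finset.range T, (1 - q^(T-k)) = qPoch q q T := by
    rw [qPoch]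
    have : ∀ j, j ∈ Finset.range T → (1 - q^(j+1)) = (fun j => 1 - q^(j+1)) j := fun _ _ => rfl
    calc ∏ k ∈ Finset.range T, (1 - q^(T-k))
        = ∏ k ∈ Finset.range T, (1 - q^((T-1-k)+1)) := by
          refine Finset.prod_congr rfl fun k hk => ?_
          have := Finset.mem_range.mp hk
          congr 2
          omega
      _ = ∏ k ∈ Finset.range T, (1 - q^(k+1)) := Finset.prod_range_reflect (fun k => 1 - q^(k+1)) T
      _ = ∏ k ∈ Finset.range T, (1 - q^k * q) := by
          refine Finset.prod_congr rfl fun k _ => ?_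
          rw [pow_succ]
  rw [h1, h2]

lemma P2_eq (T M : ℕ) (hT : T ≤ M) :
    ∏ k ∈ Finset.Ico (T+1) (M+1), (q^T - q^k)
      = q^(T*(M-T)) * qPoch q q (M-T) := by
  rw [Finset.prod_Ico_eq_prod_range]
  have he : M + 1 - (T + 1) = M - T := by omega
  rw [he]
  have hfac : ∀ j, j ∈ Finset.range (M-T) → q^T - q^(T+1+j) = q^T * (1 - q^j * q) := by
    intro j _
    rw [mul_sub, mul_one, ← pow_succ, ← pow_add]
    congr 2
    omega
  rw [Finset.prod_congr rfl hfac, Finset.prod_mul_distrib, Finset.prod_const, qPoch]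
  rw [Finset.card_range, ← pow_mul]

end Stmt18

namespace Stmt18

lemma A_eq (hq0 : q ≠ 0) (T M : ℕ) (hT : T ≤ M) :
    qPoch q (q ^ (-(M:ℤ))) T * q^(T*M)
      = (-1)^T * q^(∑ k ∈ Finset.range T, k) * ∏ k ∈ Finset.range T, (1 - q^(M-k)) := by
  have hqM : (q:ℂ)^M ≠ 0 := pow_ne_zero M hq0
  have hw : (q:ℂ) ^ (-(M:ℤ)) = (q^M)⁻¹ := by
    rw [zpow_neg, zpow_natCast]
  have hfac : ∀ k, k ∈ Finset.range T →
      (1 - q^k * q^(-(M:ℤ))) * q^M = (-(q^k)) * (1 - q^(M-k)) := by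
    intro k hk
    have hk' : k < T := Finset.mem_range.mp hk
    have hkM : k ≤ M := by omega
    have h1 : q^k * q^(M-k) = q^M := by rw [← pow_add]; congr 1; omega
    rw [hw, sub_mul, one_mul, mul_assoc, inv_mul_cancel₀ hqM, mul_one]
    rw [mul_sub, mul_one, ← h1]
    ring
  have hpm : q^(T*M) = ∏ _k ∈ Finset.range T, q^M := by
    rw [Finset.prod_const, Finset.card_range, ← pow_mul, Nat.mul_comm]
  rw [qPoch, hpm, ← Finset.prod_mul_distrib, Finset.prod_congr rfl hfac,
    Finset.prod_mul_distrib]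
  congr 1
  rw [show (fun k => -(q^k)) = (fun k => (-1) * q^k) from funext fun k => by ring]
  rw [Finset.prod_mul_distrib, Finset.prod_const, Finset.prod_pow_eq_pow_sum]
  simp

lemma C_split (T M : ℕ) (hT : T ≤ M) :
    qPoch q q M = qPoch q q (M-T) * ∏ k ∈ Finset.range T, (1 - q^(M-k)) := by
  have hM : M = (M-T) + T := by omega
  rw [qPoch, qPoch]
  rw [show Finset.range M = Finset.range ((M-T)+T) from by rw [← hM]]
  rw [Finset.prod_range_add]
  congr 1
  calc ∏ k ∈ Finset.range T, (1 - q^((M-T)+k) * q)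
      = ∏ k ∈ Finset.range T, (1 - q^(M-(T-1-k))) := by
        refine Finset.prod_congr rfl fun k hk => ?_
        have := Finset.mem_range.mp hk
        rw [← pow_succ]
        congr 2
        omega
    _ = ∏ k ∈ Finset.range T, (1 - q^(M-k)) :=
        Finset.prod_range_reflect (fun k => 1 - q^(M-k)) T
  
lemma qkey (M : ℕ) (hq0 : q ≠ 0) (t : Fin (M+1)) :
    q^(t:ℕ) * qPoch q (q ^ (-(M:ℤ))) (t:ℕ)
        * ∏ k ∈ Finset.univ.erase t, (q^(t:ℕ) - q^(k:ℕ))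
      = qPoch q q (t:ℕ) * qPoch q q M := by
  set T := (t:ℕ) with hTdef
  have hT : T ≤ M := by omega
  apply mul_right_cancel₀ (pow_ne_zero (T*M) hq0)
  rw [erase_prod_eq M (fun k => q^T - q^k) t, erase_range_split M T hT,
    P1_eq hq0 T, P2_eq T M hT]
  have hA := A_eq hq0 T M hT
  have hC := C_split (q := q) T M hT
  have hsum : (∑ k ∈ Finset.range T, k) * 2 = T * (T-1) :=
    Finset.sum_range_id_mul_two T
  -- reduce to exponent arithmetic
  have hexp : T + (∑ k ∈ Finset.range T, k) + (∑ k ∈ Finset.range T, k) + T*(M-T)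
      = T*M := by
    rcases Nat.exists_eq_add_of_le hT with ⟨D, hD⟩
    have hMT : M - T = D := by omega
    rw [hMT, hD]
    rcases T with _ | S
    · simp
    · have e1 : (S+1)*(S+1+D) = (S+1)*S + (S+1) + (S+1)*D := by ring
      rw [e1]
      have h1 : (∑ k ∈ Finset.range (S+1), k) * 2 = (S+1)*S := by
        rw [Finset.sum_range_id_mul_two]
        simp
      linarith
  calc q^T * qPoch q (q ^ (-(M:ℤ))) T * (((-1)^T * q^(∑ k ∈ Finset.range T, k) * qPoch q q T)
        * (q^(T*(M-T)) * qPoch q q (M-T))) * q^(T*M)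
      = (qPoch q (q ^ (-(M:ℤ))) T * q^(T*M)) * ((-1)^T * q^(∑ k ∈ Finset.range T, k) * qPoch q q T)
        * (q^T * q^(T*(M-T)) * qPoch q q (M-T)) := by ring
    _ = ((-1)^T * q^(∑ k ∈ Finset.range T, k) * ∏ k ∈ Finset.range T, (1 - q^(M-k)))
        * ((-1)^T * q^(∑ k ∈ Finset.range T, k) * qPoch q q T)
        * (q^T * q^(T*(M-T)) * qPoch q q (M-T)) := by rw [hA]
    _ = (((-1)^T * (-1)^T) * qPoch q q T * (qPoch q q (M-T) * ∏ k ∈ Finset.range T, (1 - q^(M-k))))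
        * (q^T * q^(∑ k ∈ Finset.range T, k) * q^(∑ k ∈ Finset.range T, k) * q^(T*(M-T))) := by
        ring
    _ = qPoch q q T * qPoch q q M * q^(T*M) := by
        rw [← hC]
        have hsq : ((-1:ℂ)^T) * ((-1:ℂ)^T) = 1 := by
          rw [← pow_add]; exact Even.neg_one_pow (Even.add_self T)
        rw [hsq, one_mul, ← pow_add, ← pow_add, ← pow_add, hexp]

end Stmt18


/-- Specialization of Jacobi's interpolation formulas to the q-grid `x_s = q^s`:
the explicit determinant formulas for `P` and `Q` agree with the general Jacobi
formulas with weights `u_s = ψ_s/F'(q^s)`, and solve the interpolation problem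
`ψ_s = P(q^s)/Q(q^s)`. -/
theorem stmt18 (m n : ℕ) (q : ℂ) (hq0 : q ≠ 0) (hq1 : ∀ k : ℕ, 0 < k → q ^ k ≠ 1)
    (ψ : Fin (m + n + 1) → ℂ) :
    let F : ℂ → ℂ := fun x => ∏ i ∈ Finset.range (m + n + 1), (x - q ^ i)
    let u : Fin (m + n + 1) → ℂ := fun s =>
      ψ s * q ^ (s : ℕ) * qPoch q (q ^ (-((m + n : ℕ) : ℤ))) (s : ℕ) /
        (qPoch q q (s : ℕ) * qPoch q q (m + n))
    let Pe : ℂ → ℂ := fun x =>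
      F x / (qPoch q q (m + n)) ^ (n + 1) *
        Matrix.det (Matrix.of fun i j : Fin (n + 1) =>
          ∑ s : Fin (m + n + 1),
            ψ s * (qPoch q (q ^ (-((m + n : ℕ) : ℤ))) (s : ℕ) / qPoch q q (s : ℕ)) *
              q ^ ((s : ℕ) * ((i : ℕ) + (j : ℕ) + 1)) / (x - q ^ (s : ℕ)))
    let Qe : ℂ → ℂ := fun x =>
      1 / (qPoch q q (m + n)) ^ n *
        Matrix.det (Matrix.of fun i j : Fin n =>
          ∑ s : Fin (m + n + 1),
            ψ s * (qPoch q (q ^ (-((m + n : ℕ) : ℤ))) (s : ℕ) / qPoch q q (s : ℕ)) *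
              q ^ ((s : ℕ) * ((i : ℕ) + (j : ℕ) + 1)) * (x - q ^ (s : ℕ)))
    (∀ x : ℂ, (∀ s : Fin (m + n + 1), x ≠ q ^ (s : ℕ)) →
      Pe x = F x * Matrix.det (Matrix.of fun i j : Fin (n + 1) =>
        ∑ s : Fin (m + n + 1),
          u s * (q ^ (s : ℕ)) ^ ((i : ℕ) + (j : ℕ)) / (x - q ^ (s : ℕ)))) ∧
    (∀ x : ℂ, Qe x = Matrix.det (Matrix.of fun i j : Fin n =>
        ∑ s : Fin (m + n + 1),
          u s * (q ^ (s : ℕ)) ^ ((i : ℕ) + (j : ℕ)) * (x - q ^ (s : ℕ)))) ∧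
    ∃ p : Polynomial ℂ, p.degree ≤ m ∧
      (∀ x : ℂ, (∀ s : Fin (m + n + 1), x ≠ q ^ (s : ℕ)) → p.eval x = Pe x) ∧
      ∀ s : Fin (m + n + 1), Qe (q ^ (s : ℕ)) ≠ 0 →
        ψ s = p.eval (q ^ (s : ℕ)) / Qe (q ^ (s : ℕ)) := by
  intro F u Pe Qe
  have hentry : ∀ (x₀ : ℂ) (s : Fin (m + n + 1)) (c : ℕ),
      u s * (q ^ (s : ℕ)) ^ c / (x₀ - q ^ (s : ℕ))
        = (qPoch q q (m + n))⁻¹ *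
          (ψ s * (qPoch q (q ^ (-((m + n : ℕ) : ℤ))) (s : ℕ) / qPoch q q (s : ℕ)) *
            q ^ ((s : ℕ) * (c + 1)) / (x₀ - q ^ (s : ℕ))) := by
    intro x₀ s c
    simp only [u]
    have e : (s:ℕ) * (c + 1) = (s:ℕ) + (s:ℕ) * c := by ring
    rw [e, pow_add, ← pow_mul]
    simp only [div_eq_mul_inv, mul_inv]
    ring
  have hconj1 : ∀ x₀ : ℂ,
      Pe x₀ = F x₀ * Matrix.det (Matrix.of fun i j : Fin (n + 1) =>
        ∑ s : Fin (m + n + 1),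
          u s * (q ^ (s : ℕ)) ^ ((i : ℕ) + (j : ℕ)) / (x₀ - q ^ (s : ℕ))) := by
    intro x₀
    have hM : (Matrix.of fun i j : Fin (n + 1) =>
        ∑ s : Fin (m + n + 1),
          u s * (q ^ (s : ℕ)) ^ ((i : ℕ) + (j : ℕ)) / (x₀ - q ^ (s : ℕ)))
        = (qPoch q q (m + n))⁻¹ • (Matrix.of fun i j : Fin (n + 1) =>
          ∑ s : Fin (m + n + 1),
            ψ s * (qPoch q (q ^ (-((m + n : ℕ) : ℤ))) (s : ℕ) / qPoch q q (s : ℕ)) *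
              q ^ ((s : ℕ) * ((i : ℕ) + (j : ℕ) + 1)) / (x₀ - q ^ (s : ℕ))) := by
      ext i j
      simp only [Matrix.of_apply, Matrix.smul_apply, smul_eq_mul, Finset.mul_sum]
      exact Finset.sum_congr rfl fun s _ => hentry x₀ s ((i:ℕ)+(j:ℕ))
    rw [hM, Matrix.det_smul]
    simp only [Pe]
    rw [Fintype.card_fin, inv_pow, div_eq_mul_inv]
    ring
  have hconj2 : ∀ x₀ : ℂ,
      Qe x₀ = Matrix.det (Matrix.of fun i j : Fin n =>
        ∑ s : Fin (m + n + 1),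
          u s * (q ^ (s : ℕ)) ^ ((i : ℕ) + (j : ℕ)) * (x₀ - q ^ (s : ℕ))) := by
    intro x₀
    have hentry2 : ∀ (s : Fin (m + n + 1)) (c : ℕ),
        u s * (q ^ (s : ℕ)) ^ c * (x₀ - q ^ (s : ℕ))
          = (qPoch q q (m + n))⁻¹ *
            (ψ s * (qPoch q (q ^ (-((m + n : ℕ) : ℤ))) (s : ℕ) / qPoch q q (s : ℕ)) *
              q ^ ((s : ℕ) * (c + 1)) * (x₀ - q ^ (s : ℕ))) := by
      intro s c
      simp only [u]
      have e : (s:ℕ) * (c + 1) = (s:ℕ) + (s:ℕ) * c := by ring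
      rw [e, pow_add, ← pow_mul]
      simp only [div_eq_mul_inv, mul_inv]
      ring
    have hM : (Matrix.of fun i j : Fin n =>
        ∑ s : Fin (m + n + 1),
          u s * (q ^ (s : ℕ)) ^ ((i : ℕ) + (j : ℕ)) * (x₀ - q ^ (s : ℕ)))
        = (qPoch q q (m + n))⁻¹ • (Matrix.of fun i j : Fin n =>
          ∑ s : Fin (m + n + 1),
            ψ s * (qPoch q (q ^ (-((m + n : ℕ) : ℤ))) (s : ℕ) / qPoch q q (s : ℕ)) *
              q ^ ((s : ℕ) * ((i : ℕ) + (j : ℕ) + 1)) * (x₀ - q ^ (s : ℕ))) := by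
      ext i j
      simp only [Matrix.of_apply, Matrix.smul_apply, smul_eq_mul, Finset.mul_sum]
      exact Finset.sum_congr rfl fun s _ => hentry2 s ((i:ℕ)+(j:ℕ))
    rw [hM, Matrix.det_smul]
    simp only [Qe]
    rw [Fintype.card_fin, inv_pow, one_div]
  refine ⟨fun x₀ _ => hconj1 x₀, hconj2, Stmt18.pJac (fun s : Fin (m+n+1) => q^(s:ℕ)) u n,
    Stmt18.pJac_degree m n _ u, ?_, ?_⟩
  · intro x₀ hx₀
    rw [Stmt18.pJac_eval_offgrid (fun s : Fin (m+n+1) => q^(s:ℕ)) u n x₀ hx₀, hconj1 x₀]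
    congr 1
    simp only [F]
    rw [← Fin.prod_univ_eq_prod_range (fun i => x₀ - q ^ i) (m+n+1)]
  · intro t hQ
    have hxt : (fun s : Fin (m+n+1) => q^(s:ℕ)) t ≠ 0 := pow_ne_zero _ hq0
    have he := Stmt18.pJac_eval_grid (fun s : Fin (m+n+1) => q^(s:ℕ)) u n t hxt
    have hk := Stmt18.qkey (m+n) hq0 t
    have hBC : qPoch q q (t:ℕ) * qPoch q q (m+n) ≠ 0 :=
      mul_ne_zero (Stmt18.qPoch_ne_zero hq1 _) (Stmt18.qPoch_ne_zero hq1 _)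
    have hu : u t * ∏ k ∈ Finset.univ.erase t, (q^(t:ℕ) - q^(k:ℕ)) = ψ t := by
      simp only [u]
      rw [div_mul_eq_mul_div, div_eq_iff hBC]
      calc ψ t * q ^ (t:ℕ) * qPoch q (q ^ (-((m + n : ℕ) : ℤ))) (t:ℕ)
            * ∏ k ∈ Finset.univ.erase t, (q^(t:ℕ) - q^(k:ℕ))
          = ψ t * (q ^ (t:ℕ) * qPoch q (q ^ (-((m+n:ℕ):ℤ))) (t:ℕ)
              * ∏ k ∈ Finset.univ.erase t, (q^(t:ℕ) - q^(k:ℕ))) := by ring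
        _ = ψ t * (qPoch q q (t:ℕ) * qPoch q q (m+n)) := by rw [hk]
    have heval : Polynomial.eval (q^(t:ℕ)) (Stmt18.pJac (fun s : Fin (m+n+1) => q^(s:ℕ)) u n)
        = ψ t * Qe (q^(t:ℕ)) := by
      rw [he, hu, hconj2]
    rw [heval, mul_div_assoc, div_self hQ, mul_one]
end
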